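/- arXiv:1002.0149 — 9 statements merged into one kernel-verified Lean document; each statement's English description precedes it below -/
import Mathlib

section
/- For integers 2 ≤ j ≤ k, the sum ∑_{s=0}^{j} (-1)^s * C(j,s) * k^(j-s) * (s+k-j)!/(k-j)! is strictly positive. -/
open Finset

def bergerF (k j m : ℕ) : ℚ :=
  ∑ s ∈ Finset.range (j + 1),
    (-1 : ℚ) ^ s * (j.choose s : ℚ) * (k : ℚ) ^ (j - s) * ((s + m).factorial : ℚ)

lemma bergerF_A (k j m : ℕ) :
    bergerF k (j+1) m = k * bergerF k j m - bergerF k j (m+1) := by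
  set S2 : ℚ := ∑ s ∈ Finset.range (j+1),
      (-1:ℚ)^s * (j.choose (s+1) : ℚ) * (k:ℚ)^(j-s) * ((s+1+m).factorial : ℚ) with hS2
  have e1 : bergerF k (j+1) m = (k:ℚ)^(j+1) * (m.factorial : ℚ) - bergerF k j (m+1) - S2 := by
    unfold bergerF
    rw [Finset.sum_range_succ']
    have : ∀ s ∈ Finset.range (j+1),
        (-1:ℚ)^(s+1) * ((j+1).choose (s+1) : ℚ) * (k:ℚ)^(j+1-(s+1)) * ((s+1+m).factorial : ℚ)
        = (-((-1:ℚ)^s * (j.choose s : ℚ) * (k:ℚ)^(j-s) * ((s+(m+1)).factorial : ℚ))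
          - (-1:ℚ)^s * (j.choose (s+1) : ℚ) * (k:ℚ)^(j-s) * ((s+1+m).factorial : ℚ)) := by
      intro s hs
      have h1 : j + 1 - (s+1) = j - s := by omega
      have h2 : s + (m+1) = s + 1 + m := by omega
      rw [h1, h2, Nat.choose_succ_succ]
      push_cast
      ring
    rw [Finset.sum_congr rfl this, Finset.sum_sub_distrib, Finset.sum_neg_distrib]
    simp
    ring
  have e2 : (k:ℚ) * bergerF k j m = (k:ℚ)^(j+1) * (m.factorial : ℚ) - S2 := by
    unfold bergerF
    rw [Finset.mul_sum, Finset.sum_range_succ']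
    rw [hS2, Finset.sum_range_succ]
    have : ∀ s ∈ Finset.range j,
        (k:ℚ) * ((-1:ℚ)^(s+1) * ((j).choose (s+1) : ℚ) * (k:ℚ)^(j-(s+1)) * ((s+1+m).factorial : ℚ))
        = -((-1:ℚ)^s * (j.choose (s+1) : ℚ) * (k:ℚ)^(j-s) * ((s+1+m).factorial : ℚ)) := by
      intro s hs
      have hs' : s < j := Finset.mem_range.mp hs
      have h1 : j - s = (j - (s+1)) + 1 := by omega
      rw [h1, pow_succ]
      ring
    rw [Finset.sum_congr rfl this]
    simp [Nat.choose_succ_self]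
    ring
  linarith

lemma bergerF_B (k j m : ℕ) :
    bergerF k (j+1) (m+1) = ((m:ℚ)+1) * bergerF k (j+1) m - ((j:ℚ)+1) * bergerF k j (m+1) := by
  have e1 : bergerF k (j+1) (m+1) - ((m:ℚ)+1) * bergerF k (j+1) m
      = ∑ s ∈ Finset.range (j+2),
          (s:ℚ) * ((-1:ℚ)^s * ((j+1).choose s : ℚ) * (k:ℚ)^(j+1-s) * ((s+m).factorial : ℚ)) := by
    unfold bergerF
    rw [Finset.mul_sum, ← Finset.sum_sub_distrib]
    refine Finset.sum_congr rfl fun s hs => ?_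
    have h2 : s + (m+1) = (s + m) + 1 := by omega
    rw [h2, Nat.factorial_succ]
    push_cast
    ring
  have e2 : ∑ s ∈ Finset.range (j+2),
        (s:ℚ) * ((-1:ℚ)^s * ((j+1).choose s : ℚ) * (k:ℚ)^(j+1-s) * ((s+m).factorial : ℚ))
      = -((j:ℚ)+1) * bergerF k j (m+1) := by
    rw [Finset.sum_range_succ']
    have : ∀ s ∈ Finset.range (j+1),
        ((s:ℚ)+1) * ((-1:ℚ)^(s+1) * ((j+1).choose (s+1) : ℚ) * (k:ℚ)^(j-s) * ((s+1+m).factorial : ℚ))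
        = -((j:ℚ)+1) * ((-1:ℚ)^s * (j.choose s : ℚ) * (k:ℚ)^(j-s) * ((s+(m+1)).factorial : ℚ)) := by
      intro s hs
      have h1 : j + 1 - (s+1) = j - s := by omega
      have h2 : s + (m+1) = s + 1 + m := by omega
      have h3 : ((j+1).choose (s+1) : ℚ) * ((s:ℚ)+1) = ((j:ℚ)+1) * (j.choose s : ℚ) := by
        exact_mod_cast congrArg (fun n : ℕ => (n : ℚ)) (Nat.add_one_mul_choose_eq j s).symm
      rw [h2]
      push_cast at h3 ⊢
      linear_combination ((-1:ℚ)^(s+1) * (k:ℚ)^(j-s) * ((s+1+m).factorial:ℚ)) * h3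
    push_cast
    rw [Finset.sum_congr rfl this]
    simp [bergerF, Finset.mul_sum]
  linarith

lemma bergerF_rec (n m : ℕ) :
    ((m:ℚ)+1) * bergerF (n+m+2) (n+2) m
      = ((n:ℚ)+1) * (2 * bergerF (n+m+2) (n+1) (m+1) + bergerF (n+m+2) n (m+2)) := by
  have A1 : bergerF (n+m+2) (n+2) m
      = (n+m+2) * bergerF (n+m+2) (n+1) m - bergerF (n+m+2) (n+1) (m+1) := by
    have := bergerF_A (n+m+2) (n+1) m; push_cast at this ⊢; exact this
  have B1 := bergerF_B (n+m+2) n m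
  have A2 : bergerF (n+m+2) (n+1) (m+1)
      = (n+m+2) * bergerF (n+m+2) n (m+1) - bergerF (n+m+2) n (m+2) := by
    have := bergerF_A (n+m+2) n (m+1); push_cast at this ⊢; exact this
  push_cast at A1 B1 A2 ⊢
  linear_combination ((m:ℚ)+1) * A1 - ((n:ℚ)+(m:ℚ)+2) * B1 - ((n:ℚ)+1) * A2


lemma bergerF_one (K : ℕ) : bergerF (K+1) 1 K = 0 := by
  have h : (1+K).factorial = (K+1) * K.factorial := by
    rw [show 1+K = K+1 by omega, Nat.factorial_succ]
  simp [bergerF, Finset.sum_range_succ, h]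

lemma bergerF_two_pos (K : ℕ) : 0 < bergerF (K+2) 2 K := by
  have h1 : (1+K).factorial = (K+1) * K.factorial := by
    rw [show 1+K = K+1 by omega, Nat.factorial_succ]
  have h2 : (2+K).factorial = (K+2) * ((K+1) * K.factorial) := by
    rw [show 2+K = (1+K)+1 by omega, Nat.factorial_succ, h1, show 1+K+1 = K+2 by omega]
  have h : bergerF (K+2) 2 K = ((K:ℚ)+2) * (K.factorial : ℚ) := by
    simp [bergerF, Finset.sum_range_succ, h1, h2]
    push_cast
    ring
  rw [h]
  positivity

lemma bergerF_main (k : ℕ) :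
    ∀ j, (1 ≤ j → j ≤ k → 0 ≤ bergerF k j (k-j)) ∧
        (2 ≤ j → j ≤ k → 0 < bergerF k j (k-j)) := by
  intro j
  induction j using Nat.strong_induction_on with
  | _ j ih =>
    have hpos : 2 ≤ j → j ≤ k → 0 < bergerF k j (k-j) := by
      intro h2 hk
      rcases eq_or_lt_of_le h2 with h | h
      · obtain ⟨K, rfl⟩ : ∃ K, k = K + 2 := ⟨k - 2, by omega⟩
        rw [← h, show K + 2 - 2 = K by omega]
        exact bergerF_two_pos K
      · obtain ⟨n, rfl⟩ : ∃ n, j = n + 3 := ⟨j - 3, by omega⟩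
        obtain ⟨m, rfl⟩ : ∃ m, k = (n+1) + m + 2 := ⟨k - (n+3), by omega⟩
        have rec0 := bergerF_rec (n+1) m
        have ha : 0 < bergerF (n+1+m+2) (n+2) (m+1) := by
          have := (ih (n+2) (by omega)).2 (by omega) (by omega)
          rwa [show (n+1+m+2) - (n+2) = m+1 by omega] at this
        have hb : 0 ≤ bergerF (n+1+m+2) (n+1) (m+2) := by
          have := (ih (n+1) (by omega)).1 (by omega) (by omega)
          rwa [show (n+1+m+2) - (n+1) = m+2 by omega] at this
        rw [show (n+1+m+2) - (n+3) = m by omega]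
        have rec' : ((m:ℚ)+1) * bergerF (n+1+m+2) (n+3) m
            = ((n:ℚ)+2) * (2 * bergerF (n+1+m+2) (n+2) (m+1) + bergerF (n+1+m+2) (n+1) (m+2)) := by
          push_cast at rec0 ⊢
          convert rec0 using 2 <;> push_cast <;> ring
        nlinarith [rec', ha, hb, (show (0:ℚ) < (m:ℚ)+1 by positivity)]
    refine ⟨?_, hpos⟩
    intro h1 hk
    rcases eq_or_lt_of_le h1 with h | h
    · obtain ⟨K, rfl⟩ : ∃ K, k = K + 1 := ⟨k - 1, by omega⟩
      rw [← h, show K + 1 - 1 = K by omega, bergerF_one]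
    · exact (hpos h hk).le

/-- Berger's lemma: for integers `2 ≤ j ≤ k`, the alternating sum
`∑_{s=0}^{j} (-1)^s C(j,s) k^(j-s) (s+k-j)!/(k-j)!` is strictly positive. -/
theorem berger_sum_pos (j k : ℕ) (hj : 2 ≤ j) (hjk : j ≤ k) :
    0 < ∑ s ∈ Finset.range (j + 1),
      (-1 : ℚ) ^ s * (j.choose s : ℚ) * (k : ℚ) ^ (j - s) *
        ((s + (k - j)).factorial : ℚ) / ((k - j).factorial : ℚ) := by
  have hpos := (bergerF_main k j).2 hj hjk
  have hf : (0:ℚ) < ((k-j).factorial : ℚ) := by exact_mod_cast (k-j).factorial_pos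
  have h := div_pos hpos hf
  unfold bergerF at h
  rwa [Finset.sum_div] at h
end

section
/- Fix integers r ≥ k ≥ 1 and a real p. For z = (z_1,...,z_r) define s_{r,k,j}(z) = ∑_{K ⊆ [r], |K|=k} ∑_{J ⊆ K, |J|=j} (∏_{i∈J} z_i)(∏_{i∈K∖J} (1 - z_i)). Then for all z with ∑_{i=1}^r z_i = r/2, one has ∑_{j=1}^{k} (2pj/k) · s_{r,k,j}(z) = C(r,k) · p. -/
open Finset

variable {ι : Type*} [DecidableEq ι]

lemma lemA (z : ι → ℝ) (S : Finset ι) :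
    ∑ J ∈ S.powerset, (∏ i ∈ J, z i) * ∏ i ∈ S \ J, (1 - z i) = 1 := by
  have h := Finset.prod_add z (fun i => 1 - z i) S
  simp only [add_sub_cancel, Finset.prod_const_one] at h
  exact h.symm

lemma lemB (z : ι → ℝ) (S : Finset ι) :
    ∑ J ∈ S.powerset, (J.card : ℝ) * ((∏ i ∈ J, z i) * ∏ i ∈ S \ J, (1 - z i))
      = ∑ i ∈ S, z i := by
  induction S using Finset.induction_on with
  | empty => simp
  | insert a S ha ih =>
    rw [Finset.sum_powerset_insert ha, Finset.sum_insert ha]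
    have h1 : ∀ t ∈ S.powerset,
        (t.card : ℝ) * ((∏ i ∈ t, z i) * ∏ i ∈ insert a S \ t, (1 - z i))
          = (1 - z a) * ((t.card : ℝ) * ((∏ i ∈ t, z i) * ∏ i ∈ S \ t, (1 - z i))) := by
      intro t ht
      rw [mem_powerset] at ht
      have hat : a ∉ S \ t := by simp [ha]
      have : insert a S \ t = insert a (S \ t) := by
        rw [insert_sdiff_of_notMem]
        intro h; exact ha (ht h)
      rw [this, prod_insert hat]; ring
    have h2 : ∀ t ∈ S.powerset,
        ((insert a t).card : ℝ) *
            ((∏ i ∈ insert a t, z i) * ∏ i ∈ insert a S \ insert a t, (1 - z i))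
          = z a * ((t.card : ℝ) * ((∏ i ∈ t, z i) * ∏ i ∈ S \ t, (1 - z i)))
            + z a * ((∏ i ∈ t, z i) * ∏ i ∈ S \ t, (1 - z i)) := by
      intro t ht
      rw [mem_powerset] at ht
      have hat : a ∉ t := fun h => ha (ht h)
      have hd : insert a S \ insert a t = S \ t := by
        ext x; simp only [mem_sdiff, mem_insert, not_or]
        constructor
        · rintro ⟨hx | hx, hxa, hxt⟩
          · exact absurd hx hxa
          · exact ⟨hx, hxt⟩
        · rintro ⟨hx, hxt⟩
          exact ⟨Or.inr hx, fun h => ha (h ▸ hx), hxt⟩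
      rw [hd, card_insert_of_notMem hat, prod_insert hat]
      push_cast; ring
    rw [sum_congr rfl h1, sum_congr rfl h2, sum_add_distrib, ← mul_sum, ← mul_sum, ← mul_sum,
      ih, lemA]
    ring

lemma count_mem (r k : ℕ) (hk : 1 ≤ k) (a : Fin r) :
    ((Finset.powersetCard k (univ : Finset (Fin r))).filter (fun K => a ∈ K)).card
      = (r - 1).choose (k - 1) := by
  have : ((Finset.powersetCard k (univ : Finset (Fin r))).filter (fun K => a ∈ K)).card
      = (Finset.powersetCard (k - 1) (univ.erase a)).card := by
    apply Finset.card_bij (fun K _ => K.erase a)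
    · intro K hK
      simp only [mem_filter, mem_powersetCard_univ] at hK
      rw [mem_powersetCard]
      exact ⟨erase_subset_erase a (subset_univ K), by rw [card_erase_of_mem hK.2, hK.1]⟩
    · intro K hK K' hK' h
      simp only [mem_filter] at hK hK'
      rw [← insert_erase hK.2, ← insert_erase hK'.2, h]
    · intro J hJ
      rw [mem_powersetCard] at hJ
      have haJ : a ∉ J := fun h => (mem_erase.mp (hJ.1 h)).1 rfl
      refine ⟨insert a J, ?_, by rw [erase_insert haJ]⟩
      rw [mem_filter, mem_powersetCard_univ]
      refine ⟨?_, mem_insert_self a J⟩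
      rw [card_insert_of_notMem haJ, hJ.2]
      omega
  rw [this, Finset.card_powersetCard, card_erase_of_mem (mem_univ a), card_univ, Fintype.card_fin]


/-- Identity (4) of Section 3: for `r ≥ k ≥ 1` and any `z` with `∑ z_i = r/2`,
`∑_{j=1}^{k} (2pj/k) s_{r,k,j}(z) = C(r,k) p`, where
`s_{r,k,j}(z) = ∑_{|K|=k} ∑_{J⊆K,|J|=j} ∏_{i∈J} z_i ∏_{i∈K∖J} (1-z_i)`. -/
theorem balanced_cut_density (r k : ℕ) (hk : 1 ≤ k) (hkr : k ≤ r) (p : ℝ)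
    (z : Fin r → ℝ) (hz : ∑ i, z i = (r : ℝ) / 2) :
    ∑ j ∈ Finset.Icc 1 k, (2 * p * (j : ℝ) / (k : ℝ)) *
        ∑ K ∈ Finset.powersetCard k (Finset.univ : Finset (Fin r)),
          ∑ J ∈ Finset.powersetCard j K,
            (∏ i ∈ J, z i) * ∏ i ∈ K \ J, (1 - z i)
      = (r.choose k : ℝ) * p := by
  classical
  set 𝒦 := Finset.powersetCard k (univ : Finset (Fin r)) with h𝒦
  have key : ∑ j ∈ Finset.Icc 1 k, (2 * p * (j : ℝ) / (k : ℝ)) *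
        ∑ K ∈ 𝒦, ∑ J ∈ Finset.powersetCard j K,
            (∏ i ∈ J, z i) * ∏ i ∈ K \ J, (1 - z i)
      = (2 * p / k) * ∑ K ∈ 𝒦, ∑ J ∈ K.powerset,
          (J.card : ℝ) * ((∏ i ∈ J, z i) * ∏ i ∈ K \ J, (1 - z i)) := by
    rw [show Finset.Icc 1 k = Finset.range (k+1) \ {0} by
      ext j; simp only [mem_Icc, mem_sdiff, mem_range, mem_singleton]; omega]
    rw [Finset.sum_sdiff_eq_sub (by simp)]
    simp only [sum_singleton, Nat.cast_zero, mul_zero, zero_div, zero_mul, sub_zero]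
    simp_rw [Finset.mul_sum]
    rw [Finset.sum_comm]
    apply Finset.sum_congr rfl
    intro K hK
    have hKc : K.card = k := (mem_powersetCard.mp hK).2
    conv_rhs => rw [← hKc]
    rw [Finset.sum_powerset]
    rw [hKc]
    apply Finset.sum_congr rfl
    intro j hj
    apply Finset.sum_congr rfl
    intro J hJ
    have : J.card = j := (mem_powersetCard.mp hJ).2
    rw [this]; ring
  rw [key, sum_congr rfl (fun K (_ : K ∈ 𝒦) => lemB z K)]
  have hswap : ∑ K ∈ 𝒦, ∑ i ∈ K, z i = ((r-1).choose (k-1) : ℝ) * ((r : ℝ) / 2) := by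
    have h1 : ∀ K ∈ 𝒦, ∑ i ∈ K, z i = ∑ i : Fin r, if i ∈ K then z i else 0 := by
      intro K _
      rw [Finset.sum_ite_mem, univ_inter]
    rw [sum_congr rfl h1, Finset.sum_comm]
    have h2 : ∀ i : Fin r, ∑ K ∈ 𝒦, (if i ∈ K then z i else 0)
        = ((r-1).choose (k-1) : ℝ) * z i := by
      intro i
      rw [← Finset.sum_filter, Finset.sum_const, ← count_mem r k hk i, nsmul_eq_mul]
    rw [sum_congr rfl (fun i _ => h2 i), ← mul_sum, hz]
  rw [hswap]
  have hid : (r : ℝ) * ((r-1).choose (k-1) : ℝ) = (r.choose k : ℝ) * k := by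
    have := Nat.add_one_mul_choose_eq (r-1) (k-1)
    have e1 : r - 1 + 1 = r := by omega
    have e2 : k - 1 + 1 = k := by omega
    rw [e1, e2] at this
    exact_mod_cast congrArg (Nat.cast : ℕ → ℝ) this
  have hk0 : (k : ℝ) ≠ 0 := Nat.cast_ne_zero.mpr (by omega)
  field_simp
  linear_combination p * hid
end

section
/- Fix integers r ≥ k ≥ 2 and j with 2 ≤ j ≤ k. In the multilinear expansion of ∑_{j'=1}^{k} (2pj'/k) · s_{r,k,j'}(z) (with s as defined from products of z_i and (1-z_i)), the coefficient of any monomial ∏_{i∈J} z_i with |J| = j equals (2p/k) · ∑_{i=1}^{j} (-1)^{j-i} · i · C(j,i), which is 0. -/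
open Finset MvPolynomial

-- injectivity of S ↦ ∑ single i 1
lemma aux_sum_single_inj {r : ℕ} (S T : Finset (Fin r))
    (h : (∑ i ∈ S, Finsupp.single i 1 : Fin r →₀ ℕ) = ∑ i ∈ T, Finsupp.single i 1) : S = T := by
  have hs : ∀ U : Finset (Fin r), (∑ i ∈ U, Finsupp.single i 1 : Fin r →₀ ℕ).support = U := by
    intro U
    rw [Finsupp.support_sum_eq_biUnion]
    · ext x; simp [Finsupp.support_single_ne_zero]
    · intro i₁ i₂ hne
      simp [Finsupp.support_single_ne_zero, hne, Ne.symm hne]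
  rw [← hs S, ← hs T, h]

lemma aux_prod_X {r : ℕ} (S : Finset (Fin r)) :
    (∏ i ∈ S, X i : MvPolynomial (Fin r) ℝ) = monomial (∑ i ∈ S, Finsupp.single i 1) 1 := by
  rw [monomial_sum_one]
  simp [X]
lemma aux_coeff_prod {r : ℕ} (J J' K : Finset (Fin r)) (hJ'K : J' ⊆ K) :
    MvPolynomial.coeff (∑ i ∈ J, Finsupp.single i 1)
      ((∏ i ∈ J', (X i : MvPolynomial (Fin r) ℝ)) * ∏ i ∈ K \ J', (1 - X i))
    = if J' ⊆ J ∧ J ⊆ K then (-1 : ℝ) ^ (J.card - J'.card) else 0 := by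
  have hexp : (∏ i ∈ K \ J', (1 - X i : MvPolynomial (Fin r) ℝ))
      = ∑ t ∈ (K \ J').powerset, C ((-1 : ℝ) ^ t.card) * ∏ i ∈ t, X i := by
    have : ∀ i ∈ K \ J', (1 - X i : MvPolynomial (Fin r) ℝ) = -X i + 1 := by
      intro i _; ring
    rw [Finset.prod_congr rfl this, Finset.prod_add]
    refine Finset.sum_congr rfl fun t _ => ?_
    rw [Finset.prod_const_one, mul_one]
    rw [Finset.prod_congr rfl (fun i _ => show (-X i : MvPolynomial (Fin r) ℝ) = C (-1) * X i by simp),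
      Finset.prod_mul_distrib, Finset.prod_const, ← map_pow]
  rw [hexp, Finset.mul_sum]
  have hterm : ∀ t ∈ (K \ J').powerset,
      MvPolynomial.coeff (∑ i ∈ J, Finsupp.single i 1)
        ((∏ i ∈ J', (X i : MvPolynomial (Fin r) ℝ)) * (C ((-1 : ℝ) ^ t.card) * ∏ i ∈ t, X i))
      = if J' ∪ t = J then (-1 : ℝ) ^ t.card else 0 := by
    intro t ht
    rw [Finset.mem_powerset] at ht
    have hdisj : Disjoint J' t := (Finset.disjoint_sdiff.mono_right ht)
    rw [mul_left_comm, coeff_C_mul, ← Finset.prod_union hdisj, aux_prod_X, coeff_monomial]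
    by_cases h : J' ∪ t = J
    · rw [if_pos (by rw [h]), if_pos h, mul_one]
    · rw [if_neg (fun he => h (aux_sum_single_inj _ _ he)), if_neg h, mul_zero]
  rw [MvPolynomial.coeff_sum, Finset.sum_congr rfl hterm]
  by_cases hc : J' ⊆ J ∧ J ⊆ K
  · rw [if_pos hc]
    obtain ⟨h1, h2⟩ := hc
    rw [Finset.sum_eq_single_of_mem (J \ J')]
    · rw [if_pos (Finset.union_sdiff_of_subset h1), Finset.card_sdiff_of_subset h1]
    · rw [Finset.mem_powerset]
      exact Finset.sdiff_subset_sdiff h2 subset_rfl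
    · intro b hb hne
      rw [Finset.mem_powerset] at hb
      rw [if_neg]
      intro he
      apply hne
      have hd : Disjoint J' b := (Finset.disjoint_sdiff.mono_right hb)
      rw [← he, Finset.union_sdiff_cancel_left hd]
  · rw [if_neg hc]
    refine Finset.sum_eq_zero fun t ht => ?_
    rw [Finset.mem_powerset] at ht
    rw [if_neg]
    intro he
    apply hc
    constructor
    · rw [← he]; exact Finset.subset_union_left
    · rw [← he]
      exact Finset.union_subset hJ'K (ht.trans Finset.sdiff_subset)
lemma aux_S0 (j : ℕ) (hj : 2 ≤ j) :
    ∑ i ∈ Finset.Icc 1 j, (-1 : ℝ) ^ (j - i) * (i : ℝ) * (j.choose i : ℝ) = 0 := by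
  have hj1 : 1 ≤ j := le_trans (by norm_num) hj
  rw [← Finset.Ico_add_one_right_eq_Icc, Finset.sum_Ico_eq_sum_range]
  have hstep : ∀ t ∈ Finset.range (j + 1 - 1),
      (-1 : ℝ) ^ (j - (1 + t)) * ((1 + t : ℕ) : ℝ) * (j.choose (1 + t) : ℝ)
      = (j : ℝ) * ((-1 : ℝ) ^ (j - 1) * (-1 : ℝ) ^ t * ((j-1).choose t : ℝ)) := by
    intro t ht
    rw [Finset.mem_range] at ht
    have htj : t ≤ j - 1 := by omega
    have hchoose : (j : ℝ) * ((j-1).choose t : ℝ) = ((1 + t : ℕ) : ℝ) * (j.choose (1 + t) : ℝ) := by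
      have : Nat.succ (j - 1) * (j - 1).choose t = (Nat.succ (j - 1)).choose (Nat.succ t) * Nat.succ t :=
        Nat.add_one_mul_choose_eq (j - 1) t
      have hjs : Nat.succ (j - 1) = j := by omega
      rw [hjs] at this
      have h1t : Nat.succ t = 1 + t := by omega
      rw [h1t] at this
      have hn : j * ((j-1).choose t) = (1+t) * (j.choose (1+t)) := by rw [this, Nat.mul_comm]
      exact_mod_cast hn
    have hsign : (-1 : ℝ) ^ (j - (1 + t)) = (-1 : ℝ) ^ (j - 1) * (-1 : ℝ) ^ t := by
      have h1 : (j - 1) = (j - (1 + t)) + t := by omega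
      rw [h1, pow_add]
      have : ((-1 : ℝ) ^ t) * ((-1 : ℝ) ^ t) = 1 := by
        rw [← pow_add, ← two_mul, pow_mul]; norm_num
      rw [mul_assoc, this, mul_one]
    rw [hsign]
    calc (-1:ℝ)^(j-1) * (-1:ℝ)^t * ((1 + t : ℕ) : ℝ) * (j.choose (1+t) : ℝ)
        = (-1:ℝ)^(j-1) * (-1:ℝ)^t * (((1 + t : ℕ) : ℝ) * (j.choose (1+t) : ℝ)) := by ring
      _ = (-1:ℝ)^(j-1) * (-1:ℝ)^t * ((j : ℝ) * ((j-1).choose t : ℝ)) := by rw [← hchoose]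
      _ = (j : ℝ) * ((-1:ℝ)^(j-1) * (-1:ℝ)^t * ((j-1).choose t : ℝ)) := by ring
  rw [Finset.sum_congr rfl hstep, ← Finset.mul_sum]
  have hz : ∑ t ∈ Finset.range (j + 1 - 1), ((-1:ℝ)^(j-1) * (-1:ℝ)^t * ((j-1).choose t : ℝ)) = 0 := by
    have h2 : ∑ t ∈ Finset.range (j + 1 - 1), ((-1:ℝ)^t * ((j-1).choose t : ℝ)) = 0 := by
      have := Int.alternating_sum_range_choose_of_ne (n := j - 1) (by omega)
      have hr : j + 1 - 1 = (j - 1) + 1 := by omega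
      rw [hr]
      exact_mod_cast congrArg (Int.cast : ℤ → ℝ) this
    calc ∑ t ∈ Finset.range (j + 1 - 1), ((-1:ℝ)^(j-1) * (-1:ℝ)^t * ((j-1).choose t : ℝ))
        = (-1:ℝ)^(j-1) * ∑ t ∈ Finset.range (j + 1 - 1), ((-1:ℝ)^t * ((j-1).choose t : ℝ)) := by
          rw [Finset.mul_sum]; exact Finset.sum_congr rfl fun t _ => by ring
      _ = 0 := by rw [h2, mul_zero]
  rw [hz, mul_zero]


/-- The key coefficient computation of Section 3: in the multilinear expansion of
`∑_{j'=1}^{k} (2pj'/k) s_{r,k,j'}(z)`, the coefficient of any monomial `∏_{i∈J} z_i`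
with `|J| = j ≥ 2` equals `(2p/k) ∑_{i=1}^{j} (-1)^{j-i} i C(j,i)`, which is `0`. -/
theorem degree_j_coefficient_vanishes (r k j : ℕ) (hk : 2 ≤ k) (hkr : k ≤ r)
    (hj : 2 ≤ j) (hjk : j ≤ k) (p : ℝ) (J : Finset (Fin r)) (hJ : J.card = j) :
    MvPolynomial.coeff (∑ i ∈ J, Finsupp.single i 1)
        (∑ j' ∈ Finset.Icc 1 k, MvPolynomial.C (2 * p * (j' : ℝ) / (k : ℝ)) *
          ∑ K ∈ Finset.powersetCard k (Finset.univ : Finset (Fin r)),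
            ∑ J' ∈ Finset.powersetCard j' K,
              (∏ i ∈ J', (MvPolynomial.X i : MvPolynomial (Fin r) ℝ)) *
                ∏ i ∈ K \ J', (1 - MvPolynomial.X i))
        = (2 * p / (k : ℝ)) * ∑ i ∈ Finset.Icc 1 j, (-1 : ℝ) ^ (j - i) * (i : ℝ) * (j.choose i : ℝ)
    ∧ (2 * p / (k : ℝ)) * ∑ i ∈ Finset.Icc 1 j, (-1 : ℝ) ^ (j - i) * (i : ℝ) * (j.choose i : ℝ)
        = 0 := by
  classical
  have hS0 := aux_S0 j hj
  refine ⟨?_, by rw [hS0, mul_zero]⟩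
  rw [hS0, mul_zero]
  set m : Fin r →₀ ℕ := ∑ i ∈ J, Finsupp.single i 1 with hm
  -- coefficient of inner sum over J' for each K
  have hinner : ∀ (j' : ℕ) (K : Finset (Fin r)),
      MvPolynomial.coeff m (∑ J' ∈ Finset.powersetCard j' K,
        (∏ i ∈ J', (X i : MvPolynomial (Fin r) ℝ)) * ∏ i ∈ K \ J', (1 - X i))
      = if J ⊆ K then (-1 : ℝ) ^ (j - j') * (j.choose j' : ℝ) else 0 := by
    intro j' K
    rw [MvPolynomial.coeff_sum]
    have hc : ∀ J' ∈ Finset.powersetCard j' K,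
        MvPolynomial.coeff m ((∏ i ∈ J', (X i : MvPolynomial (Fin r) ℝ)) *
          ∏ i ∈ K \ J', (1 - X i))
        = if J' ⊆ J ∧ J ⊆ K then (-1 : ℝ) ^ (j - j') else 0 := by
      intro J' hJ'
      obtain ⟨hsub, hcard⟩ := Finset.mem_powersetCard.mp hJ'
      rw [hm, aux_coeff_prod J J' K hsub, hJ, hcard]
    rw [Finset.sum_congr rfl hc]
    by_cases hJK : J ⊆ K
    · simp only [hJK, and_true]
      rw [← Finset.sum_filter]
      have hfil : (Finset.powersetCard j' K).filter (fun J' => J' ⊆ J)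
          = Finset.powersetCard j' J := by
        ext J'
        simp only [Finset.mem_filter, Finset.mem_powersetCard]
        constructor
        · rintro ⟨⟨_, h2⟩, h3⟩; exact ⟨h3, h2⟩
        · rintro ⟨h1, h2⟩; exact ⟨⟨h1.trans hJK, h2⟩, h1⟩
      rw [hfil, Finset.sum_const, Finset.card_powersetCard, hJ, nsmul_eq_mul, mul_comm, if_pos trivial]
    · simp [hJK]
  set N : ℕ := ((Finset.powersetCard k (Finset.univ : Finset (Fin r))).filter
      (fun K => J ⊆ K)).card with hN
  have houter : ∀ j' : ℕ,
      MvPolynomial.coeff m (∑ K ∈ Finset.powersetCard k (Finset.univ : Finset (Fin r)),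
        ∑ J' ∈ Finset.powersetCard j' K,
          (∏ i ∈ J', (X i : MvPolynomial (Fin r) ℝ)) * ∏ i ∈ K \ J', (1 - X i))
      = (N : ℝ) * ((-1 : ℝ) ^ (j - j') * (j.choose j' : ℝ)) := by
    intro j'
    rw [MvPolynomial.coeff_sum, Finset.sum_congr rfl (fun K _ => hinner j' K),
      ← Finset.sum_filter, Finset.sum_const, nsmul_eq_mul]
  rw [MvPolynomial.coeff_sum]
  have hsum : ∀ j' ∈ Finset.Icc 1 k,
      MvPolynomial.coeff m (MvPolynomial.C (2 * p * (j' : ℝ) / (k : ℝ)) *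
        ∑ K ∈ Finset.powersetCard k (Finset.univ : Finset (Fin r)),
          ∑ J' ∈ Finset.powersetCard j' K,
            (∏ i ∈ J', (X i : MvPolynomial (Fin r) ℝ)) * ∏ i ∈ K \ J', (1 - X i))
      = ((N : ℝ) * (2 * p / (k : ℝ))) * ((-1 : ℝ) ^ (j - j') * (j' : ℝ) * (j.choose j' : ℝ)) := by
    intro j' _
    rw [MvPolynomial.coeff_C_mul, houter j']
    ring
  rw [Finset.sum_congr rfl hsum, ← Finset.mul_sum]
  have hrestrict : ∑ j' ∈ Finset.Icc 1 k,
      ((-1 : ℝ) ^ (j - j') * (j' : ℝ) * (j.choose j' : ℝ))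
      = ∑ j' ∈ Finset.Icc 1 j, ((-1 : ℝ) ^ (j - j') * (j' : ℝ) * (j.choose j' : ℝ)) := by
    refine (Finset.sum_subset (Finset.Icc_subset_Icc_right hjk) ?_).symm
    intro x hx hnx
    have hxj : j < x := by
      simp only [Finset.mem_Icc] at hx hnx
      omega
    rw [Nat.choose_eq_zero_of_lt hxj]
    simp
  rw [hrestrict, hS0, mul_zero]
end

section
/- Let t > h ≥ k ≥ 1 with t ≥ h + k. The inclusion matrix B(t,h,k), whose rows are indexed by h-element subsets of [t], columns by k-element subsets of [t], with entry 1 exactly when the k-set is contained in the h-set, has rank (over ℚ) equal to C(t,k). -/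
open Finset

variable {α : Type*} [Fintype α] [DecidableEq α]

/-- The number of `m`-sets `H` with `u ⊆ H ⊆ v`. -/
lemma card_between (u v : Finset α) (m : ℕ) (hum : u.card ≤ m) :
    ((univ.powersetCard m).filter fun H => u ⊆ H ∧ H ⊆ v).card
      = if u ⊆ v then (v.card - u.card).choose (m - u.card) else 0 := by
  split_ifs with huv
  · rw [← card_sdiff_of_subset huv, ← Finset.card_powersetCard (m - #u) (v \ u)]
    apply Finset.card_bij' (fun H _ => H \ u) (fun W _ => W ∪ u)
    · intro H hH
      simp only [mem_filter, mem_powersetCard_univ] at hH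
      simp only [mem_powersetCard]
      exact ⟨sdiff_subset_sdiff hH.2.2 (Subset.refl u),
        by rw [card_sdiff_of_subset hH.2.1, hH.1]⟩
    · intro W hW
      simp only [mem_powersetCard] at hW
      have hWvu : W ⊆ v \ u := hW.1
      have hdisj : Disjoint W u := (subset_sdiff.mp hWvu).2
      simp only [mem_filter, mem_powersetCard_univ]
      refine ⟨?_, subset_union_right, union_subset ((subset_sdiff.mp hWvu).1.trans (Subset.refl v)) huv⟩
      rw [card_union_of_disjoint hdisj, hW.2]
      omega
    · intro H hH
      simp only [mem_filter, mem_powersetCard_univ] at hH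
      exact sdiff_union_of_subset hH.2.1
    · intro W hW
      simp only [mem_powersetCard] at hW
      exact union_sdiff_cancel_right (subset_sdiff.mp hW.1).2
  · rw [Finset.card_eq_zero, Finset.filter_eq_empty_iff]
    intro H _
    rintro ⟨h1, h2⟩
    exact huv (h1.trans h2)

/-- indicator-sum version of `card_between` -/
lemma sum_between (u v : Finset α) (m : ℕ) (hum : u.card ≤ m) (c : ℚ) :
    ∑ H ∈ univ.powersetCard m, (if u ⊆ H ∧ H ⊆ v then c else 0)
      = (if u ⊆ v then ((v.card - u.card).choose (m - u.card) : ℚ) * c else 0) := by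
  rw [← Finset.sum_filter, Finset.sum_const, card_between u v m hum]
  split_ifs with huv
  · simp [nsmul_eq_mul]
  · simp

lemma disjointness_injective (k : ℕ) (hk : 2 * k ≤ Fintype.card α)
    (y : Finset α → ℚ)
    (hy : ∀ A : Finset α, A.card = k →
      ∑ B ∈ univ.powersetCard k, (if Disjoint A B then y B else 0) = 0) :
    ∀ B : Finset α, B.card = k → y B = 0 := by
  -- Step 1: the disjointness sums vanish for all sets of size ≤ k
  have step1 : ∀ A : Finset α, A.card ≤ k →
      ∑ B ∈ univ.powersetCard k, (if Disjoint A B then y B else 0) = 0 := by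
    intro A hA
    have hswap : ∑ A' ∈ (univ.powersetCard k).filter (fun A' => A ⊆ A'),
        ∑ B ∈ univ.powersetCard k, (if Disjoint A' B then y B else 0) = 0 := by
      apply Finset.sum_eq_zero
      intro A' hA'
      simp only [mem_filter, mem_powersetCard_univ] at hA'
      exact hy A' hA'.1
    rw [Finset.sum_comm] at hswap
    have key : ∀ B ∈ univ.powersetCard k,
        ∑ A' ∈ (univ.powersetCard k).filter (fun A' => A ⊆ A'),
          (if Disjoint A' B then y B else 0)
        = ((Fintype.card α - k - A.card).choose (k - A.card) : ℚ) *
            (if Disjoint A B then y B else 0) := by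
      intro B hB
      rw [mem_powersetCard_univ] at hB
      have hc : ∀ X : Finset α, X ⊆ Bᶜ ↔ Disjoint X B := fun X => by
        constructor
        · intro h
          exact Finset.disjoint_left.mpr fun a ha hb => (Finset.mem_compl.mp (h ha)) hb
        · intro h a ha
          exact Finset.mem_compl.mpr (Finset.disjoint_left.mp h ha)
      rw [Finset.sum_filter]
      have : ∀ A' ∈ univ.powersetCard k,
          (if A ⊆ A' then (if Disjoint A' B then y B else 0) else 0)
          = (if A ⊆ A' ∧ A' ⊆ Bᶜ then y B else 0) := by
        intro A' _
        by_cases h1 : A ⊆ A' <;> by_cases h2 : Disjoint A' B <;>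
          simp [h1, h2, hc]
      rw [Finset.sum_congr rfl this, sum_between A Bᶜ k hA (y B)]
      rw [card_compl, hB]
      by_cases hAB : Disjoint A B
      · rw [if_pos ((hc A).mpr hAB), if_pos hAB]
      · rw [if_neg (fun h => hAB ((hc A).mp h)), if_neg hAB, mul_zero]
    rw [Finset.sum_congr rfl key, ← Finset.mul_sum] at hswap
    have hpos : 0 < (Fintype.card α - k - A.card).choose (k - A.card) :=
      Nat.choose_pos (by omega)
    have : ((Fintype.card α - k - A.card).choose (k - A.card) : ℚ) ≠ 0 := by
      exact_mod_cast hpos.ne'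
    exact (mul_eq_zero.mp hswap).resolve_left this
  -- Step 2: Möbius inversion over subsets of B₀
  intro B0 hB0
  have hexp : ∑ A ∈ B0.powerset, ((-1 : ℚ)) ^ A.card *
      ∑ B ∈ univ.powersetCard k, (if Disjoint A B then y B else 0) = 0 := by
    apply Finset.sum_eq_zero
    intro A hA
    rw [step1 A (hB0 ▸ card_le_card (mem_powerset.mp hA)), mul_zero]
  have hexp2 : ∑ A ∈ B0.powerset, ((-1 : ℚ)) ^ A.card *
      ∑ B ∈ univ.powersetCard k, (if Disjoint A B then y B else 0)
      = ∑ B ∈ univ.powersetCard k,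
          (∑ A ∈ (B0 \ B).powerset, ((-1 : ℚ)) ^ A.card) * y B := by
    simp_rw [Finset.mul_sum]
    rw [Finset.sum_comm]
    apply Finset.sum_congr rfl
    intro B _
    rw [Finset.sum_mul]
    have hset : (B0 \ B).powerset = B0.powerset.filter (fun A => Disjoint A B) := by
      ext A
      simp only [mem_powerset, mem_filter, subset_sdiff]
    rw [hset, Finset.sum_filter]
    apply Finset.sum_congr rfl
    intro A _
    by_cases h : Disjoint A B <;> simp [h]
  have hsign : ∀ B ∈ univ.powersetCard k,
      (∑ A ∈ (B0 \ B).powerset, ((-1 : ℚ)) ^ A.card) * y B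
      = (if B = B0 then y B else 0) := by
    intro B hB
    rw [mem_powersetCard_univ] at hB
    have : (∑ A ∈ (B0 \ B).powerset, ((-1 : ℚ)) ^ A.card)
        = if B0 \ B = ∅ then 1 else 0 := by
      have h := Finset.sum_powerset_neg_one_pow_card (x := B0 \ B)
      have : ((∑ A ∈ (B0 \ B).powerset, ((-1 : ℤ)) ^ A.card : ℤ) : ℚ)
          = ∑ A ∈ (B0 \ B).powerset, ((-1 : ℚ)) ^ A.card := by
        push_cast; rfl
      rw [← this, h]
      split_ifs <;> norm_num
    rw [this]
    have hiff : B0 \ B = ∅ ↔ B = B0 := by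
      rw [sdiff_eq_empty_iff_subset]
      constructor
      · intro hsub
        exact (Finset.eq_of_subset_of_card_le hsub (by omega)).symm
      · rintro rfl; exact Subset.refl _
    by_cases h : B = B0
    · rw [if_pos (hiff.mpr h), if_pos h, one_mul]
    · rw [if_neg (fun he => h (hiff.mp he)), if_neg h, zero_mul]
  rw [hexp2, Finset.sum_congr rfl hsign, Finset.sum_ite_eq'] at hexp
  rw [if_pos (mem_powersetCard_univ.mpr hB0)] at hexp
  exact hexp

/-- Reduction: if all `h`-set sums vanish, then all `(t-k)`-set sums vanish. -/
lemma step0 {t h k : ℕ} (hkh : k ≤ h) (hhkt : h + k ≤ t)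
    (y : Finset (Fin t) → ℚ)
    (hW : ∀ H : Finset (Fin t), H.card = h →
      ∑ K ∈ univ.powersetCard k, (if K ⊆ H then y K else 0) = 0) :
    ∀ S : Finset (Fin t), S.card = t - k →
      ∑ K ∈ univ.powersetCard k, (if K ⊆ S then y K else 0) = 0 := by
  intro S hS
  have hswap : ∑ H ∈ (univ.powersetCard h).filter (fun H => H ⊆ S),
      ∑ K ∈ univ.powersetCard k, (if K ⊆ H then y K else 0) = 0 := by
    apply Finset.sum_eq_zero
    intro H hH
    simp only [mem_filter, mem_powersetCard_univ] at hH
    exact hW H hH.1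
  rw [Finset.sum_comm] at hswap
  have key : ∀ K ∈ univ.powersetCard k,
      ∑ H ∈ (univ.powersetCard h).filter (fun H => H ⊆ S),
        (if K ⊆ H then y K else 0)
      = ((t - k - k).choose (h - k) : ℚ) * (if K ⊆ S then y K else 0) := by
    intro K hK
    rw [mem_powersetCard_univ] at hK
    rw [Finset.sum_filter]
    have : ∀ H ∈ univ.powersetCard h,
        (if H ⊆ S then (if K ⊆ H then y K else 0) else 0)
        = (if K ⊆ H ∧ H ⊆ S then y K else 0) := by
      intro H _
      by_cases h1 : H ⊆ S <;> by_cases h2 : K ⊆ H <;> simp [h1, h2]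
    rw [Finset.sum_congr rfl this, sum_between K S h (hK ▸ hkh) (y K)]
    rw [hS, hK]
    by_cases hKS : K ⊆ S
    · rw [if_pos hKS, if_pos hKS]
    · rw [if_neg hKS, if_neg hKS, mul_zero]
  rw [Finset.sum_congr rfl key, ← Finset.mul_sum] at hswap
  have hpos : 0 < (t - k - k).choose (h - k) := Nat.choose_pos (by omega)
  have hne : ((t - k - k).choose (h - k) : ℚ) ≠ 0 := by exact_mod_cast hpos.ne'
  exact (mul_eq_zero.mp hswap).resolve_left hne

/-- Gottlieb's theorem: for `t ≥ h + k` (with `h ≥ k ≥ 1`, `h < t`), the inclusion matrix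
`B(t,h,k)` (rows: `h`-subsets of `[t]`, columns: `k`-subsets, entry 1 iff the `k`-set is
contained in the `h`-set) has rank `C(t,k)` over `ℚ`. -/
theorem gottlieb (t h k : ℕ) (hk : 1 ≤ k) (hkh : k ≤ h) (hht : h < t) (hhkt : h + k ≤ t) :
    Matrix.rank (fun (H : {S : Finset (Fin t) // S.card = h})
        (K : {S : Finset (Fin t) // S.card = k}) =>
      if (K : Finset (Fin t)) ⊆ (H : Finset (Fin t)) then (1 : ℚ) else 0) = t.choose k := by
  set M : Matrix {S : Finset (Fin t) // S.card = h} {S : Finset (Fin t) // S.card = k} ℚ :=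
    fun H K => if (K : Finset (Fin t)) ⊆ (H : Finset (Fin t)) then (1 : ℚ) else 0 with hM
  have hinj : Function.Injective M.mulVecLin := by
    rw [← LinearMap.ker_eq_bot, LinearMap.ker_eq_bot']
    intro x hx
    -- extend x to a function on all finsets
    set y : Finset (Fin t) → ℚ := fun B => if hB : B.card = k then x ⟨B, hB⟩ else 0 with hy
    have hsub : ∀ (A : Finset (Fin t)) (f : Finset (Fin t) → ℚ),
        ∑ K ∈ univ.powersetCard k, (if K ⊆ A then y K else 0)
        = ∑ K : {S : Finset (Fin t) // S.card = k},
            (if (K : Finset (Fin t)) ⊆ A then y (K : Finset (Fin t)) else 0) := by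
      intro A f
      exact Finset.sum_subtype (univ.powersetCard k)
        (fun B => mem_powersetCard_univ) _
    have hW : ∀ H : Finset (Fin t), H.card = h →
        ∑ K ∈ univ.powersetCard k, (if K ⊆ H then y K else 0) = 0 := by
      intro H hH
      have hterm : ∀ K : {S : Finset (Fin t) // S.card = k},
          (if (K : Finset (Fin t)) ⊆ H then y (K : Finset (Fin t)) else 0)
          = M ⟨H, hH⟩ K * x K := by
        intro K
        by_cases hKH : (K : Finset (Fin t)) ⊆ H
        · simp [hM, hy, hKH, K.2]
        · simp [hM, hy, hKH]
      have h0 := congrFun hx ⟨H, hH⟩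
      simp only [Matrix.mulVecLin_apply, Matrix.mulVec, dotProduct,
        Pi.zero_apply] at h0
      rw [hsub H y, Finset.sum_congr rfl fun K _ => hterm K]
      exact h0
    have hzero := disjointness_injective (α := Fin t) k
      (by simp only [Fintype.card_fin]; omega) y ?_
    · funext K
      have := hzero K.1 K.2
      rw [hy] at this
      simpa [K.2] using this
    · intro A hA
      have hAc : (Aᶜ : Finset (Fin t)).card = t - k := by
        rw [card_compl, hA, Fintype.card_fin]
      have h0 := step0 hkh hhkt y hW Aᶜ hAc
      rw [← h0]
      apply Finset.sum_congr rfl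
      intro B hB
      congr 1
      simp only [eq_iff_iff]
      constructor
      · intro hd a ha
        exact Finset.mem_compl.mpr fun haA => Finset.disjoint_left.mp hd haA ha
      · intro hsub'
        exact Finset.disjoint_left.mpr fun a haA haB => (Finset.mem_compl.mp (hsub' haB)) haA
  have : M.rank = Fintype.card {S : Finset (Fin t) // S.card = k} := by
    rw [Matrix.rank, LinearMap.finrank_range_of_inj hinj,
      Module.finrank_fintype_fun_eq_card]
  rw [this, Fintype.card_finset_len, Fintype.card_fin]
end

section
/- Let t be even with t ≥ 4 and let v = (v_1, v_2) be positive integers with v_1 + v_2 = t, v_1 > v_2 ≥ 2. Let A be the 0/1 matrix whose columns are indexed by 2-element subsets of [t] and whose rows are indexed by ordered partitions of [t] into parts (S_1, S_2) with |S_i| = v_i, with entry 1 iff the 2-set has one element in S_1 and one in S_2. Then rank(A) = C(t,2). -/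
open Finset

section IntersectionMatrixAux

lemma imk2_fiber_card {n : ℕ} (a : ℕ) (U A : Finset (Fin n)) (hA : A ⊆ U) :
    ((Finset.univ.powersetCard a).filter (fun S : Finset (Fin n) => S ∩ U = A)).card
      = if A.card ≤ a then (n - U.card).choose (a - A.card) else 0 := by
  split_ifs with h
  · have hcompl : (Uᶜ : Finset (Fin n)).card = n - U.card := by
      rw [card_compl, Fintype.card_fin]
    rw [← hcompl, ← card_powersetCard]
    apply Finset.card_bij' (fun S _ => S \ U) (fun T _ => A ∪ T)
    · intro S hS
      simp only [mem_filter, mem_powersetCard] at hS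
      obtain ⟨⟨-, hcard⟩, hSU⟩ := hS
      rw [mem_powersetCard]
      constructor
      · intro w hw; simp only [mem_sdiff] at hw; simp [mem_compl, hw.2]
      · have := Finset.card_inter_add_card_sdiff S U
        rw [hSU] at this; omega
    · intro T hT
      rw [mem_powersetCard] at hT
      obtain ⟨hTU, hTcard⟩ := hT
      have hdisj : Disjoint A T := by
        refine Finset.disjoint_left.2 fun w hwA hwT => ?_
        have := hTU hwT; simp only [mem_compl] at this; exact this (hA hwA)
      simp only [mem_filter, mem_powersetCard]
      refine ⟨⟨subset_univ _, ?_⟩, ?_⟩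
      · rw [card_union_of_disjoint hdisj, hTcard]; omega
      · have hTU' : ∀ w ∈ T, w ∉ U := fun w hwT => by
          have := hTU hwT; simp only [mem_compl] at this; exact this
        have hAU : ∀ w ∈ A, w ∈ U := fun w hw => hA hw
        ext w
        simp only [mem_inter, mem_union]
        constructor
        · rintro ⟨hw1 | hw1, hw2⟩
          · exact hw1
          · exact absurd hw2 (hTU' w hw1)
        · intro hw; exact ⟨Or.inl hw, hAU w hw⟩
    · intro S hS
      simp only [mem_filter] at hS
      rw [← hS.2]; ext w
      by_cases hw : w ∈ U <;> simp [mem_union, mem_inter, mem_sdiff, hw]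
    · intro T hT
      rw [mem_powersetCard] at hT
      rw [union_sdiff_distrib, sdiff_eq_empty_iff_subset.2 hA, empty_union,
        Finset.sdiff_eq_self_iff_disjoint.2 (Finset.disjoint_left.2 fun w hwT hwU => by
          have := hT.1 hwT; simp only [mem_compl] at this; exact this hwU)]
  · rw [Finset.card_eq_zero, Finset.filter_eq_empty_iff]
    intro S hS hSU
    rw [mem_powersetCard] at hS
    have : A.card ≤ S.card := by
      rw [← hSU]; exact card_le_card (inter_subset_left)
    omega

lemma imk2_sum_inter_powersetCard {n : ℕ} (a : ℕ) (U : Finset (Fin n)) (G : Finset (Fin n) → ℚ) :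
    ∑ S ∈ Finset.univ.powersetCard a, G (S ∩ U)
      = ∑ A ∈ U.powerset,
          (if A.card ≤ a then ((n - U.card).choose (a - A.card) : ℚ) else 0) * G A := by
  rw [← Finset.sum_fiberwise_of_maps_to (g := fun S => S ∩ U) (t := U.powerset)
      (fun S _ => by simp [mem_powerset]) (fun S => G (S ∩ U))]
  refine Finset.sum_congr rfl fun A hA => ?_
  rw [mem_powerset] at hA
  rw [Finset.sum_congr rfl (fun S hS => by
      rw [mem_filter] at hS; rw [hS.2] : ∀ S ∈ _, G (S ∩ U) = G A),
    Finset.sum_const, imk2_fiber_card a U A hA]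
  split_ifs <;> simp [mul_comm]

lemma imk2_card_pair_inter {α : Type*} [DecidableEq α] {a b : α} (hab : a ≠ b) (A : Finset α) :
    (({a, b} : Finset α) ∩ A).card
      = (if a ∈ A then 1 else 0) + (if b ∈ A then 1 else 0) := by
  have h1 : ({a, b} : Finset α) ∩ A = ({a} : Finset α) ∩ A ∪ ({b} : Finset α) ∩ A := by
    rw [← union_inter_distrib_right]; congr 1
  have hsing : ∀ c : α, (({c} : Finset α) ∩ A).card = if c ∈ A then 1 else 0 := by
    intro c
    by_cases h : c ∈ A
    · rw [singleton_inter_of_mem h, card_singleton, if_pos h]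
    · rw [singleton_inter_of_notMem h, card_empty, if_neg h]
  rw [h1, card_union_of_disjoint, hsing, hsing]
  exact Finset.disjoint_left.2 fun w hw1 hw2 => by
      simp only [mem_inter, mem_singleton] at hw1 hw2
      exact hab (hw1.1 ▸ hw2.1 ▸ rfl)

lemma imk2_weight_identities (c1 c2 d1 d2 d3 b : ℚ)
    (hb : b ≠ 0) (hd2 : d2 ≠ 0) (hd13 : d1 - d3 ≠ 0)
    (hbc : b = c1 + c2) (hc1 : c1 = d1 + d2) (hc2 : c2 = d2 + d3) :
    2 * b * (1 / (2 * b)) = 1 ∧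
    c2 * ((2 * c1 * d2 - b * d1) / (2 * b * (d2 * (d1 - d3))))
      + b * (1 / (2 * b))
      + c1 * ((b * d3 - 2 * c2 * d2) / (2 * b * (d2 * (d1 - d3)))) = 0 ∧
    d3 * ((2 * c1 * d2 - b * d1) / (2 * b * (d2 * (d1 - d3))))
      + 2 * d2 * (1 / (2 * b))
      + d1 * ((b * d3 - 2 * c2 * d2) / (2 * b * (d2 * (d1 - d3)))) = 0 := by
  subst hbc hc1 hc2
  refine ⟨by field_simp, ?_, ?_⟩ <;> (field_simp; ring)

lemma imk2_case2_sum {α : Type*} [DecidableEq α] (x y : α) (hxy : x ≠ y)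
    (X : ℕ → ℚ) (w : ℕ → ℚ) :
    ∑ A ∈ ({x, y} : Finset α).powerset,
        X A.card * (if (({x, y} : Finset α) ∩ A).card = 1 then w ((({x, y} : Finset α) ∩ A).card) else 0)
      = 2 * X 1 * w 1 := by
  rw [show ({x, y} : Finset α) = insert x {y} from rfl,
    Finset.sum_powerset_insert (by simp [hxy]),
    show ({y} : Finset α) = insert y (∅ : Finset α) from rfl,
    Finset.sum_powerset_insert (by simp), Finset.sum_powerset_insert (by simp)]
  simp only [powerset_empty, sum_singleton]
  simp [imk2_card_pair_inter hxy, hxy, hxy.symm, card_insert_of_notMem]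
  ring

lemma imk2_case1_sum {α : Type*} [DecidableEq α] (x y z : α) (hxy : x ≠ y) (hxz : x ≠ z) (hyz : y ≠ z)
    (X : ℕ → ℚ) (w : ℕ → ℚ) :
    ∑ A ∈ ({x, y, z} : Finset α).powerset,
        X A.card * (if (({x, z} : Finset α) ∩ A).card = 1 then w ((({x, y} : Finset α) ∩ A).card) else 0)
      = X 1 * w 1 + X 1 * w 0 + X 2 * w 2 + X 2 * w 1 := by
  rw [show ({x, y, z} : Finset α) = insert x (insert y {z}) from rfl,
    Finset.sum_powerset_insert (by simp [hxy, hxz]),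
    show (insert y {z} : Finset α) = insert y ({z} : Finset α) from rfl,
    Finset.sum_powerset_insert (by simp [hyz]), Finset.sum_powerset_insert (by simp [hyz]),
    show ({z} : Finset α) = insert z (∅ : Finset α) from rfl]
  rw [Finset.sum_powerset_insert (by simp), Finset.sum_powerset_insert (by simp),
    Finset.sum_powerset_insert (by simp), Finset.sum_powerset_insert (by simp)]
  simp only [powerset_empty, sum_singleton]
  simp [imk2_card_pair_inter hxy, imk2_card_pair_inter hxz, hxy, hxz, hyz, hxy.symm, hxz.symm,
    hyz.symm, card_insert_of_notMem]
  ring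

lemma imk2_case0_sum {α : Type*} [DecidableEq α] (x y z u : α) (hxy : x ≠ y) (hxz : x ≠ z)
    (hxu : x ≠ u) (hyz : y ≠ z) (hyu : y ≠ u) (hzu : z ≠ u)
    (X : ℕ → ℚ) (w : ℕ → ℚ) :
    ∑ A ∈ ({x, y, z, u} : Finset α).powerset,
        X A.card * (if (({z, u} : Finset α) ∩ A).card = 1 then w ((({x, y} : Finset α) ∩ A).card) else 0)
      = 2 * X 1 * w 0 + 4 * X 2 * w 1 + 2 * X 3 * w 2 := by
  rw [show ({x, y, z, u} : Finset α) = insert x (insert y (insert z {u})) from rfl,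
    Finset.sum_powerset_insert (by simp [hxy, hxz, hxu, hyz, hyu, hzu])]
  rw [show (insert y (insert z {u}) : Finset α) = insert y (insert z ({u} : Finset α)) from rfl]
  rw [Finset.sum_powerset_insert (by simp [hxy, hxz, hxu, hyz, hyu, hzu]),
    Finset.sum_powerset_insert (by simp [hxy, hxz, hxu, hyz, hyu, hzu])]
  rw [show (insert z {u} : Finset α) = insert z ({u} : Finset α) from rfl]
  rw [Finset.sum_powerset_insert (by simp [hxy, hxz, hxu, hyz, hyu, hzu]),
    Finset.sum_powerset_insert (by simp [hxy, hxz, hxu, hyz, hyu, hzu]),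
    Finset.sum_powerset_insert (by simp [hxy, hxz, hxu, hyz, hyu, hzu]),
    Finset.sum_powerset_insert (by simp [hxy, hxz, hxu, hyz, hyu, hzu])]
  rw [show ({u} : Finset α) = insert u (∅ : Finset α) from rfl]
  rw [Finset.sum_powerset_insert (by simp [hxy, hxz, hxu, hyz, hyu, hzu]),
    Finset.sum_powerset_insert (by simp [hxy, hxz, hxu, hyz, hyu, hzu]),
    Finset.sum_powerset_insert (by simp [hxy, hxz, hxu, hyz, hyu, hzu]),
    Finset.sum_powerset_insert (by simp [hxy, hxz, hxu, hyz, hyu, hzu]),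
    Finset.sum_powerset_insert (by simp [hxy, hxz, hxu, hyz, hyu, hzu]),
    Finset.sum_powerset_insert (by simp [hxy, hxz, hxu, hyz, hyu, hzu]),
    Finset.sum_powerset_insert (by simp [hxy, hxz, hxu, hyz, hyu, hzu]),
    Finset.sum_powerset_insert (by simp [hxy, hxz, hxu, hyz, hyu, hzu])]
  simp only [powerset_empty, sum_singleton]
  simp [imk2_card_pair_inter hxy, imk2_card_pair_inter hzu, hxy, hxz, hxu, hyz, hyu, hzu,
    hxy.symm, hxz.symm, hxu.symm, hyz.symm, hyu.symm, hzu.symm, card_insert_of_notMem]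
  ring

lemma imk2_choose_strict_succ {m k : ℕ} (h : 2 * k + 1 < m) :
    m.choose k < m.choose (k + 1) := by
  have hpos : 0 < m.choose k := Nat.choose_pos (by omega)
  have h1 := Nat.choose_succ_right_eq m k
  have h2 : m.choose k * (k + 1) < m.choose k * (m - k) := by
    have : k + 1 < m - k := by omega
    exact (Nat.mul_lt_mul_left hpos).2 this
  have h3 : m.choose k * (k + 1) < m.choose (k + 1) * (k + 1) := by rw [h1]; exact h2
  exact Nat.lt_of_mul_lt_mul_right h3

end IntersectionMatrixAux

set_option maxHeartbeats 2000000 in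
/-- The `k = 2` unbalanced case of Theorem 4.1 / Lemma 4.6: for `v₁ + v₂ = t`,
`v₁ > v₂ ≥ 2`, the 0/1 matrix whose rows are ordered partitions `(S₁,S₂)` of `[t]` with
`|S_i| = v_i` and whose columns are 2-subsets of `[t]`, with entry 1 iff the 2-set meets
each part in one element, has rank `C(t,2)`. -/
theorem intersection_matrix_k2_full_rank (t v₁ v₂ : ℕ) (ht : 4 ≤ t) (hte : Even t)
    (hv : v₁ + v₂ = t) (h12 : v₂ < v₁) (h2 : 2 ≤ v₂) :
    Matrix.rank (fun (P : {P : Finset (Fin t) × Finset (Fin t) //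
          P.1.card = v₁ ∧ P.2.card = v₂ ∧ Disjoint P.1 P.2 ∧ P.1 ∪ P.2 = Finset.univ})
        (K : {S : Finset (Fin t) // S.card = 2}) =>
      if ((K : Finset (Fin t)) ∩ (P : Finset (Fin t) × Finset (Fin t)).1).card = 1 ∧
         ((K : Finset (Fin t)) ∩ (P : Finset (Fin t) × Finset (Fin t)).2).card = 1
        then (1 : ℚ) else 0) = t.choose 2 := by
  classical
  obtain ⟨m, hm⟩ := hte
  obtain ⟨e, rfl⟩ : ∃ e, v₂ = e + 2 := ⟨v₂ - 2, by omega⟩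
  obtain ⟨f, rfl⟩ : ∃ f, v₁ = e + 4 + f := ⟨v₁ - (e + 4), by omega⟩
  subst hv
  set T : ℕ := e + 4 + f + (e + 2) with hT
  -- rational constants
  set q1 : ℚ := ((2 * e + 3 + f).choose (e + 1) : ℚ) with hq1def
  set q2 : ℚ := ((2 * e + 3 + f).choose e : ℚ) with hq2def
  set r1 : ℚ := ((2 * e + 2 + f).choose (e + 1) : ℚ) with hr1def
  set r2 : ℚ := ((2 * e + 2 + f).choose e : ℚ) with hr2def
  set N3 : ℕ := if 3 ≤ e + 2 then (2 * e + 2 + f).choose (e + 2 - 3) else 0 with hN3def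
  set r3 : ℚ := (N3 : ℚ) with hr3def
  set bq : ℚ := ((2 * e + 4 + f).choose (e + 1) : ℚ) with hbqdef
  -- Pascal identities
  have hbq : bq = q1 + q2 := by
    rw [hbqdef, hq1def, hq2def,
      show 2 * e + 4 + f = (2 * e + 3 + f) + 1 from by omega, Nat.choose_succ_succ]
    push_cast; ring
  have hq1 : q1 = r1 + r2 := by
    rw [hq1def, hr1def, hr2def,
      show 2 * e + 3 + f = (2 * e + 2 + f) + 1 from by omega, Nat.choose_succ_succ]
    push_cast; ring
  have hq2 : q2 = r2 + r3 := by
    rw [hq2def, hr2def, hr3def, hN3def]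
    rcases e with _ | e'
    · norm_num
    · rw [if_pos (by omega), show e' + 1 + 2 - 3 = e' from by omega,
        show 2 * (e' + 1) + 3 + f = (2 * (e' + 1) + 2 + f) + 1 from by omega,
        show e' + 1 = e' + 1 from rfl]
      rw [Nat.choose_succ_succ]
      push_cast; ring
  -- nonvanishing
  have hbq0 : bq ≠ 0 := by
    rw [hbqdef]
    exact_mod_cast (Nat.choose_pos (by omega : e + 1 ≤ 2 * e + 4 + f)).ne'
  have hr20 : r2 ≠ 0 := by
    rw [hr2def]
    exact_mod_cast (Nat.choose_pos (by omega : e ≤ 2 * e + 2 + f)).ne'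
  have hN3lt : N3 < (2 * e + 2 + f).choose (e + 1) := by
    rw [hN3def]
    rcases e with _ | e'
    · rw [if_neg (by omega)]
      exact Nat.choose_pos (by omega)
    · rw [if_pos (by omega), show e' + 1 + 2 - 3 = e' from by omega]
      exact lt_trans (imk2_choose_strict_succ (by omega))
        (imk2_choose_strict_succ (by omega))
  have hr130 : r1 - r3 ≠ 0 := by
    have : r3 < r1 := by rw [hr3def, hr1def]; exact_mod_cast hN3lt
    linarith
  -- weights
  obtain ⟨E2, E1, E0⟩ := imk2_weight_identities q1 q2 r1 r2 r3 bq hbq0 hr20 hr130 hbq hq1 hq2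
  set w : ℕ → ℚ := fun i =>
    if i = 0 then (bq * r3 - 2 * q2 * r2) / (2 * bq * (r2 * (r1 - r3)))
    else if i = 1 then 1 / (2 * bq)
    else (2 * q1 * r2 - bq * r1) / (2 * bq * (r2 * (r1 - r3))) with hwdef
  have hw0 : w 0 = (bq * r3 - 2 * q2 * r2) / (2 * bq * (r2 * (r1 - r3))) := by simp [hwdef]
  have hw1 : w 1 = 1 / (2 * bq) := by simp [hwdef]
  have hw2 : w 2 = (2 * q1 * r2 - bq * r1) / (2 * bq * (r2 * (r1 - r3))) := by simp [hwdef]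
  -- the matrix and its left inverse
  set Pt := {P : Finset (Fin T) × Finset (Fin T) //
      P.1.card = e + 4 + f ∧ P.2.card = e + 2 ∧ Disjoint P.1 P.2 ∧ P.1 ∪ P.2 = Finset.univ}
    with hPt
  set Kt := {S : Finset (Fin T) // S.card = 2} with hKt
  set M : Matrix Pt Kt ℚ := fun P K =>
      if ((K : Finset (Fin T)) ∩ (P : Finset (Fin T) × Finset (Fin T)).1).card = 1 ∧
         ((K : Finset (Fin T)) ∩ (P : Finset (Fin T) × Finset (Fin T)).2).card = 1
        then (1 : ℚ) else 0 with hM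
  set B : Matrix Kt Pt ℚ := fun K P =>
      w (((K : Finset (Fin T)) ∩ (P : Finset (Fin T) × Finset (Fin T)).2).card) with hB
  have hPcompl : ∀ P : Pt, (P : Finset (Fin T) × Finset (Fin T)).1
      = ((P : Finset (Fin T) × Finset (Fin T)).2)ᶜ := by
    intro P
    obtain ⟨h1, h2', hd, hu⟩ := P.2
    ext z
    simp only [mem_compl]
    constructor
    · exact fun hz hz2 => (Finset.disjoint_left.1 hd hz) hz2
    · intro hz
      have hz' : z ∈ (P : Finset (Fin T) × Finset (Fin T)).1 ∪ (P : Finset (Fin T) × Finset (Fin T)).2 := by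
        rw [hu]; exact mem_univ z
      rcases mem_union.1 hz' with h | h
      · exact h
      · exact absurd h hz
  have hBM : B * M = 1 := by
    ext K L
    rw [Matrix.mul_apply, Matrix.one_apply]
    -- reduce the summand to depend only on P.2
    have hstep1 : ∀ P : Pt, B K P * M P L
        = (if ((L : Finset (Fin T)) ∩ (P : Finset (Fin T) × Finset (Fin T)).2).card = 1
            then w (((K : Finset (Fin T)) ∩ (P : Finset (Fin T) × Finset (Fin T)).2).card) else 0) := by
      intro P
      simp only [hB, hM]
      have hsd : (L : Finset (Fin T)) ∩ (P : Finset (Fin T) × Finset (Fin T)).1 = (L : Finset (Fin T)) \ (P : Finset (Fin T) × Finset (Fin T)).2 := by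
        rw [hPcompl P]; ext z; simp [mem_sdiff, mem_compl]
      have hcard2 : ((L : Finset (Fin T)) ∩ (P : Finset (Fin T) × Finset (Fin T)).2).card
          + ((L : Finset (Fin T)) \ (P : Finset (Fin T) × Finset (Fin T)).2).card = 2 := by
        rw [Finset.card_inter_add_card_sdiff]; exact L.2
      by_cases h : ((L : Finset (Fin T)) ∩ (P : Finset (Fin T) × Finset (Fin T)).2).card = 1
      · rw [if_pos h, if_pos ⟨by rw [hsd]; omega, h⟩, mul_one]
      · rw [if_neg h, if_neg (fun hc => h hc.2), mul_zero]
    rw [Finset.sum_congr rfl (fun P _ => hstep1 P)]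
    -- reindex over v₂-subsets
    have hreindex : ∑ P : Pt, (if ((L : Finset (Fin T)) ∩ (P : Finset (Fin T) × Finset (Fin T)).2).card = 1
            then w (((K : Finset (Fin T)) ∩ (P : Finset (Fin T) × Finset (Fin T)).2).card) else 0)
        = ∑ S ∈ (Finset.univ : Finset (Fin T)).powersetCard (e + 2),
            (if ((L : Finset (Fin T)) ∩ S).card = 1
              then w (((K : Finset (Fin T)) ∩ S).card) else 0) := by
      have hprop : ∀ S : Finset (Fin T), S ∈ (Finset.univ : Finset (Fin T)).powersetCard (e + 2) →
          (Sᶜ.card = e + 4 + f ∧ S.card = e + 2 ∧ Disjoint Sᶜ S ∧ Sᶜ ∪ S = Finset.univ) := by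
        intro S hS
        rw [Finset.mem_powersetCard_univ] at hS
        refine ⟨?_, hS, disjoint_compl_left, by ext z; by_cases h : z ∈ S <;> simp [h]⟩
        rw [card_compl, Fintype.card_fin, hS]; omega
      refine Finset.sum_bij'
        (fun (P : Pt) (_ : P ∈ Finset.univ) => (P : Finset (Fin T) × Finset (Fin T)).2)
        (fun S hS => (⟨(Sᶜ, S), hprop S hS⟩ : Pt)) ?_ ?_ ?_ ?_ ?_
      · intro P _
        rw [Finset.mem_powersetCard_univ]
        exact P.2.2.1
      · intro S hS
        exact Finset.mem_univ _
      · intro P _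
        apply Subtype.ext
        rw [Prod.ext_iff]
        exact ⟨(hPcompl P).symm, rfl⟩
      · intro S hS
        rfl
      · intro P _
        rfl
    rw [hreindex]
    -- rewrite the summand through S ∩ (K ∪ L)
    have hsub : ∀ S : Finset (Fin T),
        (if ((L : Finset (Fin T)) ∩ S).card = 1 then w (((K : Finset (Fin T)) ∩ S).card) else 0)
          = (fun A => if ((L : Finset (Fin T)) ∩ A).card = 1
              then w (((K : Finset (Fin T)) ∩ A).card) else 0)
            (S ∩ ((K : Finset (Fin T)) ∪ (L : Finset (Fin T)))) := by
      intro S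
      have hLc : (L : Finset (Fin T)) ∩ (S ∩ ((K : Finset (Fin T)) ∪ L)) = (L : Finset (Fin T)) ∩ S := by
        rw [inter_comm S, ← inter_assoc, inter_eq_left.2 subset_union_right]
      have hKc : (K : Finset (Fin T)) ∩ (S ∩ ((K : Finset (Fin T)) ∪ L)) = (K : Finset (Fin T)) ∩ S := by
        rw [inter_comm S, ← inter_assoc, inter_eq_left.2 subset_union_left]
      simp only [hLc, hKc]
    rw [Finset.sum_congr rfl (fun S _ => hsub S)]
    rw [imk2_sum_inter_powersetCard (e + 2) ((K : Finset (Fin T)) ∪ (L : Finset (Fin T)))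
      (fun A => if ((L : Finset (Fin T)) ∩ A).card = 1
        then w (((K : Finset (Fin T)) ∩ A).card) else 0)]
    -- case analysis on |K ∩ L|
    have hKL2 : ((K : Finset (Fin T)) ∩ (L : Finset (Fin T))).card ≤ 2 :=
      le_trans (card_le_card inter_subset_left) K.2.le
    have hcases : ((K : Finset (Fin T)) ∩ (L : Finset (Fin T))).card = 0
        ∨ ((K : Finset (Fin T)) ∩ L).card = 1 ∨ ((K : Finset (Fin T)) ∩ L).card = 2 := by omega
    obtain ⟨x, y, hxy, hKxy⟩ := Finset.card_eq_two.1 K.2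
    rcases hcases with hc | hc | hc
    -- |K ∩ L| = 0
    · have hKLne : K ≠ L := by
        intro h
        rw [h, inter_self] at hc
        rw [L.2] at hc; omega
      rw [if_neg hKLne]
      have hdisj : Disjoint (K : Finset (Fin T)) (L : Finset (Fin T)) :=
        Finset.disjoint_iff_inter_eq_empty.2 (Finset.card_eq_zero.1 hc)
      obtain ⟨z, u, hzu, hLzu⟩ := Finset.card_eq_two.1 L.2
      have hmx : x ∈ (K : Finset (Fin T)) := by rw [hKxy]; simp
      have hmy : y ∈ (K : Finset (Fin T)) := by rw [hKxy]; simp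
      have hmz : z ∈ (L : Finset (Fin T)) := by rw [hLzu]; simp
      have hmu : u ∈ (L : Finset (Fin T)) := by rw [hLzu]; simp
      have hxz : x ≠ z := fun h => Finset.disjoint_left.1 hdisj hmx (by rw [h]; exact hmz)
      have hxu : x ≠ u := fun h => Finset.disjoint_left.1 hdisj hmx (by rw [h]; exact hmu)
      have hyz : y ≠ z := fun h => Finset.disjoint_left.1 hdisj hmy (by rw [h]; exact hmz)
      have hyu : y ≠ u := fun h => Finset.disjoint_left.1 hdisj hmy (by rw [h]; exact hmu)
      have hU : (K : Finset (Fin T)) ∪ (L : Finset (Fin T)) = {x, y, z, u} := by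
        rw [hKxy, hLzu]; ext val
        simp only [mem_union, mem_insert, mem_singleton, or_assoc]
      have hUcard : ({x, y, z, u} : Finset (Fin T)).card = 4 := by
        rw [card_insert_of_notMem (by simp [hxy, hxz, hxu]),
          card_insert_of_notMem (by simp [hyz, hyu]),
          card_insert_of_notMem (by simp [hzu]), card_singleton]
      rw [hU, hKxy, hLzu, hUcard]
      rw [imk2_case0_sum x y z u hxy hxz hxu hyz hyu hzu
        (fun m => if m ≤ e + 2 then ((T - 4).choose (e + 2 - m) : ℚ) else 0) w]
      beta_reduce
      rw [if_pos (by omega : 1 ≤ e + 2), if_pos (by omega : 2 ≤ e + 2)]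
      have hT4 : T - 4 = 2 * e + 2 + f := by omega
      have he1 : e + 2 - 1 = e + 1 := by omega
      have he2 : e + 2 - 2 = e := by omega
      rw [hT4, he1, he2]
      rw [hw0, hw1, hw2]
      rw [← hr1def, ← hr2def]
      have hr3' : (if 3 ≤ e + 2 then ((2 * e + 2 + f).choose (e + 2 - 3) : ℚ) else 0) = r3 := by
        rw [hr3def, hN3def]
        split_ifs <;> simp
      rw [hr3']
      linear_combination 2 * E0
    -- |K ∩ L| = 1
    · have hKLne : K ≠ L := by
        intro h
        rw [h, inter_self] at hc
        rw [L.2] at hc; omega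
      rw [if_neg hKLne]
      obtain ⟨x', hx'⟩ := Finset.card_eq_one.1 hc
      have hx'K : x' ∈ (K : Finset (Fin T)) := by
        have : x' ∈ (K : Finset (Fin T)) ∩ L := by rw [hx']; simp
        exact (mem_inter.1 this).1
      have hx'L : x' ∈ (L : Finset (Fin T)) := by
        have : x' ∈ (K : Finset (Fin T)) ∩ L := by rw [hx']; simp
        exact (mem_inter.1 this).2
      obtain ⟨y', hy'⟩ : ∃ y', ((K : Finset (Fin T)).erase x') = {y'} := by
        apply Finset.card_eq_one.1
        simp [Finset.card_erase_of_mem hx'K, K.2]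
      obtain ⟨z', hz'⟩ : ∃ z', ((L : Finset (Fin T)).erase x') = {z'} := by
        apply Finset.card_eq_one.1
        simp [Finset.card_erase_of_mem hx'L, L.2]
      have hK' : (K : Finset (Fin T)) = {x', y'} := by
        rw [← Finset.insert_erase hx'K, hy']
      have hL' : (L : Finset (Fin T)) = {x', z'} := by
        rw [← Finset.insert_erase hx'L, hz']
      have hx'y' : x' ≠ y' := by
        intro h
        have hmem : x' ∈ ((K : Finset (Fin T)).erase x') := by rw [hy', h]; simp
        exact Finset.notMem_erase x' _ hmem
      have hx'z' : x' ≠ z' := by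
        intro h
        have hmem : x' ∈ ((L : Finset (Fin T)).erase x') := by rw [hz', h]; simp
        exact Finset.notMem_erase x' _ hmem
      have hy'z' : y' ≠ z' := by
        intro h
        have hy'K : y' ∈ (K : Finset (Fin T)) := by rw [hK']; simp
        have hy'L : y' ∈ (L : Finset (Fin T)) := by rw [hL', h]; simp
        have : y' ∈ (K : Finset (Fin T)) ∩ L := mem_inter.2 ⟨hy'K, hy'L⟩
        rw [hx'] at this
        exact hx'y' (Finset.mem_singleton.1 this).symm
      have hU : (K : Finset (Fin T)) ∪ (L : Finset (Fin T)) = {x', y', z'} := by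
        rw [hK', hL']; ext val
        simp only [mem_union, mem_insert, mem_singleton]
        constructor
        · rintro ((h | h) | (h | h))
          · exact Or.inl h
          · exact Or.inr (Or.inl h)
          · exact Or.inl h
          · exact Or.inr (Or.inr h)
        · rintro (h | h | h)
          · exact Or.inl (Or.inl h)
          · exact Or.inl (Or.inr h)
          · exact Or.inr (Or.inr h)
      have hUcard : ({x', y', z'} : Finset (Fin T)).card = 3 := by
        rw [card_insert_of_notMem (by simp [hx'y', hx'z']),
          card_insert_of_notMem (by simp [hy'z']), card_singleton]
      rw [hU, hK', hL', hUcard]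
      rw [imk2_case1_sum x' y' z' hx'y' hx'z' hy'z'
        (fun m => if m ≤ e + 2 then ((T - 3).choose (e + 2 - m) : ℚ) else 0) w]
      beta_reduce
      rw [if_pos (by omega : 1 ≤ e + 2), if_pos (by omega : 2 ≤ e + 2)]
      have hT3 : T - 3 = 2 * e + 3 + f := by omega
      have he1 : e + 2 - 1 = e + 1 := by omega
      have he2 : e + 2 - 2 = e := by omega
      rw [hT3, he1, he2, ← hq1def, ← hq2def]
      rw [hw0, hw1, hw2]
      linear_combination E1 - (1 / (2 * bq)) * hbq
    -- |K ∩ L| = 2, i.e. K = L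
    · have hKeqL : (K : Finset (Fin T)) = (L : Finset (Fin T)) := by
        have hsub1 : (K : Finset (Fin T)) ∩ L = (K : Finset (Fin T)) :=
          Finset.eq_of_subset_of_card_le inter_subset_left (by rw [hc, K.2])
        have : (K : Finset (Fin T)) ⊆ L := by
          rw [← hsub1]; exact inter_subset_right
        exact Finset.eq_of_subset_of_card_le this (by rw [K.2, L.2])
      have hKL : K = L := Subtype.ext hKeqL
      rw [if_pos hKL]
      rw [← hKL, union_self, hKxy]
      have hUcard : ({x, y} : Finset (Fin T)).card = 2 := by
        rw [card_insert_of_notMem (by simp [hxy]), card_singleton]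
      rw [hUcard]
      rw [imk2_case2_sum x y hxy
        (fun m => if m ≤ e + 2 then ((T - 2).choose (e + 2 - m) : ℚ) else 0) w]
      beta_reduce
      rw [if_pos (by omega : 1 ≤ e + 2)]
      have hT2 : T - 2 = 2 * e + 4 + f := by omega
      have he1 : e + 2 - 1 = e + 1 := by omega
      rw [hT2, he1, ← hbqdef, hw1]
      linear_combination E2
  -- conclude about the rank
  have hrank_le : M.rank ≤ Fintype.card Kt := Matrix.rank_le_card_width M
  have hrank_ge : Fintype.card Kt ≤ M.rank := by
    have h1 : (B * M).rank = Fintype.card Kt := by rw [hBM, Matrix.rank_one]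
    have h2 : (B * M).rank ≤ M.rank := Matrix.rank_mul_le_right B M
    omega
  have hcardKt : Fintype.card Kt = T.choose 2 := by
    have h := Fintype.card_finset_len (α := Fin T) 2
    rw [Fintype.card_fin] at h
    exact h
  have : M.rank = T.choose 2 := by omega
  exact this
end

section
/- Fix k ≥ 2 and integers t ≥ 2k divisible by k. Let A = A_{t,k,v} with v = (t/k,...,t/k) be the 0/1 matrix whose columns are indexed by k-subsets of [t] and rows by partitions of [t] into k parts of size t/k each, with entry 1 iff the k-subset is a transversal of the partition (one element in each part). Then the Gram matrix C = AᵀA lies in the Bose–Mesner algebra of the Johnson scheme J(t,k): there exist nonnegative reals α_0,...,α_k with C = ∑_{i=0}^k α_i W_i, where W_i(X,Y) = 1 iff |X ∩ Y| = k - i; moreover α_i = i! · (t-k-i)! / ((t/k-1)!^{k-i} · (t/k-2)!^i). -/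
open scoped Classical

/-- Partitions of `[t]` into `k` parts of size `t/k` each. -/
def BalancedPartition (t k : ℕ) : Type :=
  {P : Finset (Finset (Fin t)) // P.card = k ∧ (∀ S ∈ P, S.card = t / k) ∧
    ∀ a : Fin t, ∃! S, S ∈ P ∧ a ∈ S}

noncomputable instance (t k : ℕ) : Fintype (BalancedPartition t k) :=
  Subtype.fintype _

/-- The balanced-cut intersection matrix `A_{t,k,(t/k,…,t/k)}`: entry 1 iff the `k`-set is a
transversal of the partition. -/
noncomputable def cutMatrix (t k : ℕ) :
    Matrix (BalancedPartition t k) {S : Finset (Fin t) // S.card = k} ℝ :=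
  fun P X => if ∀ S ∈ P.1, ((X : Finset (Fin t)) ∩ S).card = 1 then 1 else 0

/-- The adjacency matrices of the Johnson scheme `J(t,k)`: `W_i(X,Y) = 1` iff `|X∩Y| = k-i`. -/
noncomputable def johnsonW (t k i : ℕ) :
    Matrix {S : Finset (Fin t) // S.card = k} {S : Finset (Fin t) // S.card = k} ℝ :=
  fun X Y => if ((X : Finset (Fin t)) ∩ (Y : Finset (Fin t))).card = k - i then 1 else 0

noncomputable section
variable {α β : Type*} (n : β → ℕ)

def sigmaFiberFinEquiv (b : β) : {p : Σ b', Fin (n b') // p.1 = b} ≃ Fin (n b) where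
  toFun := fun p => p.2 ▸ p.1.2
  invFun := fun j => ⟨⟨b, j⟩, rfl⟩
  left_inv := fun p => by
    obtain ⟨⟨b', j'⟩, hb⟩ := p
    cases hb; rfl
  right_inv := fun j => rfl

def toSigmaFin (f : α → β) (e : ∀ b, {a // f a = b} ≃ Fin (n b)) :
    α ≃ Σ b, Fin (n b) where
  toFun := fun a => ⟨f a, e (f a) ⟨a, rfl⟩⟩
  invFun := fun p => ((e p.1).symm p.2).1
  left_inv := fun a => by simp
  right_inv := fun p => by
    obtain ⟨b, j⟩ := p
    rcases h : (e b).symm j with ⟨a, ha⟩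
    subst ha
    have h2 := congrArg (e (f a)) h
    rw [Equiv.apply_symm_apply] at h2
    dsimp only
    rw [h]
    exact congrArg (fun jj => (⟨f a, jj⟩ : Σ b, Fin (n b))) h2.symm

def ofSigmaFin (h : α ≃ Σ b, Fin (n b)) (b : β) : {a // (h a).1 = b} ≃ Fin (n b) :=
  (Equiv.subtypeEquiv h (fun a => Iff.rfl)).trans (sigmaFiberFinEquiv n b)

def fiberSigmaEquiv :
    (Σ f : α → β, ∀ b, ({a // f a = b} ≃ Fin (n b))) ≃ (α ≃ Σ b, Fin (n b)) where
  toFun := fun ⟨f, e⟩ => toSigmaFin n f e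
  invFun := fun h => ⟨fun a => (h a).1, fun b => ofSigmaFin n h b⟩
  left_inv := fun ⟨f, e⟩ => by
    refine Sigma.ext rfl (heq_of_eq (funext fun b => Equiv.ext fun q => ?_))
    obtain ⟨a, ha⟩ := q
    subst ha
    rfl
  right_inv := fun h => Equiv.ext fun a => rfl

end

section
open Finset
lemma card_fiber_mul_prod {α β : Type*} [Fintype α] [Fintype β]
    (n : β → ℕ) (h : ∑ b, n b = Fintype.card α) :
    Fintype.card {f : α → β // ∀ b, Fintype.card {a // f a = b} = n b} * ∏ b, (n b).factorial
      = (Fintype.card α).factorial := by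
  classical
  have h1 : Fintype.card (Σ f : α → β, ∀ b, ({a // f a = b} ≃ Fin (n b)))
      = (Fintype.card α).factorial := by
    rw [Fintype.card_congr (fiberSigmaEquiv n)]
    have e : α ≃ Σ b, Fin (n b) := Fintype.equivOfCardEq (by simp [h])
    rw [Fintype.card_equiv e]
  rw [Fintype.card_sigma] at h1
  have h2 : ∀ f : α → β, Fintype.card (∀ b, ({a // f a = b} ≃ Fin (n b)))
      = if (∀ b, Fintype.card {a // f a = b} = n b) then ∏ b, (n b).factorial else 0 := by
    intro f
    split_ifs with hf
    · rw [Fintype.card_pi]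
      refine Finset.prod_congr rfl fun b _ => ?_
      rw [Fintype.card_equiv (Fintype.equivOfCardEq (by simp [hf b]))]
      simp [hf b]
    · push_neg at hf
      obtain ⟨b, hb⟩ := hf
      rw [Fintype.card_pi]
      apply Finset.prod_eq_zero (Finset.mem_univ b)
      have : IsEmpty ({a // f a = b} ≃ Fin (n b)) := by
        constructor
        intro e
        exact hb (by simpa using Fintype.card_congr e)
      exact Fintype.card_eq_zero
  rw [Finset.sum_congr rfl (fun f _ => h2 f)] at h1
  rw [Finset.sum_ite, Finset.sum_const, Finset.sum_const_zero, add_zero, smul_eq_mul] at h1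
  rw [← h1, Fintype.card_subtype]

lemma card_fiber_mul_prod' {α β : Type*} [Fintype α] [Fintype β]
    (n : β → ℕ) (h : ∑ b, n b = Nat.card α) :
    Nat.card {f : α → β // ∀ b, Nat.card {a // f a = b} = n b} * ∏ b, (n b).factorial
      = (Nat.card α).factorial := by
  have e : {f : α → β // ∀ b, Nat.card {a // f a = b} = n b}
      ≃ {f : α → β // ∀ b, Fintype.card {a // f a = b} = n b} :=
    Equiv.subtypeEquivRight (fun f => by simp [Nat.card_eq_fintype_card])
  rw [Nat.card_congr e, Nat.card_eq_fintype_card, Nat.card_eq_fintype_card]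
  rw [Nat.card_eq_fintype_card] at h
  exact card_fiber_mul_prod n h
end


namespace BP
variable {t k : ℕ}

instance : Membership (Finset (Fin t)) (BalancedPartition t k) := ⟨fun P S => S ∈ P.1⟩

/-- the block containing `a` -/
noncomputable def part (P : BalancedPartition t k) (a : Fin t) : Finset (Fin t) :=
  (P.2.2.2 a).choose

lemma part_mem (P : BalancedPartition t k) (a : Fin t) : part P a ∈ P.1 :=
  (P.2.2.2 a).choose_spec.1.1

lemma mem_part (P : BalancedPartition t k) (a : Fin t) : a ∈ part P a :=
  (P.2.2.2 a).choose_spec.1.2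

lemma eq_part {P : BalancedPartition t k} {a : Fin t} {S : Finset (Fin t)}
    (hS : S ∈ P.1) (ha : a ∈ S) : S = part P a :=
  (P.2.2.2 a).choose_spec.2 S ⟨hS, ha⟩

lemma part_eq_of_mem {P : BalancedPartition t k} {a b : Fin t}
    (h : b ∈ part P a) : part P b = part P a :=
  (eq_part (part_mem P a) h).symm

/-- transversality -/
def trans (X : Finset (Fin t)) (P : BalancedPartition t k) : Prop :=
  ∀ S ∈ P.1, (X ∩ S).card = 1

variable {X : Finset (Fin t)} {P : BalancedPartition t k}

/-- the unique element of `X` in the block of `a` -/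
noncomputable def xof (P : BalancedPartition t k) (hX : trans X P) (a : Fin t) : Fin t :=
  (Finset.card_eq_one.mp (hX _ (part_mem P a))).choose

lemma xof_spec (hX : trans X P) (a : Fin t) :
    X ∩ part P a = {xof P hX a} :=
  (Finset.card_eq_one.mp (hX _ (part_mem P a))).choose_spec

lemma xof_mem_inter (hX : trans X P) (a : Fin t) :
    xof P hX a ∈ X ∩ part P a := by
  rw [xof_spec hX a]; exact Finset.mem_singleton_self _

lemma xof_mem (hX : trans X P) (a : Fin t) : xof P hX a ∈ X :=
  (Finset.mem_inter.mp (xof_mem_inter hX a)).1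

lemma xof_mem_part (hX : trans X P) (a : Fin t) : xof P hX a ∈ part P a :=
  (Finset.mem_inter.mp (xof_mem_inter hX a)).2

lemma xof_unique {hX : trans X P} {a x : Fin t} (hx : x ∈ X) (hp : x ∈ part P a) :
    xof P hX a = x := by
  have : x ∈ X ∩ part P a := Finset.mem_inter.mpr ⟨hx, hp⟩
  rw [xof_spec hX a] at this
  exact (Finset.mem_singleton.mp this).symm

lemma xof_eq_iff (hX : trans X P) {x : Fin t} (hx : x ∈ X) (a : Fin t) :
    xof P hX a = x ↔ a ∈ part P x := by
  constructor
  · intro h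
    have h1 : x ∈ part P a := h ▸ xof_mem_part hX a
    have := part_eq_of_mem h1
    rw [this]
    exact mem_part P a
  · intro h
    exact xof_unique hx ((part_eq_of_mem h).symm ▸ mem_part P x)

lemma xof_self (hX : trans X P) {a : Fin t} (ha : a ∈ X) : xof P hX a = a :=
  xof_unique ha (mem_part P a)

/-- two distinct elements of `X` in a block contradict transversality -/
lemma trans_unique (hX : trans X P) {S : Finset (Fin t)} (hS : S ∈ P.1)
    {b c : Fin t} (hb : b ∈ X ∩ S) (hc : c ∈ X ∩ S) : b = c := by
  obtain ⟨w, hw⟩ := Finset.card_eq_one.mp (hX S hS)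
  rw [hw, Finset.mem_singleton] at hb hc
  rw [hb, hc]

end BP

namespace BP
open Finset
variable {t k : ℕ} {X Y : Finset (Fin t)}

/-- the `X`-representative of `a` determined by the data `(σ, g)` -/
noncomputable def rep (σ : {a : Fin t // a ∈ Y \ X} ≃ {a : Fin t // a ∈ X \ Y})
    (g : {a : Fin t // a ∉ X ∧ a ∉ Y} → {a : Fin t // a ∈ X}) (a : Fin t) : Fin t :=
  if ha : a ∈ X then a
  else if hy : a ∈ Y then (σ ⟨a, Finset.mem_sdiff.mpr ⟨hy, ha⟩⟩).1
  else (g ⟨a, ha, hy⟩).1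

variable {σ : {a : Fin t // a ∈ Y \ X} ≃ {a : Fin t // a ∈ X \ Y}}
    {g : {a : Fin t // a ∉ X ∧ a ∉ Y} → {a : Fin t // a ∈ X}}

lemma rep_self {a : Fin t} (ha : a ∈ X) : rep σ g a = a := by simp [rep, ha]

lemma rep_yx {a : Fin t} (ha : a ∈ Y \ X) : rep σ g a = (σ ⟨a, ha⟩).1 := by
  rw [mem_sdiff] at ha
  simp [rep, ha.1, ha.2]

lemma rep_rest {a : Fin t} (ha : a ∉ X) (hb : a ∉ Y) : rep σ g a = (g ⟨a, ha, hb⟩).1 := by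
  simp [rep, ha, hb]

lemma rep_mem_X (a : Fin t) : rep σ g a ∈ X := by
  unfold rep
  split_ifs with h1 h2
  · exact h1
  · exact (mem_sdiff.mp (σ _).2).1
  · exact (g _).2

/-- the block with representative `x` -/
noncomputable def partOf (σ : {a : Fin t // a ∈ Y \ X} ≃ {a : Fin t // a ∈ X \ Y})
    (g : {a : Fin t // a ∉ X ∧ a ∉ Y} → {a : Fin t // a ∈ X}) (x : Fin t) : Finset (Fin t) :=
  univ.filter (fun a => rep σ g a = x)

lemma mem_partOf {a x : Fin t} : a ∈ partOf σ g x ↔ rep σ g a = x := by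
  simp [partOf]

lemma partOf_inter_X {x : Fin t} (hx : x ∈ X) : X ∩ partOf σ g x = {x} := by
  ext a
  simp only [mem_inter, mem_partOf, mem_singleton]
  constructor
  · rintro ⟨ha, hr⟩
    rw [rep_self ha] at hr
    exact hr
  · rintro rfl
    exact ⟨hx, rep_self hx⟩

lemma partOf_inter_Y {x : Fin t} (hx : x ∈ X) :
    Y ∩ partOf σ g x = if hxy : x ∈ Y then {x}
      else {(σ.symm ⟨x, mem_sdiff.mpr ⟨hx, hxy⟩⟩).1} := by
  split_ifs with hxy
  · ext a
    simp only [mem_inter, mem_partOf, mem_singleton]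
    constructor
    · rintro ⟨ha, hr⟩
      by_cases haX : a ∈ X
      · rwa [rep_self haX] at hr
      · rw [rep_yx (mem_sdiff.mpr ⟨ha, haX⟩)] at hr
        exact absurd (hr ▸ (mem_sdiff.mp (σ _).2).2) (fun h => h hxy)
    · rintro rfl
      exact ⟨hxy, rep_self hx⟩
  · ext a
    simp only [mem_inter, mem_partOf, mem_singleton]
    constructor
    · rintro ⟨ha, hr⟩
      by_cases haX : a ∈ X
      · rw [rep_self haX] at hr
        exact absurd (hr ▸ ha) hxy
      · rw [rep_yx (mem_sdiff.mpr ⟨ha, haX⟩)] at hr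
        have : σ ⟨a, mem_sdiff.mpr ⟨ha, haX⟩⟩ = ⟨x, mem_sdiff.mpr ⟨hx, hxy⟩⟩ :=
          Subtype.ext hr
        have := congrArg σ.symm this
        rw [Equiv.symm_apply_apply] at this
        exact congrArg Subtype.val this
    · rintro rfl
      refine ⟨(mem_sdiff.mp (σ.symm _).2).1, ?_⟩
      rw [rep_yx (σ.symm _).2]
      have : (⟨(σ.symm ⟨x, mem_sdiff.mpr ⟨hx, hxy⟩⟩).1, (σ.symm _).2⟩ :
          {a : Fin t // a ∈ Y \ X}) = σ.symm ⟨x, mem_sdiff.mpr ⟨hx, hxy⟩⟩ :=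
        Subtype.ext rfl
      rw [this, Equiv.apply_symm_apply]

end BP

namespace BP
open Finset
variable {t k : ℕ} {X Y : Finset (Fin t)}
variable {σ : {a : Fin t // a ∈ Y \ X} ≃ {a : Fin t // a ∈ X \ Y}}
    {g : {a : Fin t // a ∉ X ∧ a ∉ Y} → {a : Fin t // a ∈ X}}

/-- fiber count for the `rest` part of a block -/
lemma card_partOf_rest {x : Fin t} (hx : x ∈ X) :
    (((univ : Finset (Fin t)) \ (X ∪ Y)).filter (fun a => rep σ g a = x)).card
      = Nat.card {z : {a : Fin t // a ∉ X ∧ a ∉ Y} // g z = ⟨x, hx⟩} := by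
  rw [Nat.card_eq_fintype_card, ← Fintype.card_coe]
  apply Fintype.card_congr
  refine
    { toFun := fun a => ⟨⟨a.1, ?_, ?_⟩, ?_⟩
      invFun := fun z => ⟨z.1.1, ?_⟩
      left_inv := fun a => by simp
      right_inv := fun z => by simp }
  · have := a.2
    simp only [mem_filter, mem_sdiff, mem_union, mem_univ, true_and, not_or] at this
    exact this.1.1
  · have := a.2
    simp only [mem_filter, mem_sdiff, mem_union, mem_univ, true_and, not_or] at this
    exact this.1.2
  · have h3 := a.2
    simp only [mem_filter, mem_sdiff, mem_union, mem_univ, true_and, not_or] at h3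
    have h1 : a.1 ∉ X := h3.1.1
    have h2 : a.1 ∉ Y := h3.1.2
    have := h3.2
    rw [rep_rest h1 h2] at this
    exact Subtype.ext this
  · have h1 := z.1.2.1
    have h2 := z.1.2.2
    simp only [mem_filter, mem_sdiff, mem_union, mem_univ, true_and]
    refine ⟨fun h => h.elim h1 h2, ?_⟩
    rw [rep_rest h1 h2]
    have : (⟨z.1.1, h1, h2⟩ : {a : Fin t // a ∉ X ∧ a ∉ Y}) = z.1 := Subtype.ext rfl
    rw [this, z.2]

lemma card_partOf
    (hg : ∀ x : {a : Fin t // a ∈ X},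
      Nat.card {z : {a : Fin t // a ∉ X ∧ a ∉ Y} // g z = x}
        = if x.1 ∈ Y then t / k - 1 else t / k - 2)
    (hm : 2 ≤ t / k) {x : Fin t} (hx : x ∈ X) :
    (partOf σ g x).card = t / k := by
  have hu : (partOf σ g x : Finset (Fin t))
      = (X ∩ partOf σ g x) ∪ (Y ∩ partOf σ g x)
        ∪ ((univ \ (X ∪ Y)).filter (fun a => rep σ g a = x)) := by
    ext a
    simp only [mem_union, mem_inter, mem_filter, mem_sdiff, mem_union, mem_univ, true_and,
      mem_partOf]
    by_cases h1 : a ∈ X <;> by_cases h2 : a ∈ Y <;> tauto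
  rw [hu]
  have hrest := card_partOf_rest (σ := σ) (g := g) hx
  have hgx : Nat.card {z : {a : Fin t // a ∉ X ∧ a ∉ Y} // g z = ⟨x, hx⟩}
      = if x ∈ Y then t / k - 1 else t / k - 2 := hg ⟨x, hx⟩
  rw [hgx] at hrest
  rw [partOf_inter_X hx, partOf_inter_Y hx]
  by_cases hxy : x ∈ Y
  · rw [dif_pos hxy]
    rw [union_self]
    rw [if_pos hxy] at hrest
    rw [card_union_of_disjoint, hrest, card_singleton]
    · omega
    · simp only [disjoint_singleton_left, mem_filter, mem_sdiff, mem_union]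
      tauto
  · rw [dif_neg hxy]
    have hne : x ≠ (σ.symm ⟨x, mem_sdiff.mpr ⟨hx, hxy⟩⟩).1 := by
      intro h
      have := (mem_sdiff.mp (σ.symm ⟨x, mem_sdiff.mpr ⟨hx, hxy⟩⟩).2).2
      exact this (h ▸ hx)
    rw [if_neg hxy] at hrest
    rw [card_union_of_disjoint, card_union_of_disjoint, hrest]
    · simp only [card_singleton]
      omega
    · simp only [disjoint_singleton_left, mem_singleton]
      exact hne
    · simp only [disjoint_union_left, disjoint_singleton_left, mem_filter, mem_sdiff, mem_union]
      constructor
      · tauto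
      · have := (mem_sdiff.mp (σ.symm ⟨x, mem_sdiff.mpr ⟨hx, hxy⟩⟩).2).1
        tauto

end BP

namespace BP
open Finset
variable {t k : ℕ} {X Y : Finset (Fin t)}
variable (σ : {a : Fin t // a ∈ Y \ X} ≃ {a : Fin t // a ∈ X \ Y})
    (g : {a : Fin t // a ∉ X ∧ a ∉ Y} → {a : Fin t // a ∈ X})

lemma partOf_injOn {x x' : Fin t} (hx : x ∈ X) (hx' : x' ∈ X)
    (h : partOf σ g x = partOf σ g x') : x = x' := by
  have h1 : x ∈ partOf σ g x := mem_partOf.mpr (rep_self hx)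
  rw [h] at h1
  have := mem_partOf.mp h1
  rwa [rep_self hx] at this

variable (hXc : X.card = k) (hYc : Y.card = k)
    (hg : ∀ x : {a : Fin t // a ∈ X},
      Nat.card {z : {a : Fin t // a ∉ X ∧ a ∉ Y} // g z = x}
        = if x.1 ∈ Y then t / k - 1 else t / k - 2)
    (hm : 2 ≤ t / k)

/-- the balanced partition built from `(σ, g)` -/
noncomputable def mkPart : BalancedPartition t k := by
  refine ⟨X.attach.image (fun x => partOf σ g x.1), ?_, ?_, ?_⟩
  · rw [Finset.card_image_of_injOn, card_attach, hXc]
    intro x _ x' _ h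
    exact Subtype.ext (partOf_injOn σ g x.2 x'.2 h)
  · intro S hS
    obtain ⟨x, _, rfl⟩ := Finset.mem_image.mp hS
    exact card_partOf hg hm x.2
  · intro a
    refine ⟨partOf σ g (rep σ g a), ⟨?_, mem_partOf.mpr rfl⟩, ?_⟩
    · exact Finset.mem_image.mpr ⟨⟨rep σ g a, rep_mem_X a⟩, mem_attach _ _, rfl⟩
    · rintro S ⟨hS, haS⟩
      obtain ⟨x, _, rfl⟩ := Finset.mem_image.mp hS
      rw [mem_partOf.mp haS]

lemma mkPart_transX : trans X (mkPart σ g hXc hg hm) := by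
  intro S hS
  obtain ⟨x, _, rfl⟩ := Finset.mem_image.mp hS
  rw [partOf_inter_X x.2, card_singleton]

lemma mkPart_transY : trans Y (mkPart σ g hXc hg hm) := by
  intro S hS
  obtain ⟨x, _, rfl⟩ := Finset.mem_image.mp hS
  rw [partOf_inter_Y x.2]
  split_ifs <;> rw [card_singleton]

end BP

namespace BP
open Finset
variable {t k : ℕ} {X Y : Finset (Fin t)}
variable {P : BalancedPartition t k}

lemma xof_not_mem_Y (hX : trans X P) (hY : trans Y P) {a : Fin t} (ha : a ∈ Y \ X) : xof P hX a ∉ Y := by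
  intro hmem
  rw [mem_sdiff] at ha
  have h1 : xof P hX a ∈ Y ∩ part P a := mem_inter.mpr ⟨hmem, xof_mem_part hX a⟩
  have h2 : a ∈ Y ∩ part P a := mem_inter.mpr ⟨ha.1, mem_part P a⟩
  have := trans_unique hY (part_mem P a) h1 h2
  exact ha.2 (this ▸ xof_mem hX a)

/-- the forward map on `Y \ X` -/
noncomputable def fwdSigmaFun (hX : trans X P) (hY : trans Y P) : {a : Fin t // a ∈ Y \ X} → {a : Fin t // a ∈ X \ Y} :=
  fun y => ⟨xof P hX y.1, mem_sdiff.mpr ⟨xof_mem hX y.1, xof_not_mem_Y hX hY y.2⟩⟩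

lemma fwdSigmaFun_inj (hX : trans X P) (hY : trans Y P) : Function.Injective (fwdSigmaFun hX hY) := by
  intro y y' h
  have h1 : xof P hX y.1 = xof P hX y'.1 := congrArg Subtype.val h
  have h2 : part P (xof P hX y.1) = part P y.1 := part_eq_of_mem (xof_mem_part hX y.1)
  have h3 : part P (xof P hX y'.1) = part P y'.1 := part_eq_of_mem (xof_mem_part hX y'.1)
  have hpp : part P y.1 = part P y'.1 := by rw [← h2, ← h3, h1]
  have hy1 : y.1 ∈ Y ∩ part P y.1 :=
    mem_inter.mpr ⟨(mem_sdiff.mp y.2).1, mem_part P y.1⟩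
  have hy2 : y'.1 ∈ Y ∩ part P y.1 := by
    rw [hpp]
    exact mem_inter.mpr ⟨(mem_sdiff.mp y'.2).1, mem_part P y'.1⟩
  exact Subtype.ext (trans_unique hY (part_mem P y.1) hy1 hy2)

noncomputable def fwdSigma (hX : trans X P) (hY : trans Y P) (hXc : X.card = k)
    (hYc : Y.card = k) : {a : Fin t // a ∈ Y \ X} ≃ {a : Fin t // a ∈ X \ Y} :=
  Equiv.ofBijective (fwdSigmaFun hX hY)
    ((Fintype.bijective_iff_injective_and_card _).mpr
      ⟨fwdSigmaFun_inj hX hY, by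
        rw [Fintype.card_coe, Fintype.card_coe]
        exact Finset.card_sdiff_comm (hYc.trans hXc.symm)⟩)

@[simp] lemma fwdSigma_apply (hX : trans X P) (hY : trans Y P) (hXc : X.card = k)
    (hYc : Y.card = k) (y : {a : Fin t // a ∈ Y \ X}) :
    ((fwdSigma hX hY hXc hYc) y).1 = xof P hX y.1 := rfl

/-- the forward map on the rest -/
noncomputable def fwdG (hX : trans X P) : {a : Fin t // a ∉ X ∧ a ∉ Y} → {a : Fin t // a ∈ X} :=
  fun z => ⟨xof P hX z.1, xof_mem hX z.1⟩

/-- `X ∩ part P x = {x}` for `x ∈ X` -/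
lemma inter_part_self (hX : trans X P) {x : Fin t} (hx : x ∈ X) : X ∩ part P x = {x} := by
  rw [xof_spec hX x, xof_self hX hx]

lemma fwdG_fiber (hX : trans X P) (hY : trans Y P) (x : {a : Fin t // a ∈ X}) :
    Nat.card {z : {a : Fin t // a ∉ X ∧ a ∉ Y} // fwdG hX z = x}
      = if x.1 ∈ Y then t / k - 1 else t / k - 2 := by
  rw [Nat.card_eq_fintype_card]
  have key : ∀ z : {a : Fin t // a ∉ X ∧ a ∉ Y},
      fwdG hX z = x ↔ z.1 ∈ part P x.1 := by
    intro z
    rw [show (fwdG hX z = x) ↔ (xof P hX z.1 = x.1) from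
      ⟨fun h => congrArg Subtype.val h, fun h => Subtype.ext h⟩]
    exact xof_eq_iff hX x.2 z.1
  have e : {z : {a : Fin t // a ∉ X ∧ a ∉ Y} // fwdG hX z = x}
      ≃ {a : Fin t // a ∈ part P x.1 \ (X ∪ Y)} :=
    { toFun := fun z => ⟨z.1.1, mem_sdiff.mpr ⟨(key z.1).mp z.2, by
        simp only [mem_union]
        exact fun h => h.elim z.1.2.1 z.1.2.2⟩⟩
      invFun := fun a => by
        have h := mem_sdiff.mp a.2
        simp only [mem_union, not_or] at h
        exact ⟨⟨a.1, h.2.1, h.2.2⟩, (key _).mpr h.1⟩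
      left_inv := fun z => by simp
      right_inv := fun a => by simp }
  rw [Fintype.card_congr e, Fintype.card_coe]
  -- now compute the card of `part P x.1 \ (X ∪ Y)`
  have hpart : (part P x.1).card = t / k := P.2.2.1 _ (part_mem P x.1)
  have hXp : X ∩ part P x.1 = {x.1} := inter_part_self hX x.2
  obtain ⟨y₀, hy₀⟩ := Finset.card_eq_one.mp (hY _ (part_mem P x.1))
  have hsd : part P x.1 \ (X ∪ Y) = part P x.1 \ ((X ∪ Y) ∩ part P x.1) := by
    rw [sdiff_inter_self_right]
  rw [hsd, card_sdiff_of_subset inter_subset_right]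
  rw [union_inter_distrib_right, hXp, hy₀]
  by_cases hxy : x.1 ∈ Y
  · have : y₀ = x.1 := by
      have : x.1 ∈ Y ∩ part P x.1 := mem_inter.mpr ⟨hxy, mem_part P x.1⟩
      rw [hy₀, mem_singleton] at this
      exact this.symm
    rw [this, union_self, card_singleton, if_pos hxy, hpart]
  · have hne : x.1 ≠ y₀ := by
      intro h
      have : y₀ ∈ Y ∩ part P x.1 := by rw [hy₀]; exact mem_singleton_self _
      exact hxy (h ▸ (mem_inter.mp this).1)
    rw [if_neg hxy, hpart]
    rw [card_union_of_disjoint (by simp [hne, Ne.symm hne]), card_singleton, card_singleton]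

end BP

namespace BP
open Finset
variable {t k : ℕ} {X Y : Finset (Fin t)}
variable {σ : {a : Fin t // a ∈ Y \ X} ≃ {a : Fin t // a ∈ X \ Y}}
    {g : {a : Fin t // a ∉ X ∧ a ∉ Y} → {a : Fin t // a ∈ X}}

lemma partOf_mem_mkPart (hXc : X.card = k)
    (hg : ∀ x : {a : Fin t // a ∈ X},
      Nat.card {z : {a : Fin t // a ∉ X ∧ a ∉ Y} // g z = x}
        = if x.1 ∈ Y then t / k - 1 else t / k - 2)
    (hm : 2 ≤ t / k) {x : Fin t} (hx : x ∈ X) :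
    partOf σ g x ∈ (mkPart σ g hXc hg hm).1 :=
  Finset.mem_image.mpr ⟨⟨x, hx⟩, mem_attach _ _, rfl⟩

lemma part_mkPart (hXc : X.card = k)
    (hg : ∀ x : {a : Fin t // a ∈ X},
      Nat.card {z : {a : Fin t // a ∉ X ∧ a ∉ Y} // g z = x}
        = if x.1 ∈ Y then t / k - 1 else t / k - 2)
    (hm : 2 ≤ t / k) (a : Fin t) :
    part (mkPart σ g hXc hg hm) a = partOf σ g (rep σ g a) :=
  (eq_part (partOf_mem_mkPart hXc hg hm (rep_mem_X a)) (mem_partOf.mpr rfl)).symm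

variable {P : BalancedPartition t k}

lemma partOf_fwd_eq (hX : trans X P) (hY : trans Y P) (hXc : X.card = k) (hYc : Y.card = k)
    {x : Fin t} (hx : x ∈ X) :
    partOf (fwdSigma hX hY hXc hYc) (fwdG hX) x = part P x := by
  ext a
  rw [mem_partOf]
  have hrep : rep (fwdSigma hX hY hXc hYc) (fwdG hX) a = xof P hX a := by
    by_cases h1 : a ∈ X
    · rw [rep_self h1, xof_self hX h1]
    · by_cases h2 : a ∈ Y
      · rw [rep_yx (mem_sdiff.mpr ⟨h2, h1⟩)]
        rfl
      · rw [rep_rest h1 h2]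
        rfl
  rw [hrep]
  exact xof_eq_iff hX hx a

noncomputable def mainEquiv (hXc : X.card = k) (hYc : Y.card = k) (hm : 2 ≤ t / k) :
    {P : BalancedPartition t k // trans X P ∧ trans Y P} ≃
      ({a : Fin t // a ∈ Y \ X} ≃ {a : Fin t // a ∈ X \ Y}) ×
      {g : {a : Fin t // a ∉ X ∧ a ∉ Y} → {a : Fin t // a ∈ X} //
        ∀ x, Nat.card {z // g z = x} = if x.1 ∈ Y then t / k - 1 else t / k - 2} where
  toFun := fun Q => (fwdSigma Q.2.1 Q.2.2 hXc hYc, ⟨fwdG Q.2.1, fwdG_fiber Q.2.1 Q.2.2⟩)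
  invFun := fun sg => ⟨mkPart sg.1 sg.2.1 hXc sg.2.2 hm,
    mkPart_transX sg.1 sg.2.1 hXc sg.2.2 hm, mkPart_transY sg.1 sg.2.1 hXc sg.2.2 hm⟩
  left_inv := by
    rintro ⟨P, hX, hY⟩
    refine Subtype.ext (Subtype.ext ?_)
    apply Finset.eq_of_subset_of_card_le
    · intro S hS
      obtain ⟨x, _, rfl⟩ := Finset.mem_image.mp hS
      rw [partOf_fwd_eq hX hY hXc hYc x.2]
      exact part_mem P x.1
    · rw [P.2.1, (mkPart _ _ hXc _ hm).2.1]
  right_inv := by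
    rintro ⟨σ, g, hg⟩
    have hX' := mkPart_transX σ g hXc hg hm
    set P' := mkPart σ g hXc hg hm with hP'
    refine Prod.ext ?_ ?_
    · refine Equiv.ext fun y => Subtype.ext ?_
      show xof P' hX' y.1 = (σ y).1
      apply xof_unique (mem_sdiff.mp (σ y).2).1
      have h1 : part P' y.1 = partOf σ g ((σ y).1) := by
        rw [part_mkPart hXc hg hm y.1]
        congr 1
        rw [rep_yx y.2]
      rw [h1, mem_partOf]
      exact rep_self (mem_sdiff.mp (σ y).2).1
    · refine Subtype.ext (funext fun z => Subtype.ext ?_)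
      show xof P' hX' z.1 = (g z).1
      apply xof_unique (g z).2
      have h1 : part P' z.1 = partOf σ g ((g z).1) := by
        rw [part_mkPart hXc hg hm z.1]
        congr 1
        rw [rep_rest z.2.1 z.2.2]
      rw [h1, mem_partOf]
      exact rep_self (g z).2

end BP

namespace BP
open Finset
variable {t k : ℕ} {X Y : Finset (Fin t)}

theorem card_count (hXc : X.card = k) (hYc : Y.card = k) (hm : 2 ≤ t / k)
    (htk : t = k * (t / k)) :
    Fintype.card {P : BalancedPartition t k // trans X P ∧ trans Y P}
        * ((t / k - 1).factorial ^ ((X ∩ Y).card)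
          * (t / k - 2).factorial ^ (k - (X ∩ Y).card))
      = (k - (X ∩ Y).card).factorial * (t - k - (k - (X ∩ Y).card)).factorial := by
  classical
  have hj : (X ∩ Y).card = (X ∩ Y).card := rfl
  generalize hjj : (X ∩ Y).card = j at *
  have hjk : j ≤ k := by
    rw [← hjj, ← hXc]; exact card_le_card inter_subset_left
  have hYX : Fintype.card {a : Fin t // a ∈ Y \ X} = k - j := by
    rw [Fintype.card_coe]
    have := Finset.card_sdiff_add_card_inter Y X
    rw [inter_comm, hjj] at this
    omega
  have hXY : Fintype.card {a : Fin t // a ∈ X \ Y} = k - j := by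
    rw [Fintype.card_coe]
    have := Finset.card_sdiff_add_card_inter X Y
    rw [hjj] at this
    omega
  have hR : Nat.card {a : Fin t // a ∉ X ∧ a ∉ Y} = t - k - (k - j) := by
    have e : {a : Fin t // a ∉ X ∧ a ∉ Y} ≃ {a : Fin t // a ∈ univ \ (X ∪ Y)} :=
      Equiv.subtypeEquivRight (by intro a; simp [not_or])
    rw [Nat.card_congr e, Nat.card_eq_fintype_card, Fintype.card_coe,
      card_sdiff_of_subset (subset_univ _), card_univ, Fintype.card_fin]
    have := Finset.card_union_add_card_inter X Y
    rw [hXc, hYc, hjj] at this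
    omega
  have hfil1 : X.filter (fun a => a ∈ Y) = X ∩ Y := by
    ext a; simp [mem_inter]
  have hfil2 : X.filter (fun a => ¬a ∈ Y) = X \ Y := by
    ext a; simp [mem_sdiff]
  have hXYc : (X \ Y).card = k - j := by
    have := Finset.card_sdiff_add_card_inter X Y
    rw [hjj] at this
    omega
  have hsum : ∑ x : {a : Fin t // a ∈ X},
      (if x.1 ∈ Y then t / k - 1 else t / k - 2)
        = Nat.card {a : Fin t // a ∉ X ∧ a ∉ Y} := by
    rw [hR]
    rw [Finset.sum_coe_sort X (fun a => if a ∈ Y then t / k - 1 else t / k - 2)]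
    rw [Finset.sum_ite, Finset.sum_const, Finset.sum_const, smul_eq_mul, smul_eq_mul]
    rw [hfil1, hfil2, hjj, hXYc]
    obtain ⟨m', hm'⟩ : ∃ m', t / k = m' + 2 := ⟨t / k - 2, by omega⟩
    obtain ⟨d, hd⟩ : ∃ d, k = j + d := ⟨k - j, by omega⟩
    have hexp : (j + d) * (m' + 2) = j * m' + d * m' + 2 * j + 2 * d := by ring
    rw [hm'] at htk ⊢
    rw [hd] at htk ⊢
    have h5 : m' + 2 - 1 = m' + 1 := by omega
    have h6 : m' + 2 - 2 = m' := by omega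
    have h7 : j + d - j = d := by omega
    rw [h5, h6, h7]
    have hx1 : j * (m' + 1) = j * m' + j := by ring
    rw [hx1, htk, hexp]
    omega
  have hprod : ∏ x : {a : Fin t // a ∈ X},
      ((if x.1 ∈ Y then t / k - 1 else t / k - 2) : ℕ).factorial
      = (t / k - 1).factorial ^ j * (t / k - 2).factorial ^ (k - j) := by
    have heach : ∀ x : {a : Fin t // a ∈ X},
        (if x.1 ∈ Y then t / k - 1 else t / k - 2).factorial
          = if x.1 ∈ Y then (t / k - 1).factorial else (t / k - 2).factorial := by
      intro x; split_ifs <;> rfl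
    rw [Finset.prod_congr rfl (fun x _ => heach x)]
    rw [Finset.prod_coe_sort X
      (fun a => if a ∈ Y then (t / k - 1).factorial else (t / k - 2).factorial)]
    rw [Finset.prod_ite, Finset.prod_const, Finset.prod_const]
    rw [hfil1, hfil2, hXYc, hjj]
  -- assemble
  have h0 : Fintype.card {P : BalancedPartition t k // trans X P ∧ trans Y P}
      = Nat.card (({a : Fin t // a ∈ Y \ X} ≃ {a : Fin t // a ∈ X \ Y}) ×
        {g : {a : Fin t // a ∉ X ∧ a ∉ Y} → {a : Fin t // a ∈ X} //
          ∀ x, Nat.card {z // g z = x} = if x.1 ∈ Y then t / k - 1 else t / k - 2}) := by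
    rw [Nat.card_eq_fintype_card]
    exact Fintype.card_congr (mainEquiv hXc hYc hm)
  rw [h0, Nat.card_prod]
  have h1 : Nat.card ({a : Fin t // a ∈ Y \ X} ≃ {a : Fin t // a ∈ X \ Y})
      = (k - j).factorial := by
    rw [Nat.card_eq_fintype_card,
      Fintype.card_equiv (Fintype.equivOfCardEq (hYX.trans hXY.symm)), hYX]
  rw [h1, mul_assoc]
  have h9 : Nat.card {g : {a : Fin t // a ∉ X ∧ a ∉ Y} → {a : Fin t // a ∈ X} //
        ∀ x, Nat.card {z // g z = x} = if x.1 ∈ Y then t / k - 1 else t / k - 2}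
      * ((t / k - 1).factorial ^ j * (t / k - 2).factorial ^ (k - j))
      = (t - k - (k - j)).factorial := by
    have hfib := card_fiber_mul_prod'
      (fun x : {a : Fin t // a ∈ X} => if x.1 ∈ Y then t / k - 1 else t / k - 2) hsum
    rw [hR] at hfib
    rw [← hprod]
    exact hfib
  rw [h9]

end BP


/-- The Gram matrix `AᵀA` of the balanced-cut intersection matrix lies in the Bose–Mesner
algebra of the Johnson scheme `J(t,k)`, with coefficients
`α_i = i!(t-k-i)!/((t/k-1)!^{k-i} (t/k-2)!^i) ≥ 0`. -/
theorem gram_in_bose_mesner (k t : ℕ) (hk : 2 ≤ k) (ht : 2 * k ≤ t) (hdvd : k ∣ t) :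
    ∃ α : ℕ → ℝ, (∀ i ≤ k, 0 ≤ α i) ∧
      (∀ i ≤ k, α i = ((i.factorial : ℝ) * ((t - k - i).factorial : ℝ)) /
        (((t / k - 1).factorial : ℝ) ^ (k - i) * ((t / k - 2).factorial : ℝ) ^ i)) ∧
      (cutMatrix t k).transpose * cutMatrix t k
        = ∑ i ∈ Finset.range (k + 1), α i • johnsonW t k i := by
  classical
  have hkpos : 0 < k := by omega
  have hm2 : 2 ≤ t / k := (Nat.le_div_iff_mul_le hkpos).mpr ht
  have htk : t = k * (t / k) := (Nat.mul_div_cancel' hdvd).symm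
  refine ⟨fun i => ((i.factorial : ℝ) * ((t - k - i).factorial : ℝ)) /
      (((t / k - 1).factorial : ℝ) ^ (k - i) * ((t / k - 2).factorial : ℝ) ^ i),
    fun i _ => by positivity, fun i _ => rfl, ?_⟩
  funext X Y
  rw [Matrix.mul_apply]
  -- LHS entry equals the number of partitions transversal for both X and Y
  have hL : ∑ P : BalancedPartition t k,
      (cutMatrix t k).transpose X P * cutMatrix t k P Y
      = (Fintype.card {P : BalancedPartition t k // BP.trans X.1 P ∧ BP.trans Y.1 P} : ℝ) := by
    have h1 : ∀ P : BalancedPartition t k,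
        (cutMatrix t k).transpose X P * cutMatrix t k P Y
          = if BP.trans X.1 P ∧ BP.trans Y.1 P then (1 : ℝ) else 0 := by
      intro P
      rw [Matrix.transpose_apply]
      unfold cutMatrix
      rw [ite_zero_mul_ite_zero, mul_one]
      exact if_congr Iff.rfl rfl rfl
    rw [Finset.sum_congr rfl (fun P _ => h1 P), Finset.sum_boole, Fintype.card_subtype]
  rw [hL]
  -- RHS entry
  have hR : (∑ i ∈ Finset.range (k + 1),
      (((i.factorial : ℝ) * ((t - k - i).factorial : ℝ)) /
        (((t / k - 1).factorial : ℝ) ^ (k - i) * ((t / k - 2).factorial : ℝ) ^ i))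
          • johnsonW t k i) X Y
      = ∑ i ∈ Finset.range (k + 1),
        (((i.factorial : ℝ) * ((t - k - i).factorial : ℝ)) /
          (((t / k - 1).factorial : ℝ) ^ (k - i) * ((t / k - 2).factorial : ℝ) ^ i)) *
          (if (X.1 ∩ Y.1).card = k - i then 1 else 0) := by
    rw [Matrix.sum_apply]
    rfl
  rw [hR]
  set j := (X.1 ∩ Y.1).card with hj
  have hjk : j ≤ k := by
    have h4 := Finset.card_le_card (Finset.inter_subset_left : X.1 ∩ Y.1 ⊆ X.1)
    rw [X.2] at h4
    exact h4
  have hcond : ∀ i ∈ Finset.range (k + 1),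
      (((i.factorial : ℝ) * ((t - k - i).factorial : ℝ)) /
          (((t / k - 1).factorial : ℝ) ^ (k - i) * ((t / k - 2).factorial : ℝ) ^ i)) *
          (if j = k - i then 1 else 0)
        = if i = k - j then
            (((i.factorial : ℝ) * ((t - k - i).factorial : ℝ)) /
              (((t / k - 1).factorial : ℝ) ^ (k - i) * ((t / k - 2).factorial : ℝ) ^ i))
          else 0 := by
    intro i hi
    rw [Finset.mem_range] at hi
    have : (j = k - i) ↔ (i = k - j) := by omega
    rw [mul_ite, mul_one, mul_zero, if_congr this rfl rfl]
  rw [Finset.sum_congr rfl hcond, Finset.sum_ite_eq' (Finset.range (k + 1))]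
  rw [if_pos (Finset.mem_range.mpr (by omega))]
  -- identify the count
  have hcount := BP.card_count (X := X.1) (Y := Y.1) X.2 Y.2 hm2 htk
  rw [← hj] at hcount
  have hkj : k - (k - j) = j := by omega
  rw [hkj]
  have hden : (((t / k - 1).factorial : ℝ) ^ j * ((t / k - 2).factorial : ℝ) ^ (k - j)) ≠ 0 := by
    positivity
  rw [eq_div_iff hden]
  have hc := congrArg (Nat.cast (R := ℝ)) hcount
  push_cast at hc
  exact hc
end

section
/- Fix integers k ≥ 2 and t ≥ t_0(k) with k | t, and let v = (v_1,...,v_k) be positive integers with ∑ v_i = t, each v_i ≥ k, and v not the constant vector (t/k,...,t/k). Then the intersection matrix A_{t,k,v} (columns indexed by k-subsets of [t], rows by ordered partitions of [t] into parts of sizes v_1,...,v_k, entry 1 iff the k-set is a transversal of the partition) has rank C(t,k). -/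
open scoped Classical

/-- Ordered partitions of `[t]` into `k` parts of prescribed sizes `v 0, …, v (k-1)`. -/
def OrderedPartition (t k : ℕ) (v : Fin k → ℕ) : Type :=
  {P : Fin k → Finset (Fin t) // (∀ i, (P i).card = v i) ∧
    (∀ i j, i ≠ j → Disjoint (P i) (P j)) ∧
    Finset.univ.biUnion P = Finset.univ}

noncomputable instance (t k : ℕ) (v : Fin k → ℕ) : Fintype (OrderedPartition t k v) :=
  Subtype.fintype _

/-- The intersection matrix `A_{t,k,v}`: entry 1 iff the `k`-set is a transversal of the
ordered partition. -/
noncomputable def cutMatrixV (t k : ℕ) (v : Fin k → ℕ) :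
    Matrix (OrderedPartition t k v) {S : Finset (Fin t) // S.card = k} ℚ :=
  fun P X => if ∀ i, ((X : Finset (Fin t)) ∩ P.1 i).card = 1 then 1 else 0

open Finset

section Aux

variable {β : Type*} [Fintype β] [DecidableEq β]

/-- A permutation moving `u` to `u'` while fixing everything outside `w`. -/
lemma exists_perm_image_subset {u u' w : Finset β} (hu : u ⊆ w) (hu' : u' ⊆ w)
    (h : u.card = u'.card) :
    ∃ g : Equiv.Perm β, (∀ x, g x ∈ u' ↔ x ∈ u) ∧ (∀ x ∉ w, g x = x) ∧
      (∀ x, g x ∈ w ↔ x ∈ w) := by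
  classical
  set p : β → Prop := fun x => x ∈ w with hp
  have hcard : (u.subtype p).card = (u'.subtype p).card := by
    rw [Finset.card_subtype, Finset.card_subtype, Finset.filter_true_of_mem, 
      Finset.filter_true_of_mem, h]
    · exact fun x hx => hu' hx
    · exact fun x hx => hu hx
  let e : ↥(u.subtype p) ≃ ↥(u'.subtype p) := Finset.equivOfCardEq hcard
  -- turn it into an equiv of subtypes of `Subtype p`
  let e' : {y : Subtype p // (y : β) ∈ u} ≃ {y : Subtype p // (y : β) ∈ u'} := by
    refine (Equiv.subtypeEquiv (Equiv.refl _) ?_).trans <| e.trans 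
      (Equiv.subtypeEquiv (Equiv.refl _) ?_) <;> intro a <;> 
      simp [Finset.mem_subtype]
  let π : Equiv.Perm (Subtype p) := e'.extendSubtype
  have hw : ∀ x, Equiv.Perm.ofSubtype π x ∈ w ↔ x ∈ w := by
    intro x
    by_cases hxw : p x
    · rw [Equiv.Perm.ofSubtype_apply_of_mem π hxw]
      exact iff_of_true (π ⟨x, hxw⟩).2 hxw
    · rw [Equiv.Perm.ofSubtype_apply_of_not_mem π hxw]
  refine ⟨Equiv.Perm.ofSubtype π, fun x => ?_, fun x hx => 
    Equiv.Perm.ofSubtype_apply_of_not_mem π hx, hw⟩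
  by_cases hxw : p x
  · rw [Equiv.Perm.ofSubtype_apply_of_mem π hxw]
    by_cases hxu : x ∈ u
    · simp only [hxu, iff_true]
      exact e'.extendSubtype_mem ⟨x, hxw⟩ hxu
    · simp only [hxu, iff_false]
      exact e'.extendSubtype_not_mem ⟨x, hxw⟩ hxu
  · rw [Equiv.Perm.ofSubtype_apply_of_not_mem π hxw]
    constructor
    · intro hx; exact absurd (hu' hx) hxw
    · intro hx; exact absurd (hu hx) hxw


lemma exists_perm_stab {S₀ S S' : Finset β} (hcard : S.card = S'.card)
    (hm : (S ∩ S₀).card = (S' ∩ S₀).card) :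
    ∃ g : Equiv.Perm β, S.image g = S' ∧ S₀.image g = S₀ := by
  classical
  obtain ⟨g₁, hg₁, hg₁fix, hg₁w⟩ := exists_perm_image_subset (w := S₀)
    (Finset.inter_subset_right : S ∩ S₀ ⊆ S₀)
    (Finset.inter_subset_right : S' ∩ S₀ ⊆ S₀) hm
  have hsd : (S \ S₀).card = (S' \ S₀).card := by
    have h1 := Finset.card_sdiff_add_card_inter S S₀
    have h2 := Finset.card_sdiff_add_card_inter S' S₀
    omega
  obtain ⟨g₂, hg₂, hg₂fix, hg₂w⟩ := exists_perm_image_subset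
    (w := S₀ᶜ) (fun x hx => by simp [Finset.mem_sdiff] at hx ⊢; exact hx.2)
    (fun x hx => by simp [Finset.mem_sdiff] at hx ⊢; exact hx.2) hsd
  set g : Equiv.Perm β := g₁.trans g₂ with hg
  have hgS₀ : ∀ x, g x ∈ S₀ ↔ x ∈ S₀ := by
    intro x
    have h1 := hg₁w x
    have h2 := hg₂w (g₁ x)
    simp only [Finset.mem_compl] at h2
    simp only [hg, Equiv.trans_apply]
    tauto
  have hgS : ∀ x, g x ∈ S' ↔ x ∈ S := by
    intro x
    by_cases hx₀ : x ∈ S₀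
    · have hgx₀ : g₁ x ∈ S₀ := (hg₁w x).2 hx₀
      have : g₂ (g₁ x) = g₁ x := hg₂fix _ (by simpa using hgx₀)
      simp only [hg, Equiv.trans_apply, this]
      have := hg₁ x
      simp only [Finset.mem_inter] at this
      constructor
      · intro h; exact (this.1 ⟨h, hgx₀⟩).1
      · intro h; exact (this.2 ⟨h, hx₀⟩).1
    · have h1 : g₁ x = x := hg₁fix _ hx₀
      have h2 := hg₂ x
      have h3 : g₂ x ∉ S₀ := by
        have := hg₂w x
        simp only [Finset.mem_compl] at this
        tauto
      simp only [Finset.mem_sdiff] at h2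
      simp only [hg, Equiv.trans_apply, h1]
      constructor
      · intro h; exact (h2.1 ⟨h, h3⟩).1
      · intro h; exact (h2.2 ⟨h, hx₀⟩).1
  have key : ∀ (A A' : Finset β), A.card = A'.card → (∀ x, g x ∈ A' ↔ x ∈ A) →
      A.image g = A' := by
    intro A A' hc hmem
    apply Finset.eq_of_subset_of_card_le
    · intro y hy
      obtain ⟨x, hx, rfl⟩ := Finset.mem_image.1 hy
      exact (hmem x).2 hx
    · rw [Finset.card_image_of_injective _ g.injective, hc]
  exact ⟨g, key S S' hcard hgS, key S₀ S₀ rfl hgS₀⟩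

lemma exists_split {α : Type*} [DecidableEq α] : ∀ (n : ℕ) (b : Fin n → ℕ) (U : Finset α),
    U.card = ∑ i, b i → ∃ C : Fin n → Finset α,
      (∀ i, C i ⊆ U) ∧ (∀ i, (C i).card = b i) ∧
      (∀ i j, i ≠ j → Disjoint (C i) (C j)) ∧ Finset.univ.biUnion C = U := by
  intro n
  induction n with
  | zero =>
    intro b U hU
    refine ⟨fun _ => ∅, fun i => i.elim0, fun i => i.elim0, fun i => i.elim0, ?_⟩
    have : U.card = 0 := by simpa using hU
    simp only [Finset.univ_eq_empty, Finset.biUnion_empty]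
    exact (Finset.card_eq_zero.1 this).symm
  | succ n ih =>
    intro b U hU
    have hb0 : b 0 ≤ U.card := by
      rw [hU, Fin.sum_univ_succ]; exact Nat.le_add_right _ _
    obtain ⟨C₀, hC₀U, hC₀card⟩ := Finset.exists_subset_card_eq hb0
    have hUc : (U \ C₀).card = ∑ i : Fin n, b i.succ := by
      rw [Finset.card_sdiff_of_subset hC₀U, hC₀card, hU, Fin.sum_univ_succ]
      omega
    obtain ⟨C', hC'U, hC'card, hC'disj, hC'bu⟩ := ih (fun i => b i.succ) (U \ C₀) hUc
    have hdisj0 : ∀ j : Fin n, Disjoint C₀ (C' j) := by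
      intro j
      exact (Finset.disjoint_sdiff.mono_right (hC'U j)).symm.symm
    refine ⟨Fin.cons C₀ C', ?_, ?_, ?_, ?_⟩
    · intro i
      induction i using Fin.cases with
      | zero => simpa using hC₀U
      | succ j => simpa using (hC'U j).trans Finset.sdiff_subset
    · intro i
      induction i using Fin.cases with
      | zero => simpa using hC₀card
      | succ j => simpa using hC'card j
    · intro i j hij
      induction i using Fin.cases with
      | zero =>
        induction j using Fin.cases with
        | zero => exact absurd rfl hij
        | succ j' => simpa using hdisj0 j'
      | succ i' =>
        induction j using Fin.cases with
        | zero => simpa using (hdisj0 i').symm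
        | succ j' =>
          simp only [Fin.cons_succ]
          exact hC'disj i' j' (fun h => hij (by rw [h]))
    · have : (Finset.univ : Finset (Fin (n+1))).biUnion (Fin.cons C₀ C')
          = C₀ ∪ (Finset.univ : Finset (Fin n)).biUnion C' := by
        rw [Fin.univ_succ, Finset.cons_eq_insert, Finset.biUnion_insert]
        simp only [Fin.cons_zero]
        congr 1
        ext x
        simp only [Finset.mem_biUnion, Finset.mem_map, Finset.mem_univ, true_and]
        constructor
        · rintro ⟨i, ⟨j, rfl⟩, hx⟩
          exact ⟨j, by simpa [Fin.succEmb] using hx⟩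
        · rintro ⟨j, hx⟩
          exact ⟨j.succ, ⟨j, rfl⟩, by simpa [Fin.succEmb] using hx⟩
      rw [this, hC'bu, Finset.union_sdiff_of_subset hC₀U]

/-- Master counting lemma: the number of sets meeting each of pairwise disjoint
finsets `Q i` (for `i ∈ s`) in exactly one point, and contained in their union,
is the product of the sizes. -/
lemma count_transversals {α ι : Type*} [DecidableEq α] [DecidableEq ι] (Q : ι → Finset α) :
    ∀ s : Finset ι, (∀ i ∈ s, ∀ j ∈ s, i ≠ j → Disjoint (Q i) (Q j)) →
    ((s.biUnion Q).powerset.filter (fun S => ∀ i ∈ s, (S ∩ Q i).card = 1)).card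
      = ∏ i ∈ s, (Q i).card := by
  intro s
  induction s using Finset.induction_on with
  | empty => intro _; simp
  | @insert a s ha ih =>
    intro hdisj
    have hdisj' : ∀ i ∈ s, ∀ j ∈ s, i ≠ j → Disjoint (Q i) (Q j) := fun i hi j hj hij =>
      hdisj i (mem_insert_of_mem hi) j (mem_insert_of_mem hj) hij
    have hQa : ∀ i ∈ s, Disjoint (Q a) (Q i) := fun i hi =>
      hdisj a (mem_insert_self a s) i (mem_insert_of_mem hi) (fun h => ha (h ▸ hi))
    have hsub_disj : ∀ S' : Finset α, S' ⊆ s.biUnion Q → S' ∩ Q a = ∅ := by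
      intro S' hS'
      rw [← Finset.disjoint_iff_inter_eq_empty, Finset.disjoint_left]
      intro y hy hya
      obtain ⟨i, hi, hyi⟩ := Finset.mem_biUnion.1 (hS' hy)
      exact (Finset.disjoint_left.1 (hQa i hi)) hya hyi
    set T' := (s.biUnion Q).powerset.filter (fun S => ∀ i ∈ s, (S ∩ Q i).card = 1) with hT'
    set T := ((insert a s).biUnion Q).powerset.filter
      (fun S => ∀ i ∈ insert a s, (S ∩ Q i).card = 1) with hT
    have hins_sdiff : ∀ (x : α) (S' : Finset α), x ∈ Q a → S' ∩ Q a = ∅ →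
        (insert x S') \ Q a = S' := by
      intro x S' hx hS'
      ext y
      simp only [Finset.mem_sdiff, Finset.mem_insert]
      constructor
      · rintro ⟨(rfl | hy), hyQ⟩
        · exact absurd hx hyQ
        · exact hy
      · intro hy
        refine ⟨Or.inr hy, fun hyQ => ?_⟩
        have : y ∈ S' ∩ Q a := Finset.mem_inter.2 ⟨hy, hyQ⟩
        rw [hS'] at this
        exact absurd this (Finset.notMem_empty y)
    have hins_inter : ∀ (x : α) (S' : Finset α), x ∈ Q a → S' ∩ Q a = ∅ →
        (insert x S') ∩ Q a = {x} := by
      intro x S' hx hS'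
      rw [Finset.insert_inter_of_mem hx, hS']
      rfl
    have key : (Q a ×ˢ T').card = T.card := by
      apply Finset.card_bij (i := fun p _ => insert p.1 p.2)
      · rintro ⟨x, S'⟩ hp
        rw [Finset.mem_product] at hp
        obtain ⟨hx, hS'⟩ := hp
        rw [hT', Finset.mem_filter, Finset.mem_powerset] at hS'
        obtain ⟨hS'sub, hS'cond⟩ := hS'
        have hSQa : S' ∩ Q a = ∅ := hsub_disj S' hS'sub
        rw [hT, Finset.mem_filter, Finset.mem_powerset]
        constructor
        · apply Finset.insert_subset
          · exact Finset.mem_biUnion.2 ⟨a, mem_insert_self a s, hx⟩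
          · exact hS'sub.trans (Finset.biUnion_subset_biUnion_of_subset_left Q
              (Finset.subset_insert a s))
        · intro i hi
          rcases Finset.mem_insert.1 hi with rfl | his
          · rw [hins_inter x S' hx hSQa]
            exact Finset.card_singleton x
          · rw [Finset.insert_inter_of_notMem
              (Finset.disjoint_left.1 (hQa i his) hx)]
            exact hS'cond i his
      · rintro ⟨x, S'⟩ hp ⟨y, T''⟩ hq heq
        rw [Finset.mem_product] at hp hq
        obtain ⟨hx, hS'⟩ := hp
        obtain ⟨hy, hT''⟩ := hq
        rw [hT', Finset.mem_filter, Finset.mem_powerset] at hS' hT''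
        have hSQa : S' ∩ Q a = ∅ := hsub_disj S' hS'.1
        have hTQa : T'' ∩ Q a = ∅ := hsub_disj T'' hT''.1
        have heq0 : insert x S' = insert y T'' := by simpa using heq
        have hxy : ({x} : Finset α) = {y} := by
          rw [← hins_inter x S' hx hSQa, ← hins_inter y T'' hy hTQa, heq0]
        have hxy' : x = y := Finset.singleton_injective hxy
        have heq' : insert x S' = insert y T'' := by simpa using heq
        have hST : S' = T'' := by
          rw [← hins_sdiff x S' hx hSQa, ← hins_sdiff y T'' hy hTQa, heq']
        rw [Prod.mk.injEq]
        exact ⟨hxy', hST⟩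
      · intro S hS
        rw [hT, Finset.mem_filter, Finset.mem_powerset] at hS
        obtain ⟨hSsub, hScond⟩ := hS
        obtain ⟨x, hxeq⟩ := Finset.card_eq_one.1 (hScond a (mem_insert_self a s))
        have hxQa : x ∈ Q a := by
          have : x ∈ S ∩ Q a := hxeq ▸ Finset.mem_singleton_self x
          exact (Finset.mem_inter.1 this).2
        have hxS : x ∈ S := by
          have : x ∈ S ∩ Q a := hxeq ▸ Finset.mem_singleton_self x
          exact (Finset.mem_inter.1 this).1
        refine ⟨(x, S \ Q a), ?_, ?_⟩
        · rw [Finset.mem_product]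
          refine ⟨hxQa, ?_⟩
          rw [hT', Finset.mem_filter, Finset.mem_powerset]
          constructor
          · intro y hy
            rw [Finset.mem_sdiff] at hy
            obtain ⟨i, hi, hyi⟩ := Finset.mem_biUnion.1 (hSsub hy.1)
            rcases Finset.mem_insert.1 hi with rfl | his
            · exact absurd hyi hy.2
            · exact Finset.mem_biUnion.2 ⟨i, his, hyi⟩
          · intro i hi
            have : (S \ Q a) ∩ Q i = S ∩ Q i := by
              ext y
              simp only [Finset.mem_inter, Finset.mem_sdiff]
              constructor
              · rintro ⟨⟨hy, _⟩, hyi⟩; exact ⟨hy, hyi⟩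
              · rintro ⟨hy, hyi⟩
                exact ⟨⟨hy, fun hya => (Finset.disjoint_left.1 (hQa i hi)) hya hyi⟩, hyi⟩
            rw [this]
            exact hScond i (mem_insert_of_mem hi)
        · ext y
          simp only [Finset.mem_insert, Finset.mem_sdiff]
          constructor
          · rintro (rfl | ⟨hy, _⟩)
            · exact hxS
            · exact hy
          · intro hy
            by_cases hyQ : y ∈ Q a
            · left
              have : y ∈ S ∩ Q a := Finset.mem_inter.2 ⟨hy, hyQ⟩
              rw [hxeq] at this
              exact Finset.mem_singleton.1 this
            · right; exact ⟨hy, hyQ⟩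
    rw [← key, Finset.card_product, ih hdisj', Finset.prod_insert ha]


private lemma perm_image_image {t : ℕ} (g : Equiv.Perm (Fin t)) (A : Finset (Fin t)) :
    (A.image g).image (⇑g⁻¹) = A := by
  rw [Finset.image_image]
  have h : (⇑g⁻¹ ∘ ⇑g) = id := by
    funext x; simp
  rw [h, Finset.image_id]

private def smapE {t : ℕ} (k : ℕ) (g : Equiv.Perm (Fin t)) :
    {S : Finset (Fin t) // S.card = k} ≃ {S : Finset (Fin t) // S.card = k} where
  toFun S := ⟨S.1.image g, by
    rw [Finset.card_image_of_injective _ g.injective]; exact S.2⟩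
  invFun S := ⟨S.1.image (⇑g⁻¹), by
    rw [Finset.card_image_of_injective _ (g⁻¹ : Equiv.Perm (Fin t)).injective]; exact S.2⟩
  left_inv S := Subtype.ext (perm_image_image g S.1)
  right_inv S := Subtype.ext (by
    have h := perm_image_image g⁻¹ S.1
    simpa using h)

private def ppmap {t k : ℕ} {v : Fin k → ℕ} (g : Equiv.Perm (Fin t))
    (P : OrderedPartition t k v) : OrderedPartition t k v :=
  ⟨fun i => (P.1 i).image g, by
    obtain ⟨hcard, hdisj, hcover⟩ := P.2
    refine ⟨fun i => by rw [Finset.card_image_of_injective _ g.injective]; exact hcard i,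
      fun i j hij => ?_, ?_⟩
    · exact (Finset.disjoint_image g.injective).2 (hdisj i j hij)
    · ext x
      simp only [Finset.mem_biUnion, Finset.mem_univ, true_and, Finset.mem_image, iff_true]
      have hx : g⁻¹ x ∈ Finset.univ.biUnion P.1 := by
        rw [hcover]; exact Finset.mem_univ _
      obtain ⟨i, _, hi⟩ := Finset.mem_biUnion.1 hx
      exact ⟨i, g⁻¹ x, hi, by simp⟩⟩

private lemma image_inter_card {t : ℕ} (g : Equiv.Perm (Fin t)) (A B : Finset (Fin t)) :
    (A.image g ∩ B.image g).card = (A ∩ B).card := by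
  rw [← Finset.image_inter _ _ g.injective,
    Finset.card_image_of_injective _ g.injective]

private lemma image_mul {t : ℕ} (g g₀ : Equiv.Perm (Fin t)) (A : Finset (Fin t)) :
    A.image (⇑(g * g₀)) = (A.image (⇑g₀)).image (⇑g) := by
  rw [Finset.image_image]
  rfl

private lemma smapE_mul {t k : ℕ} (g g₀ : Equiv.Perm (Fin t))
    (S : {S : Finset (Fin t) // S.card = k}) :
    smapE k g (smapE k g₀ S) = smapE k (g * g₀) S :=
  Subtype.ext (image_mul g g₀ S.1).symm

private lemma smapE_inter_card {t k : ℕ} (g : Equiv.Perm (Fin t))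
    (S : {S : Finset (Fin t) // S.card = k}) (A : Finset (Fin t)) :
    ((smapE k g S).1 ∩ A.image g).card = (S.1 ∩ A).card :=
  image_inter_card g S.1 A

private lemma smapE_one {t k : ℕ} (S : {S : Finset (Fin t) // S.card = k}) :
    smapE k (1 : Equiv.Perm (Fin t)) S = S :=
  Subtype.ext (by simp [smapE])

private lemma main_equation {t k : ℕ} {v : Fin k → ℕ}
    (c : {S : Finset (Fin t) // S.card = k} → ℚ)
    (H : ∀ P : OrderedPartition t k v, ∑ S : {S : Finset (Fin t) // S.card = k},
      (if ∀ i, ((S : Finset (Fin t)) ∩ P.1 i).card = 1 then (1:ℚ) else 0) * c S = 0)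
    (S₀ : {S : Finset (Fin t) // S.card = k})
    (P : OrderedPartition t k v) :
    ∑ m ∈ Finset.range (k+1),
      ((Finset.univ.filter (fun S : {S : Finset (Fin t) // S.card = k} =>
          (∀ i, (S.1 ∩ P.1 i).card = 1) ∧ (S.1 ∩ S₀.1).card = m)).card : ℚ) *
        ((∑ S : {S : Finset (Fin t) // S.card = k},
            if (S.1 ∩ S₀.1).card = m then c S else 0) /
          ((Finset.univ.filter (fun S : {S : Finset (Fin t) // S.card = k} =>
            (S.1 ∩ S₀.1).card = m)).card : ℚ)) = 0 := by
  classical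
  set stab : Finset (Equiv.Perm (Fin t)) :=
    Finset.univ.filter (fun g => S₀.1.image g = S₀.1) with hstab
  have hstab_mem : ∀ g, g ∈ stab ↔ S₀.1.image g = S₀.1 := by
    intro g; simp [hstab]
  have hone : (1 : Equiv.Perm (Fin t)) ∈ stab := by
    rw [hstab_mem]
    simp [Finset.image_id]
  have hstab_card : (0 : ℚ) < stab.card := by
    have h : 0 < stab.card := Finset.card_pos.2 ⟨1, hone⟩
    exact_mod_cast h
  have hmul_mem : ∀ g g₀, g ∈ stab → g₀ ∈ stab → g * g₀ ∈ stab := by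
    intro g g₀ hg hg₀
    rw [hstab_mem] at *
    rw [image_mul, hg₀, hg]
  have hinv_mem : ∀ g, g ∈ stab → g⁻¹ ∈ stab := by
    intro g hg
    rw [hstab_mem] at *
    conv_lhs => rw [← hg]
    exact perm_image_image g S₀.1
  set mS : {S : Finset (Fin t) // S.card = k} → ℕ := fun S => (S.1 ∩ S₀.1).card with hmS
  have hm_inv : ∀ g ∈ stab, ∀ S : {S : Finset (Fin t) // S.card = k},
      mS (smapE k g S) = mS S := by
    intro g hg S
    rw [hstab_mem] at hg
    have h := smapE_inter_card (k := k) g S S₀.1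
    rw [hg] at h
    exact h
  have htrans_inv : ∀ (g : Equiv.Perm (Fin t)) (S : {S : Finset (Fin t) // S.card = k}),
      (∀ i, ((smapE k g S).1 ∩ (ppmap g P).1 i).card = 1) ↔
      (∀ i, (S.1 ∩ P.1 i).card = 1) := by
    intro g S
    constructor <;> intro h i
    · have h2 := smapE_inter_card (k := k) g S (P.1 i)
      rw [show ((P.1 i).image g) = (ppmap g P).1 i from rfl] at h2
      rw [← h2]; exact h i
    · have h2 := smapE_inter_card (k := k) g S (P.1 i)
      rw [show ((P.1 i).image g) = (ppmap g P).1 i from rfl] at h2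
      rw [h2]; exact h i
  have step0 : ∀ g ∈ stab, ∑ S : {S : Finset (Fin t) // S.card = k},
      (if ∀ i, (S.1 ∩ P.1 i).card = 1 then (1:ℚ) else 0) * c (smapE k g S) = 0 := by
    intro g hg
    have h1 := H (ppmap g P)
    have h2 : ∑ S : {S : Finset (Fin t) // S.card = k},
        (if ∀ i, ((smapE k g S).1 ∩ (ppmap g P).1 i).card = 1
          then (1:ℚ) else 0) * c (smapE k g S)
        = ∑ S : {S : Finset (Fin t) // S.card = k},
          (if ∀ i, (S.1 ∩ (ppmap g P).1 i).card = 1 then (1:ℚ) else 0) * c S :=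
      Equiv.sum_comp (smapE k g)
        (fun S => (if ∀ i, (S.1 ∩ (ppmap g P).1 i).card = 1 then (1:ℚ) else 0) * c S)
    have h3 : ∑ S : {S : Finset (Fin t) // S.card = k},
        (if ∀ i, (S.1 ∩ P.1 i).card = 1 then (1:ℚ) else 0) * c (smapE k g S)
        = ∑ S : {S : Finset (Fin t) // S.card = k},
          (if ∀ i, ((smapE k g S).1 ∩ (ppmap g P).1 i).card = 1
            then (1:ℚ) else 0) * c (smapE k g S) :=
      Finset.sum_congr rfl fun S _ =>
        congrArg (· * c (smapE k g S)) (if_congr (htrans_inv g S).symm rfl rfl)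
    rw [h3, h2]
    exact h1
  set Cc : {S : Finset (Fin t) // S.card = k} → ℚ :=
    fun S => ∑ g ∈ stab, c (smapE k g S) with hCc
  have step2 : ∑ S : {S : Finset (Fin t) // S.card = k},
      (if ∀ i, (S.1 ∩ P.1 i).card = 1 then (1:ℚ) else 0) * Cc S = 0 := by
    have h : ∑ S : {S : Finset (Fin t) // S.card = k},
        (if ∀ i, (S.1 ∩ P.1 i).card = 1 then (1:ℚ) else 0) * Cc S
        = ∑ g ∈ stab, ∑ S : {S : Finset (Fin t) // S.card = k},
          (if ∀ i, (S.1 ∩ P.1 i).card = 1 then (1:ℚ) else 0) * c (smapE k g S) := by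
      rw [Finset.sum_comm]
      apply Finset.sum_congr rfl
      intro S _
      rw [hCc, Finset.mul_sum]
    rw [h]
    exact Finset.sum_eq_zero step0
  have step4 : ∀ S S' : {S : Finset (Fin t) // S.card = k}, mS S = mS S' → Cc S = Cc S' := by
    intro S S' hmm
    obtain ⟨g₀, hg₀S, hg₀S₀⟩ := exists_perm_stab (S.2.trans S'.2.symm) hmm
    have hg₀ : g₀ ∈ stab := (hstab_mem g₀).2 hg₀S₀
    have hS' : S' = smapE k g₀ S := Subtype.ext hg₀S.symm
    rw [hCc]
    simp only
    apply Finset.sum_nbij' (i := fun g => g * g₀⁻¹) (j := fun g => g * g₀)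
    · intro g hg; exact hmul_mem g g₀⁻¹ hg (hinv_mem g₀ hg₀)
    · intro g hg; exact hmul_mem g g₀ hg hg₀
    · intro g _; group
    · intro g _; group
    · intro g _
      rw [hS', smapE_mul]
      have hgg : g * g₀⁻¹ * g₀ = g := by group
      rw [hgg]
  have step56 : ∀ S : {S : Finset (Fin t) // S.card = k}, Cc S = (stab.card : ℚ) *
      ((∑ S' : {S : Finset (Fin t) // S.card = k}, if mS S' = mS S then c S' else 0) /
        ((Finset.univ.filter (fun S' : {S : Finset (Fin t) // S.card = k} =>
          mS S' = mS S)).card : ℚ)) := by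
    intro S
    set O : Finset {S : Finset (Fin t) // S.card = k} :=
      Finset.univ.filter (fun S' => mS S' = mS S) with hO
    have hSO : S ∈ O := by simp [hO]
    have hOcard : (0:ℚ) < (O.card : ℚ) := by
      exact_mod_cast Finset.card_pos.2 ⟨S, hSO⟩
    have hconst : ∑ S' ∈ O, Cc S' = (O.card : ℚ) * Cc S := by
      rw [Finset.sum_congr rfl (fun S' hS' => step4 S' S (by
        simp only [hO, Finset.mem_filter] at hS'; exact hS'.2))]
      rw [Finset.sum_const, nsmul_eq_mul]
    have hswap : ∑ S' ∈ O, Cc S' = (stab.card : ℚ) * ∑ S' ∈ O, c S' := by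
      rw [hCc]
      simp only
      rw [Finset.sum_comm]
      rw [Finset.sum_congr rfl (fun g hg => ?_), Finset.sum_const, nsmul_eq_mul]
      apply Finset.sum_nbij' (i := fun S' => smapE k g S') (j := fun S' => smapE k g⁻¹ S')
      · intro S' hS'
        simp only [hO, Finset.mem_filter, Finset.mem_univ, true_and] at *
        rw [hm_inv g hg S']
        exact hS'
      · intro S' hS'
        simp only [hO, Finset.mem_filter, Finset.mem_univ, true_and] at *
        rw [hm_inv g⁻¹ (hinv_mem g hg) S']
        exact hS'
      · intro S' _
        rw [smapE_mul, inv_mul_cancel, smapE_one]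
      · intro S' _
        rw [smapE_mul, mul_inv_cancel, smapE_one]
      · intro S' _
        rfl
    have hγ : ∑ S' ∈ O, c S'
        = ∑ S' : {S : Finset (Fin t) // S.card = k}, if mS S' = mS S then c S' else 0 := by
      rw [hO, Finset.sum_filter]
    rw [hγ] at hswap
    have hO' : Cc S = ((O.card : ℚ) * Cc S) / (O.card : ℚ) := by
      field_simp
    rw [hO', ← hconst, hswap, mul_div_assoc]
  have step7 : ∑ S : {S : Finset (Fin t) // S.card = k},
      (if ∀ i, (S.1 ∩ P.1 i).card = 1 then (1:ℚ) else 0) *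
      ((∑ S' : {S : Finset (Fin t) // S.card = k}, if mS S' = mS S then c S' else 0) /
        ((Finset.univ.filter (fun S' : {S : Finset (Fin t) // S.card = k} =>
          mS S' = mS S)).card : ℚ)) = 0 := by
    have h : ∑ S : {S : Finset (Fin t) // S.card = k},
        (if ∀ i, (S.1 ∩ P.1 i).card = 1 then (1:ℚ) else 0) *
        ((stab.card : ℚ) * ((∑ S' : {S : Finset (Fin t) // S.card = k},
            if mS S' = mS S then c S' else 0) /
          ((Finset.univ.filter (fun S' : {S : Finset (Fin t) // S.card = k} =>
            mS S' = mS S)).card : ℚ))) = 0 := by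
      have he : ∑ S : {S : Finset (Fin t) // S.card = k},
          (if ∀ i, (S.1 ∩ P.1 i).card = 1 then (1:ℚ) else 0) *
          ((stab.card : ℚ) * ((∑ S' : {S : Finset (Fin t) // S.card = k},
              if mS S' = mS S then c S' else 0) /
            ((Finset.univ.filter (fun S' : {S : Finset (Fin t) // S.card = k} =>
              mS S' = mS S)).card : ℚ)))
          = ∑ S : {S : Finset (Fin t) // S.card = k},
            (if ∀ i, (S.1 ∩ P.1 i).card = 1 then (1:ℚ) else 0) * Cc S :=
        Finset.sum_congr rfl (fun S _ => by rw [← step56 S])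
      rw [he]
      exact step2
    have h2 : (stab.card : ℚ) * (∑ S : {S : Finset (Fin t) // S.card = k},
        (if ∀ i, (S.1 ∩ P.1 i).card = 1 then (1:ℚ) else 0) *
        ((∑ S' : {S : Finset (Fin t) // S.card = k}, if mS S' = mS S then c S' else 0) /
          ((Finset.univ.filter (fun S' : {S : Finset (Fin t) // S.card = k} =>
            mS S' = mS S)).card : ℚ))) = 0 := by
      calc (stab.card : ℚ) * (∑ S : {S : Finset (Fin t) // S.card = k},
          (if ∀ i, (S.1 ∩ P.1 i).card = 1 then (1:ℚ) else 0) *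
          ((∑ S' : {S : Finset (Fin t) // S.card = k}, if mS S' = mS S then c S' else 0) /
            ((Finset.univ.filter (fun S' : {S : Finset (Fin t) // S.card = k} =>
              mS S' = mS S)).card : ℚ)))
          = ∑ S : {S : Finset (Fin t) // S.card = k},
            (if ∀ i, (S.1 ∩ P.1 i).card = 1 then (1:ℚ) else 0) *
            ((stab.card : ℚ) * ((∑ S' : {S : Finset (Fin t) // S.card = k},
                if mS S' = mS S then c S' else 0) /
              ((Finset.univ.filter (fun S' : {S : Finset (Fin t) // S.card = k} =>
                mS S' = mS S)).card : ℚ))) := by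
            rw [Finset.mul_sum]
            exact Finset.sum_congr rfl (fun S _ => by ring)
      _ = 0 := h
    exact (mul_eq_zero.1 h2).resolve_left (ne_of_gt hstab_card)
  have happ : ∀ S : {S : Finset (Fin t) // S.card = k}, mS S ∈ Finset.range (k+1) := by
    intro S
    rw [Finset.mem_range, Nat.lt_succ_iff, hmS]
    calc (S.1 ∩ S₀.1).card ≤ S.1.card := Finset.card_le_card Finset.inter_subset_left
    _ = k := S.2
  have step8 : ∑ S : {S : Finset (Fin t) // S.card = k},
      (if ∀ i, (S.1 ∩ P.1 i).card = 1 then (1:ℚ) else 0) *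
      ((∑ S' : {S : Finset (Fin t) // S.card = k}, if mS S' = mS S then c S' else 0) /
        ((Finset.univ.filter (fun S' : {S : Finset (Fin t) // S.card = k} =>
          mS S' = mS S)).card : ℚ))
      = ∑ m ∈ Finset.range (k+1),
        ((Finset.univ.filter (fun S : {S : Finset (Fin t) // S.card = k} =>
          (∀ i, (S.1 ∩ P.1 i).card = 1) ∧ mS S = m)).card : ℚ) *
        ((∑ S' : {S : Finset (Fin t) // S.card = k}, if mS S' = m then c S' else 0) /
          ((Finset.univ.filter (fun S' : {S : Finset (Fin t) // S.card = k} =>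
            mS S' = m)).card : ℚ)) := by
    simp only [boole_mul]
    rw [← Finset.sum_filter]
    rw [← Finset.sum_fiberwise_of_maps_to (g := mS) (t := Finset.range (k+1))
      (fun S _ => happ S)]
    apply Finset.sum_congr rfl
    intro m hm
    rw [Finset.filter_filter]
    have hc : ∑ S ∈ Finset.univ.filter (fun S : {S : Finset (Fin t) // S.card = k} =>
        (∀ i, (S.1 ∩ P.1 i).card = 1) ∧ mS S = m),
        ((∑ S' : {S : Finset (Fin t) // S.card = k}, if mS S' = mS S then c S' else 0) /
          ((Finset.univ.filter (fun S' : {S : Finset (Fin t) // S.card = k} =>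
            mS S' = mS S)).card : ℚ))
        = ∑ _S ∈ Finset.univ.filter (fun S : {S : Finset (Fin t) // S.card = k} =>
          (∀ i, (S.1 ∩ P.1 i).card = 1) ∧ mS S = m),
          ((∑ S' : {S : Finset (Fin t) // S.card = k}, if mS S' = m then c S' else 0) /
            ((Finset.univ.filter (fun S' : {S : Finset (Fin t) // S.card = k} =>
              mS S' = m)).card : ℚ)) := by
      apply Finset.sum_congr rfl
      intro S hS
      rw [Finset.mem_filter] at hS
      rw [hS.2.2]
    rw [hc, Finset.sum_const, nsmul_eq_mul]
  rw [← step8]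
  exact step7

private lemma all_eq_one_le {ι : Type*} [DecidableEq ι] (I : Finset ι) (f : ι → ℕ)
    (hle : ∀ i ∈ I, f i ≤ 1) (hsum : ∑ i ∈ I, f i = I.card) : ∀ i ∈ I, f i = 1 := by
  intro i hi
  by_contra hne
  have hfi : f i = 0 := by have := hle i hi; omega
  have h1 : ∑ j ∈ I.erase i, f j ≤ (I.erase i).card := by
    calc ∑ j ∈ I.erase i, f j ≤ ∑ _j ∈ I.erase i, 1 :=
          Finset.sum_le_sum (fun j hj => hle j (Finset.mem_of_mem_erase hj))
      _ = (I.erase i).card := by simp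
  have h2 : f i + ∑ j ∈ I.erase i, f j = I.card := by
    rw [Finset.add_sum_erase I f hi, hsum]
  have h3 : (I.erase i).card = I.card - 1 := Finset.card_erase_of_mem hi
  have h4 : 0 < I.card := Finset.card_pos.2 ⟨i, hi⟩
  omega

private lemma all_eq_one_ge {ι : Type*} [DecidableEq ι] (I : Finset ι) (f : ι → ℕ)
    (hge : ∀ i ∈ I, 1 ≤ f i) (hsum : ∑ i ∈ I, f i = I.card) : ∀ i ∈ I, f i = 1 := by
  intro i hi
  by_contra hne
  have hfi : 2 ≤ f i := by have := hge i hi; omega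
  have h1 : (I.erase i).card ≤ ∑ j ∈ I.erase i, f j := by
    calc (I.erase i).card = ∑ _j ∈ I.erase i, 1 := by simp
      _ ≤ ∑ j ∈ I.erase i, f j :=
          Finset.sum_le_sum (fun j hj => hge j (Finset.mem_of_mem_erase hj))
  have h2 : f i + ∑ j ∈ I.erase i, f j = I.card := by
    rw [Finset.add_sum_erase I f hi, hsum]
  have h3 : (I.erase i).card = I.card - 1 := Finset.card_erase_of_mem hi
  have h4 : 0 < I.card := Finset.card_pos.2 ⟨i, hi⟩
  omega

private lemma card_split {t k : ℕ} (Pp : Fin k → Finset (Fin t))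
    (hdisj : ∀ i j, i ≠ j → Disjoint (Pp i) (Pp j))
    (hcover : Finset.univ.biUnion Pp = Finset.univ) (A : Finset (Fin t)) :
    A.card = ∑ i, (A ∩ Pp i).card := by
  have h1 : A = Finset.univ.biUnion (fun i => A ∩ Pp i) := by
    ext x
    simp only [Finset.mem_biUnion, Finset.mem_inter, Finset.mem_univ, true_and]
    constructor
    · intro hx
      have hx2 : x ∈ Finset.univ.biUnion Pp := by rw [hcover]; exact Finset.mem_univ x
      obtain ⟨i, _, hi⟩ := Finset.mem_biUnion.1 hx2
      exact ⟨i, hx, hi⟩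
    · rintro ⟨i, hx, _⟩; exact hx
  conv_lhs => rw [h1]
  exact Finset.card_biUnion (fun i _ j _ hij =>
    Finset.disjoint_of_subset_left Finset.inter_subset_right
      ((hdisj i j hij).mono_right Finset.inter_subset_right))

private lemma card_filter_transversal {t k : ℕ} (Q : Fin k → Finset (Fin t))
    (hdisj : ∀ i j, i ≠ j → Disjoint (Q i) (Q j)) :
    (Finset.univ.filter (fun S : {S : Finset (Fin t) // S.card = k} =>
      ∀ i, (S.1 ∩ Q i).card = 1)).card = ∏ i, (Q i).card := by
  classical
  have hdisj2 : ∀ (S : Finset (Fin t)), ∀ i ∈ (Finset.univ : Finset (Fin k)),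
      ∀ j ∈ (Finset.univ : Finset (Fin k)), i ≠ j →
      Disjoint (S ∩ Q i) (S ∩ Q j) := fun S i _ j _ hij =>
    Finset.disjoint_of_subset_left Finset.inter_subset_right
      ((hdisj i j hij).mono_right Finset.inter_subset_right)
  have hbu : ∀ S : Finset (Fin t), S ∩ Finset.univ.biUnion Q
      = Finset.univ.biUnion (fun i => S ∩ Q i) := by
    intro S
    ext x
    simp only [Finset.mem_inter, Finset.mem_biUnion, Finset.mem_univ, true_and]
    tauto
  have hbij : (Finset.univ.filter (fun S : {S : Finset (Fin t) // S.card = k} =>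
      ∀ i, (S.1 ∩ Q i).card = 1)).card
      = ((Finset.univ.biUnion Q).powerset.filter
          (fun S => ∀ i ∈ (Finset.univ : Finset (Fin k)), (S ∩ Q i).card = 1)).card := by
    apply Finset.card_bij (i := fun S _ => S.1)
    · intro S hS
      rw [Finset.mem_filter] at hS
      rw [Finset.mem_filter, Finset.mem_powerset]
      have hcond := hS.2
      have hsub : S.1 ⊆ Finset.univ.biUnion Q := by
        have h3 : (S.1 ∩ Finset.univ.biUnion Q).card = k := by
          rw [hbu S.1, Finset.card_biUnion (hdisj2 S.1)]
          simp only [hcond]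
          simp [Finset.card_univ]
        have h4 : S.1 ∩ Finset.univ.biUnion Q = S.1 :=
          Finset.eq_of_subset_of_card_le Finset.inter_subset_left (by rw [h3, S.2])
        intro x hx
        have hx2 : x ∈ S.1 ∩ Finset.univ.biUnion Q := h4.symm ▸ hx
        exact (Finset.mem_inter.1 hx2).2
      exact ⟨hsub, fun i _ => hcond i⟩
    · intro S _ S' _ h
      exact Subtype.ext h
    · intro S hS
      rw [Finset.mem_filter, Finset.mem_powerset] at hS
      have hcard : S.card = k := by
        have h2 : S ∩ Finset.univ.biUnion Q = S := Finset.inter_eq_left.2 hS.1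
        have h3 : S.card = ∑ i, (S ∩ Q i).card := by
          conv_lhs => rw [← h2, hbu S]
          exact Finset.card_biUnion (hdisj2 S)
        rw [h3]
        have h4 : ∀ i : Fin k, (S ∩ Q i).card = 1 := fun i => hS.2 i (Finset.mem_univ i)
        simp only [h4]
        simp [Finset.card_univ]
      refine ⟨⟨S, hcard⟩, ?_, rfl⟩
      rw [Finset.mem_filter]
      exact ⟨Finset.mem_univ _, fun i => hS.2 i (Finset.mem_univ i)⟩
  rw [hbij]
  convert count_transversals Q Finset.univ (fun i _ j _ hij => hdisj i j hij) using 2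
  congr!

private lemma inter_ac {t : ℕ} (S P₀ S₀ : Finset (Fin t)) :
    S ∩ (P₀ ∩ S₀) = (S ∩ S₀) ∩ P₀ := by
  ext x
  simp only [Finset.mem_inter]
  tauto

/-- Core: if `S` meets each `Q i ⊆ P i` once, then `S` is a transversal of `P`. -/
private lemma trans_of_sub {t k : ℕ} {v : Fin k → ℕ} (P : OrderedPartition t k v)
    (Q : Fin k → Finset (Fin t)) (hQ : ∀ i, Q i ⊆ P.1 i)
    (S : Finset (Fin t)) (hS : S.card = k) (h1 : ∀ i, (S ∩ Q i).card = 1) :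
    ∀ i, (S ∩ P.1 i).card = 1 := by
  have hsplit := card_split P.1 P.2.2.1 P.2.2.2 S
  have hge : ∀ i : Fin k, 1 ≤ (S ∩ P.1 i).card := by
    intro i
    have h2 : (S ∩ Q i).card ≤ (S ∩ P.1 i).card :=
      Finset.card_le_card (Finset.inter_subset_inter_left (hQ i))
    have h3 := h1 i
    omega
  intro i
  exact all_eq_one_ge Finset.univ (fun j => (S ∩ P.1 j).card)
    (fun j _ => hge j)
    (by rw [← hsplit, hS, Finset.card_univ, Fintype.card_fin]) i (Finset.mem_univ i)

private lemma exists_partition_profile {t k : ℕ} (v a : Fin k → ℕ) (S₀ : Finset (Fin t))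
    (hS₀ : S₀.card = k) (hsum : ∑ i, v i = t) (hasum : ∑ i, a i = k)
    (hav : ∀ i, a i ≤ v i) :
    ∃ P : OrderedPartition t k v, ∀ i, (P.1 i ∩ S₀).card = a i := by
  classical
  obtain ⟨A, hAsub, hAcard, hAdisj, hAcover⟩ :=
    exists_split k a S₀ (by rw [hS₀, hasum])
  have hvsum : (S₀ᶜ : Finset (Fin t)).card = ∑ i, (v i - a i) := by
    have h1 : ∑ i, ((v i - a i) + a i) = ∑ i, v i :=
      Finset.sum_congr rfl (fun i _ => by have := hav i; omega)
    rw [Finset.sum_add_distrib] at h1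
    have h2 : (S₀ᶜ : Finset (Fin t)).card = t - k := by
      rw [Finset.card_compl, hS₀, Fintype.card_fin]
    have h3 : k ≤ t := by
      calc k = S₀.card := hS₀.symm
        _ ≤ (Finset.univ : Finset (Fin t)).card := Finset.card_le_card (Finset.subset_univ _)
        _ = t := by rw [Finset.card_univ, Fintype.card_fin]
    omega
  obtain ⟨B, hBsub, hBcard, hBdisj, hBcover⟩ :=
    exists_split k (fun i => v i - a i) S₀ᶜ hvsum
  have hABdisj : ∀ i j, Disjoint (A i) (B j) := by
    intro i j
    apply Finset.disjoint_of_subset_left (hAsub i)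
    apply Finset.disjoint_of_subset_right (hBsub j)
    exact disjoint_compl_right
  have hBS₀ : ∀ i, B i ∩ S₀ = ∅ := by
    intro i
    rw [← Finset.disjoint_iff_inter_eq_empty]
    apply Finset.disjoint_of_subset_left (hBsub i)
    exact disjoint_compl_left
  refine ⟨⟨fun i => A i ∪ B i, fun i => ?_, fun i j hij => ?_, ?_⟩, fun i => ?_⟩
  · rw [Finset.card_union_of_disjoint (hABdisj i i), hAcard i, hBcard i]
    have := hav i; omega
  · rw [Finset.disjoint_union_left]
    constructor
    · rw [Finset.disjoint_union_right]
      exact ⟨hAdisj i j hij, hABdisj i j⟩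
    · rw [Finset.disjoint_union_right]
      exact ⟨(hABdisj j i).symm, hBdisj i j hij⟩
  · ext x
    simp only [Finset.mem_biUnion, Finset.mem_univ, true_and, Finset.mem_union, iff_true]
    by_cases hx : x ∈ S₀
    · have : x ∈ Finset.univ.biUnion A := by rw [hAcover]; exact hx
      obtain ⟨i, _, hi⟩ := Finset.mem_biUnion.1 this
      exact ⟨i, Or.inl hi⟩
    · have hx' : x ∈ (S₀ᶜ : Finset (Fin t)) := Finset.mem_compl.2 hx
      have : x ∈ Finset.univ.biUnion B := by rw [hBcover]; exact hx'
      obtain ⟨i, _, hi⟩ := Finset.mem_biUnion.1 this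
      exact ⟨i, Or.inr hi⟩
  · have h1 : (A i ∪ B i) ∩ S₀ = A i := by
      rw [Finset.union_inter_distrib_right, hBS₀ i, Finset.union_empty]
      exact Finset.inter_eq_left.2 (hAsub i)
    rw [h1]
    exact hAcard i

private lemma filter_mem_eq {k : ℕ} (I : Finset (Fin k)) :
    Finset.univ.filter (fun i => i ∈ I) = I := by
  ext i; simp

/-- decomposition of the `S₀`-intersection count along the parts -/
private lemma m_split {t k : ℕ} {v : Fin k → ℕ} (P : OrderedPartition t k v)
    (S₀ S : Finset (Fin t)) :
    (S ∩ S₀).card = ∑ i, (S ∩ (P.1 i ∩ S₀)).card := by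
  have h := card_split P.1 P.2.2.1 P.2.2.2 (S ∩ S₀)
  rw [h]
  exact Finset.sum_congr rfl (fun i _ => by rw [inter_ac])

private lemma trans_m_le {t k : ℕ} {v : Fin k → ℕ} (P : OrderedPartition t k v)
    (S₀ : Finset (Fin t)) (I : Finset (Fin k))
    (hsupp : ∀ i, i ∉ I → P.1 i ∩ S₀ = ∅) (S : Finset (Fin t))
    (htr : ∀ i, (S ∩ P.1 i).card = 1) : (S ∩ S₀).card ≤ I.card := by
  rw [m_split P S₀ S]
  calc ∑ i, (S ∩ (P.1 i ∩ S₀)).card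
      ≤ ∑ i : Fin k, (if i ∈ I then 1 else 0) := by
        apply Finset.sum_le_sum
        intro i _
        by_cases hi : i ∈ I
        · simp only [hi, if_true]
          calc (S ∩ (P.1 i ∩ S₀)).card ≤ (S ∩ P.1 i).card :=
                Finset.card_le_card (Finset.inter_subset_inter_left Finset.inter_subset_left)
            _ = 1 := htr i
        · simp only [hi, if_false, hsupp i hi, Finset.inter_empty, Finset.card_empty, le_refl]
    _ = I.card := by
        rw [Finset.sum_boole, filter_mem_eq]
        simp

private lemma trans_profile_iff {t k : ℕ} {v : Fin k → ℕ} (P : OrderedPartition t k v)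
    (S₀ : Finset (Fin t)) (I : Finset (Fin k))
    (hsupp : ∀ i, i ∉ I → P.1 i ∩ S₀ = ∅)
    (S : Finset (Fin t)) (hS : S.card = k) :
    ((∀ i, (S ∩ P.1 i).card = 1) ∧ (S ∩ S₀).card = I.card)
      ↔ (∀ i, (S ∩ (if i ∈ I then P.1 i ∩ S₀ else P.1 i)).card = 1) := by
  constructor
  · rintro ⟨htr, hm⟩ i
    by_cases hi : i ∈ I
    · simp only [hi, if_true]
      have hsum : ∑ j ∈ I, (S ∩ (P.1 j ∩ S₀)).card = I.card := by
        rw [← hm, m_split P S₀ S]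
        apply Finset.sum_subset (Finset.subset_univ I)
        intro j _ hj
        rw [hsupp j hj, Finset.inter_empty, Finset.card_empty]
      exact all_eq_one_le I _ (fun j hj => by
        calc (S ∩ (P.1 j ∩ S₀)).card ≤ (S ∩ P.1 j).card :=
              Finset.card_le_card (Finset.inter_subset_inter_left Finset.inter_subset_left)
          _ = 1 := htr j) hsum i hi
    · simp only [hi, if_false]
      exact htr i
  · intro h
    have htr : ∀ i, (S ∩ P.1 i).card = 1 := by
      apply trans_of_sub P (fun i => if i ∈ I then P.1 i ∩ S₀ else P.1 i) _ S hS h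
      intro i
      by_cases hi : i ∈ I <;> simp [hi]
    refine ⟨htr, ?_⟩
    rw [m_split P S₀ S]
    have h2 : ∀ i : Fin k, (S ∩ (P.1 i ∩ S₀)).card = if i ∈ I then 1 else 0 := by
      intro i
      by_cases hi : i ∈ I
      · simp only [hi, if_true]
        have := h i
        rwa [if_pos hi] at this
      · simp only [hi, if_false, hsupp i hi, Finset.inter_empty, Finset.card_empty]
    rw [Finset.sum_congr rfl (fun i _ => h2 i), Finset.sum_boole, filter_mem_eq]
    simp

private lemma trans_zero_iff {t k : ℕ} {v : Fin k → ℕ} (P : OrderedPartition t k v)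
    (S₀ : Finset (Fin t)) (S : Finset (Fin t)) (hS : S.card = k) :
    ((∀ i, (S ∩ P.1 i).card = 1) ∧ (S ∩ S₀).card = 0)
      ↔ (∀ i, (S ∩ (P.1 i \ S₀)).card = 1) := by
  constructor
  · rintro ⟨htr, hm⟩ i
    have hSS₀ : S ∩ S₀ = ∅ := Finset.card_eq_zero.1 hm
    have : S ∩ (P.1 i \ S₀) = S ∩ P.1 i := by
      ext x
      simp only [Finset.mem_inter, Finset.mem_sdiff]
      constructor
      · rintro ⟨hx, hp, _⟩; exact ⟨hx, hp⟩
      · rintro ⟨hx, hp⟩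
        refine ⟨hx, hp, fun hx₀ => ?_⟩
        have : x ∈ S ∩ S₀ := Finset.mem_inter.2 ⟨hx, hx₀⟩
        rw [hSS₀] at this
        exact absurd this (Finset.notMem_empty x)
    rw [this]
    exact htr i
  · intro h
    have htr : ∀ i, (S ∩ P.1 i).card = 1 :=
      trans_of_sub P _ (fun i => Finset.sdiff_subset) S hS h
    refine ⟨htr, Finset.card_eq_zero.2 ?_⟩
    rw [Finset.eq_empty_iff_forall_notMem]
    intro x hx
    rw [Finset.mem_inter] at hx
    have hcov : x ∈ Finset.univ.biUnion P.1 := by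
      rw [P.2.2.2]; exact Finset.mem_univ x
    obtain ⟨i, _, hpi⟩ := Finset.mem_biUnion.1 hcov
    obtain ⟨z, hz⟩ := Finset.card_eq_one.1 (htr i)
    obtain ⟨y, hy⟩ := Finset.card_eq_one.1 (h i)
    have hxz : x ∈ S ∩ P.1 i := Finset.mem_inter.2 ⟨hx.1, hpi⟩
    have hyz : y ∈ S ∩ P.1 i := by
      have : y ∈ S ∩ (P.1 i \ S₀) := hy ▸ Finset.mem_singleton_self y
      rw [Finset.mem_inter, Finset.mem_sdiff] at this
      exact Finset.mem_inter.2 ⟨this.1, this.2.1⟩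
    have hxy : x = y := by
      rw [hz, Finset.mem_singleton] at hxz hyz
      rw [hxz, hyz]
    have hyns : y ∉ S₀ := by
      have : y ∈ S ∩ (P.1 i \ S₀) := hy ▸ Finset.mem_singleton_self y
      rw [Finset.mem_inter, Finset.mem_sdiff] at this
      exact this.2.2
    exact hyns (hxy ▸ hx.2)

private lemma rank_eq_card_of_inj {m n : Type*} [Fintype n] [Fintype m]
    (A : Matrix m n ℚ) (h : Function.Injective A.mulVecLin) :
    A.rank = Fintype.card n := by
  rw [Matrix.rank, LinearMap.finrank_range_of_inj h, Module.finrank_pi]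

private lemma card_filter_val_lt {k m : ℕ} (hm : m ≤ k) :
    (Finset.univ.filter (fun i : Fin k => (i : ℕ) < m)).card = m := by
  have h : Finset.univ.filter (fun i : Fin k => (i : ℕ) < m)
      = (Finset.univ : Finset (Fin m)).image (Fin.castLE hm) := by
    ext j
    constructor
    · intro hj
      rw [Finset.mem_filter] at hj
      exact Finset.mem_image.2 ⟨⟨(j : ℕ), hj.2⟩, Finset.mem_univ _, rfl⟩
    · intro hj
      obtain ⟨x, _, rfl⟩ := Finset.mem_image.1 hj
      rw [Finset.mem_filter]
      exact ⟨Finset.mem_univ _, x.2⟩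
  rw [h, Finset.card_image_of_injective _ (Fin.castLE_injective hm)]
  simp

private lemma sum_range_two_of_vanish {f : ℕ → ℚ} {n : ℕ} (hn : 2 ≤ n)
    (h : ∀ m, 2 ≤ m → m < n → f m = 0) : ∑ m ∈ Finset.range n, f m = f 0 + f 1 := by
  rw [Finset.range_eq_Ico, ← Finset.sum_Ico_consecutive f (Nat.zero_le 2) hn]
  have h2 : ∑ m ∈ Finset.Ico 2 n, f m = 0 :=
    Finset.sum_eq_zero (fun m hm => by
      rw [Finset.mem_Ico] at hm
      exact h m hm.1 hm.2)
  rw [h2, add_zero, ← Finset.range_eq_Ico, Finset.sum_range_succ, Finset.sum_range_one]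


end Aux

/-- Lemma 4.6: for `k ≥ 2`, sufficiently large `t` divisible by `k`, and any sizes
`v_1,…,v_k ≥ k` summing to `t` with `v` not the constant vector `(t/k,…,t/k)`,
the intersection matrix `A_{t,k,v}` has full column rank `C(t,k)`. -/
theorem unbalanced_cut_matrix_full_rank (k : ℕ) (hk : 2 ≤ k) :
    ∃ t₀ : ℕ, ∀ t : ℕ, t₀ ≤ t → k ∣ t → ∀ v : Fin k → ℕ,
      (∑ i, v i = t) → (∀ i, k ≤ v i) → v ≠ (fun _ => t / k) →
      (cutMatrixV t k v).rank = t.choose k := by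
  classical
  refine ⟨0, fun t _ hdvd v hsum hv hne => ?_⟩
  have hk0 : 0 < k := by omega
  -- two distinct part sizes
  obtain ⟨i₀, hi₀⟩ : ∃ i, v i ≠ t / k := by
    by_contra h
    push_neg at h
    exact hne (funext h)
  obtain ⟨j₀, hj₀⟩ : ∃ j, v j ≠ v i₀ := by
    by_contra h
    push_neg at h
    apply hi₀
    have h2 : ∑ i, v i = k * v i₀ := by
      rw [Finset.sum_congr rfl (fun j _ => h j)]
      simp [Finset.card_univ, mul_comm]
    rw [h2] at hsum
    rw [← hsum, Nat.mul_div_cancel_left _ hk0]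
  have hcardK : Fintype.card {S : Finset (Fin t) // S.card = k} = t.choose k := by
    rw [Fintype.card_finset_len, Fintype.card_fin]
  rw [← hcardK]
  apply rank_eq_card_of_inj
  rw [← LinearMap.ker_eq_bot, LinearMap.ker_eq_bot']
  intro c hc
  have H : ∀ P : OrderedPartition t k v, ∑ S : {S : Finset (Fin t) // S.card = k},
      (if ∀ i, ((S : Finset (Fin t)) ∩ P.1 i).card = 1 then (1:ℚ) else 0) * c S = 0 := by
    intro P
    have h1 := congrFun hc P
    simpa [Matrix.mulVecLin_apply, Matrix.mulVec, dotProduct, cutMatrixV] using h1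
  funext S₀
  show c S₀ = 0
  set δ : ℕ → ℚ := fun m => (∑ S : {S : Finset (Fin t) // S.card = k},
      if (S.1 ∩ S₀.1).card = m then c S else 0) /
      ((Finset.univ.filter (fun S : {S : Finset (Fin t) // S.card = k} =>
        (S.1 ∩ S₀.1).card = m)).card : ℚ) with hδdef
  have Eq0 : ∀ P : OrderedPartition t k v, ∑ m ∈ Finset.range (k+1),
      ((Finset.univ.filter (fun S : {S : Finset (Fin t) // S.card = k} =>
        (∀ i, (S.1 ∩ P.1 i).card = 1) ∧ (S.1 ∩ S₀.1).card = m)).card : ℚ) * δ m = 0 := by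
    intro P
    simp only [hδdef]
    exact main_equation c H S₀ P
  -- generic facts about profiles
  have key : ∀ (P : OrderedPartition t k v) (I : Finset (Fin k)),
      (∀ i, i ∉ I → P.1 i ∩ S₀.1 = ∅) →
      ((Finset.univ.filter (fun S : {S : Finset (Fin t) // S.card = k} =>
          (∀ i, (S.1 ∩ P.1 i).card = 1) ∧ (S.1 ∩ S₀.1).card = I.card)).card
        = ∏ i, (if i ∈ I then P.1 i ∩ S₀.1 else P.1 i).card)
      ∧ (∀ m, I.card < m →
        (Finset.univ.filter (fun S : {S : Finset (Fin t) // S.card = k} =>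
          (∀ i, (S.1 ∩ P.1 i).card = 1) ∧ (S.1 ∩ S₀.1).card = m)).card = 0) := by
    intro P I hsupp
    constructor
    · rw [Finset.filter_congr (fun S _ => trans_profile_iff P S₀.1 I hsupp S.1 S.2)]
      apply card_filter_transversal
      intro i j hij
      have hsubQ : ∀ i, (if i ∈ I then P.1 i ∩ S₀.1 else P.1 i) ⊆ P.1 i := by
        intro i
        by_cases hi : i ∈ I <;> simp [hi]
      exact Finset.disjoint_of_subset_left (hsubQ i)
        (Finset.disjoint_of_subset_right (hsubQ j) (P.2.2.1 i j hij))
    · intro m hm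
      rw [Finset.card_eq_zero, Finset.filter_eq_empty_iff]
      intro S _
      rintro ⟨htr, hmm⟩
      have h2 := trans_m_le P S₀.1 I hsupp S.1 htr
      omega
  have key0 : ∀ P : OrderedPartition t k v,
      (Finset.univ.filter (fun S : {S : Finset (Fin t) // S.card = k} =>
        (∀ i, (S.1 ∩ P.1 i).card = 1) ∧ (S.1 ∩ S₀.1).card = 0)).card
      = ∏ i, (P.1 i \ S₀.1).card := by
    intro P
    rw [Finset.filter_congr (fun S _ => trans_zero_iff P S₀.1 S.1 S.2)]
    apply card_filter_transversal
    intro i j hij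
    exact Finset.disjoint_of_subset_left Finset.sdiff_subset
      (Finset.disjoint_of_subset_right Finset.sdiff_subset (P.2.2.1 i j hij))
  -- support-1 profile equations
  have support1 : ∀ i₁ : Fin k, ((v i₁ : ℚ) - k) * δ 0 + (k : ℚ) * δ 1 = 0 := by
    intro i₁
    set a : Fin k → ℕ := fun i => if i = i₁ then k else 0 with ha_def
    obtain ⟨P, haP⟩ := exists_partition_profile v a S₀.1 S₀.2 hsum
      (by simp [ha_def]) (fun i => by
        by_cases hi : i = i₁ <;> simp [ha_def, hi]
        exact hv i₁)
    have hsupp : ∀ i, i ∉ ({i₁} : Finset (Fin k)) → P.1 i ∩ S₀.1 = ∅ := by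
      intro i hi
      rw [Finset.mem_singleton] at hi
      apply Finset.card_eq_zero.1
      rw [haP i, ha_def]
      simp [hi]
    obtain ⟨hktop, hkvan⟩ := key P {i₁} hsupp
    set Wn : ℕ := ∏ i ∈ Finset.univ.erase i₁, v i with hWn
    have hWnpos : 0 < Wn := by
      rw [hWn]
      apply Finset.prod_pos
      intro i _
      have := hv i
      omega
    have hT1 : (Finset.univ.filter (fun S : {S : Finset (Fin t) // S.card = k} =>
        (∀ i, (S.1 ∩ P.1 i).card = 1) ∧ (S.1 ∩ S₀.1).card = 1)).card = k * Wn := by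
      have h1 : ({i₁} : Finset (Fin k)).card = 1 := rfl
      rw [h1] at hktop
      rw [hktop]
      rw [← Finset.mul_prod_erase Finset.univ _ (Finset.mem_univ i₁)]
      congr 1
      · rw [if_pos (Finset.mem_singleton_self i₁), haP i₁, ha_def]
        simp
      · rw [hWn]
        apply Finset.prod_congr rfl
        intro i hi
        rw [Finset.mem_erase] at hi
        rw [if_neg (by simp [hi.1]), P.2.1 i]
    have hT0 : (Finset.univ.filter (fun S : {S : Finset (Fin t) // S.card = k} =>
        (∀ i, (S.1 ∩ P.1 i).card = 1) ∧ (S.1 ∩ S₀.1).card = 0)).card = (v i₁ - k) * Wn := by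
      rw [key0 P]
      have hsd : ∀ i, (P.1 i \ S₀.1).card = v i - a i := by
        intro i
        have h1 : P.1 i \ S₀.1 = P.1 i \ (P.1 i ∩ S₀.1) := by
          ext x
          simp only [Finset.mem_sdiff, Finset.mem_inter]
          tauto
        rw [h1, Finset.card_sdiff_of_subset Finset.inter_subset_left, P.2.1 i, haP i]
      rw [Finset.prod_congr rfl (fun i _ => hsd i)]
      rw [← Finset.mul_prod_erase Finset.univ _ (Finset.mem_univ i₁)]
      congr 1
      · rw [ha_def]; simp
      · rw [hWn]
        apply Finset.prod_congr rfl
        intro i hi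
        rw [Finset.mem_erase] at hi
        rw [ha_def]
        simp [hi.1]
    have heq := Eq0 P
    have h1' : ({i₁} : Finset (Fin k)).card = 1 := rfl
    rw [h1'] at hkvan
    rw [sum_range_two_of_vanish (by omega) (fun m hm _ => by
      rw [hkvan m (by omega)]
      simp)] at heq
    rw [hT0, hT1] at heq
    -- heq : ((v i₁ - k) * Wn : ℕ) * δ 0 + ((k * Wn : ℕ)) * δ 1 = 0
    have hcast : ((Wn : ℚ)) * (((v i₁ : ℚ) - k) * δ 0 + (k : ℚ) * δ 1) = 0 := by
      push_cast [Nat.cast_sub (hv i₁)] at heq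
      linear_combination heq
    have hWQ : (Wn : ℚ) ≠ 0 := by
      exact_mod_cast Nat.pos_iff_ne_zero.1 hWnpos
    exact (mul_eq_zero.1 hcast).resolve_left hWQ
  -- δ 0 = δ 1 = 0
  have hδ0 : δ 0 = 0 := by
    have h1 := support1 i₀
    have h2 := support1 j₀
    have h3 : ((v i₀ : ℚ) - (v j₀ : ℚ)) * δ 0 = 0 := by linear_combination h1 - h2
    have h4 : (v i₀ : ℚ) - (v j₀ : ℚ) ≠ 0 := by
      intro h
      apply hj₀
      have : (v j₀ : ℚ) = (v i₀ : ℚ) := by linarith [h]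
      exact_mod_cast this
    exact (mul_eq_zero.1 h3).resolve_left h4
  have hδ1 : δ 1 = 0 := by
    have h1 := support1 i₀
    rw [hδ0] at h1
    have h2 : (k : ℚ) * δ 1 = 0 := by linear_combination h1
    have h3 : (k : ℚ) ≠ 0 := by
      exact_mod_cast Nat.pos_iff_ne_zero.1 hk0
    exact (mul_eq_zero.1 h2).resolve_left h3
  -- all δ m = 0 for m ≤ k
  have hδall : ∀ m, m ≤ k → δ m = 0 := by
    intro m
    induction m using Nat.strong_induction_on with
    | _ m ih =>
      intro hmk
      rcases Nat.lt_or_ge m 2 with h2 | h2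
      · interval_cases m
        · exact hδ0
        · exact hδ1
      · -- profile with support of size m
        set z : Fin k := ⟨0, hk0⟩ with hz
        set a : Fin k → ℕ := fun i =>
          if (i : ℕ) = 0 then k - m + 1 else if (i : ℕ) < m then 1 else 0 with ha_def
        set I : Finset (Fin k) := Finset.univ.filter (fun i : Fin k => (i : ℕ) < m)
          with hI_def
        have hIcard : I.card = m := card_filter_val_lt hmk
        have hasum : ∑ i, a i = k := by
          have hsplit : ∑ i, a i = a z + ∑ i ∈ Finset.univ.erase z, a i :=
            (Finset.add_sum_erase Finset.univ a (Finset.mem_univ z)).symm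
          have haz : a z = k - m + 1 := by simp [ha_def, hz]
          have herase : ∑ i ∈ Finset.univ.erase z, a i
              = ((Finset.univ.erase z).filter (fun i : Fin k => (i : ℕ) < m)).card := by
            rw [Finset.card_filter]
            apply Finset.sum_congr rfl
            intro i hi
            rw [Finset.mem_erase] at hi
            have hiz : (i : ℕ) ≠ 0 := by
              intro h
              apply hi.1
              rw [hz]
              ext
              simp [h]
            rw [ha_def]
            simp only [hiz, if_false]
          have hfe : (Finset.univ.erase z).filter (fun i : Fin k => (i : ℕ) < m)
              = ((Finset.univ.filter (fun i : Fin k => (i : ℕ) < m)).erase z) := by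
            rw [Finset.filter_erase]
          have hzI : z ∈ Finset.univ.filter (fun i : Fin k => (i : ℕ) < m) := by
            rw [Finset.mem_filter]
            exact ⟨Finset.mem_univ z, by rw [hz]; simpa using by omega⟩
          have hce : ((Finset.univ.filter (fun i : Fin k => (i : ℕ) < m)).erase z).card
              = m - 1 := by
            rw [Finset.card_erase_of_mem hzI, card_filter_val_lt hmk]
          rw [hsplit, haz, herase, hfe, hce]
          omega
        obtain ⟨P, haP⟩ := exists_partition_profile v a S₀.1 S₀.2 hsum hasum
          (fun i => by
            rw [ha_def]
            by_cases h0 : (i : ℕ) = 0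
            · simp only [h0, if_true]
              have := hv i
              omega
            · simp only [h0, if_false]
              by_cases hlt : (i : ℕ) < m
              · simp only [hlt, if_true]
                have := hv i
                omega
              · simp [hlt])
        have hsupp : ∀ i, i ∉ I → P.1 i ∩ S₀.1 = ∅ := by
          intro i hi
          rw [hI_def, Finset.mem_filter] at hi
          push_neg at hi
          have hge := hi (Finset.mem_univ i)
          apply Finset.card_eq_zero.1
          rw [haP i, ha_def]
          have h0 : (i : ℕ) ≠ 0 := by omega
          simp [h0, Nat.not_lt.1 (by omega : ¬ (i:ℕ) < m)]
        obtain ⟨hktop, hkvan⟩ := key P I hsupp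
        rw [hIcard] at hktop hkvan
        have heq := Eq0 P
        rw [Finset.sum_eq_single_of_mem m (Finset.mem_range.2 (by omega))
          (fun j _ hj => by
            rcases Nat.lt_or_ge j m with hlt | hge
            · rw [ih j hlt (by omega), mul_zero]
            · have hgt : m < j := by omega
              rw [hkvan j hgt]
              simp)] at heq
        have hNpos : 0 < ∏ i, (if i ∈ I then P.1 i ∩ S₀.1 else P.1 i).card := by
          apply Finset.prod_pos
          intro i _
          by_cases hi : i ∈ I
          · simp only [hi, if_true]
            rw [haP i]
            rw [hI_def, Finset.mem_filter] at hi
            rw [ha_def]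
            by_cases h0 : (i : ℕ) = 0
            · simp only [h0, if_true]; omega
            · simp only [h0, if_false, hi.2, if_true]; omega
          · simp only [hi, if_false, P.2.1 i]
            have := hv i
            omega
        rw [hktop] at heq
        have hNQ : ((∏ i, (if i ∈ I then P.1 i ∩ S₀.1 else P.1 i).card : ℕ) : ℚ) ≠ 0 := by
          exact_mod_cast Nat.pos_iff_ne_zero.1 hNpos
        exact (mul_eq_zero.1 heq).resolve_left hNQ
  -- conclude
  have hOk : Finset.univ.filter (fun S : {S : Finset (Fin t) // S.card = k} =>
      (S.1 ∩ S₀.1).card = k) = {S₀} := by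
    ext S
    rw [Finset.mem_filter, Finset.mem_singleton]
    constructor
    · rintro ⟨_, hS⟩
      have h1 : S.1 ∩ S₀.1 = S.1 :=
        Finset.eq_of_subset_of_card_le Finset.inter_subset_left (by rw [hS, S.2])
      have h2 : S.1 ⊆ S₀.1 := by
        rw [← h1]
        exact Finset.inter_subset_right
      have h3 : S.1 = S₀.1 :=
        Finset.eq_of_subset_of_card_le h2 (by rw [S.2, S₀.2])
      exact Subtype.ext h3
    · rintro rfl
      refine ⟨Finset.mem_univ _, ?_⟩
      rw [Finset.inter_self]
      exact S.2
  have hfin := hδall k le_rfl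
  rw [hδdef] at hfin
  simp only at hfin
  rw [← Finset.sum_filter, hOk, Finset.sum_singleton] at hfin
  simpa using hfin
end

section
/- Let t be even, t ≥ 4, k = 2, p > 0. Let M be the matrix whose rows are indexed by ordered partitions (A,B) of [t] into two parts of size t/2 and whose columns are indexed by 2-subsets K of [t], with entry M((A,B),K) = 1 - |B ∩ K|. Then rank(M) ≥ t - 1. -/
open Finset

private lemma card_inter_insert' {α : Type*} [DecidableEq α] (K D : Finset α) (a : α)
    (ha : a ∉ D) :
    (K ∩ insert a D).card = (K ∩ D).card + (if a ∈ K then 1 else 0) := by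
  by_cases h : a ∈ K
  · rw [Finset.inter_insert_of_mem h, Finset.card_insert_of_notMem (by simp [ha]), if_pos h]
  · rw [Finset.inter_insert_of_notMem h, if_neg h]
    omega

/-- The `k = 2` case of Lemma 5.1: the matrix `M` indexed by ordered balanced bipartitions
`(A,B)` of `[t]` and 2-subsets `K`, with entry `1 - |B ∩ K|`, has rank at least `t - 1`. -/
theorem bipartition_difference_matrix_rank (t : ℕ) (ht : 4 ≤ t) (hte : Even t)
    (p : ℝ) (hp : 0 < p) :
    t - 1 ≤ Matrix.rank (fun (P : {P : Finset (Fin t) × Finset (Fin t) //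
          P.1.card = t / 2 ∧ P.2.card = t / 2 ∧ Disjoint P.1 P.2 ∧ P.1 ∪ P.2 = Finset.univ})
        (K : {S : Finset (Fin t) // S.card = 2}) =>
      (1 : ℚ) - (((K : Finset (Fin t)) ∩ (P : Finset (Fin t) × Finset (Fin t)).2).card : ℚ)) := by
  classical
  have h2 : 2 ∣ t := hte.two_dvd
  set s := t / 2 with hs
  have hst : s + s = t := by omega
  have hs2 : 2 ≤ s := by omega
  have hslt : s < t := by omega
  set RowT := {P : Finset (Fin t) × Finset (Fin t) //
      P.1.card = t / 2 ∧ P.2.card = t / 2 ∧ Disjoint P.1 P.2 ∧ P.1 ∪ P.2 = Finset.univ}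
  set M : Matrix RowT {S : Finset (Fin t) // S.card = 2} ℚ :=
    (fun P K => (1 : ℚ) - (((K : Finset (Fin t)) ∩
        (P : Finset (Fin t) × Finset (Fin t)).2).card : ℚ)) with hMdef
  rw [Matrix.rank_eq_finrank_span_row]
  -- the baseline B-side
  set B0 : Finset (Fin t) := Finset.univ.filter (fun i : Fin t => s ≤ (i : ℕ)) with hB0
  have hB0card : B0.card = s := by
    have himg : B0 = Finset.map ⟨fun b : Fin (t - s) => (⟨s + (b : ℕ), by
        have := b.isLt; omega⟩ : Fin t),
        fun b c hbc => by
          have h' : s + (b : ℕ) = s + (c : ℕ) := congrArg Fin.val hbc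
          exact Fin.ext (by omega)⟩ Finset.univ := by
      ext i
      simp only [hB0, Finset.mem_filter, Finset.mem_univ, true_and, Finset.mem_map,
        Function.Embedding.coeFn_mk]
      constructor
      · intro h
        exact ⟨⟨(i : ℕ) - s, by have := i.isLt; omega⟩, Fin.ext (by
          show s + ((i : ℕ) - s) = (i : ℕ)
          omega)⟩
      · rintro ⟨b, rfl⟩; show s ≤ s + (b : ℕ); omega
    rw [himg, Finset.card_map, Finset.card_univ, Fintype.card_fin]
    omega
  have hzt : 0 < t := by omega
  set z : Fin t := ⟨0, hzt⟩ with hz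
  have h0B0 : z ∉ B0 := by
    simp [hB0, hz]
    omega
  -- the family of vectors w x, x ≠ 0
  set w : {x : Fin t // x ≠ z} → ({S : Finset (Fin t) // S.card = 2} → ℚ) :=
    (fun x K => (if (x : Fin t) ∈ (K : Finset (Fin t)) then (1 : ℚ) else 0) -
      (if z ∈ (K : Finset (Fin t)) then (1 : ℚ) else 0)) with hwdef
  -- each w x lies in the span of the rows of M
  have hwmem : ∀ x, w x ∈ Submodule.span ℚ (Set.range M) := by
    intro x
    set b : Fin t := if s ≤ ((x : Fin t) : ℕ) then (x : Fin t) else ⟨s, hslt⟩ with hb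
    have hbB0 : b ∈ B0 := by
      by_cases h : s ≤ ((x : Fin t) : ℕ) <;> simp [hb, h, hB0]
    set D : Finset (Fin t) := B0.erase b with hD
    have hDcard : D.card = s - 1 := by rw [hD, Finset.card_erase_of_mem hbB0, hB0card]
    have hxD : (x : Fin t) ∉ D := by
      by_cases h : s ≤ ((x : Fin t) : ℕ)
      · rw [hD, hb, if_pos h]; exact Finset.notMem_erase _ _
      · intro hmem
        have := Finset.mem_of_mem_erase hmem
        simp [hB0] at this
        omega
    have h0D : z ∉ D := fun hmem => h0B0 (Finset.mem_of_mem_erase hmem)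
    set BR : Finset (Fin t) := insert (x : Fin t) D with hBR
    set BQ : Finset (Fin t) := insert z D with hBQ
    have hBRcard : BR.card = s := by
      rw [hBR, Finset.card_insert_of_notMem hxD, hDcard]; omega
    have hBQcard : BQ.card = s := by
      rw [hBQ, Finset.card_insert_of_notMem h0D, hDcard]; omega
    have hprop : ∀ B : Finset (Fin t), B.card = s →
        (Bᶜ.card = t / 2 ∧ B.card = t / 2 ∧ Disjoint Bᶜ B ∧ Bᶜ ∪ B = Finset.univ) := by
      intro B hB
      refine ⟨?_, by omega, disjoint_compl_left, by
        rw [← Finset.top_eq_univ, ← Finset.sup_eq_union]; exact compl_sup_eq_top⟩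
      rw [Finset.card_compl, hB, Fintype.card_fin]; omega
    refine (show w x = M ⟨(BQᶜ, BQ), hprop BQ hBQcard⟩ - M ⟨(BRᶜ, BR), hprop BR hBRcard⟩
        from ?_) ▸
      Submodule.sub_mem _ (Submodule.subset_span ⟨_, rfl⟩) (Submodule.subset_span ⟨_, rfl⟩)
    funext K
    have hR := card_inter_insert' (K : Finset (Fin t)) D (x : Fin t) hxD
    have hQ := card_inter_insert' (K : Finset (Fin t)) D z h0D
    show ((if (x : Fin t) ∈ (K : Finset (Fin t)) then (1 : ℚ) else 0) -
        (if z ∈ (K : Finset (Fin t)) then (1 : ℚ) else 0)) =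
      (1 - (((K : Finset (Fin t)) ∩ BQ).card : ℚ)) -
        (1 - (((K : Finset (Fin t)) ∩ BR).card : ℚ))
    rw [hBR, hBQ, hR, hQ]
    push_cast
    by_cases h1 : (x : Fin t) ∈ (K : Finset (Fin t)) <;>
      by_cases h2 : z ∈ (K : Finset (Fin t)) <;> simp [h1, h2] <;> ring
  -- linear independence of the w's
  have hwli : LinearIndependent ℚ w := by
    rw [Fintype.linearIndependent_iff]
    intro g hg x
    have key : ∀ (a c : Fin t) (ha : a ≠ z) (hc : c ≠ z), a ≠ c →
        g ⟨a, ha⟩ + g ⟨c, hc⟩ = 0 := by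
      intro a c ha hc hac
      have hK : ({a, c} : Finset (Fin t)).card = 2 := by
        rw [Finset.card_insert_of_notMem (by simpa using hac), Finset.card_singleton]
      have hgK := congrFun hg (⟨{a, c}, hK⟩ : {S : Finset (Fin t) // S.card = 2})
      rw [Finset.sum_apply] at hgK
      have hterm : ∀ y : {x : Fin t // x ≠ z},
          (g y • w y) (⟨{a, c}, hK⟩ : {S : Finset (Fin t) // S.card = 2}) =
          if (y : Fin t) ∈ ({a, c} : Finset (Fin t)) then g y else 0 := by
        intro y
        have h0 : z ∉ ({a, c} : Finset (Fin t)) := by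
          simp [eq_comm, ha, hc, Ne.symm]
        simp only [Pi.smul_apply, hwdef, smul_eq_mul]
        rw [if_neg h0]
        by_cases hy : (y : Fin t) ∈ ({a, c} : Finset (Fin t)) <;> simp [hy]
      rw [Finset.sum_congr rfl (fun y _ => hterm y)] at hgK
      rw [show (Finset.univ : Finset {x : Fin t // x ≠ z}) =
          Finset.univ from rfl] at hgK
      have hsum : ∑ y : {x : Fin t // x ≠ z},
          (if (y : Fin t) ∈ ({a, c} : Finset (Fin t)) then g y else 0) =
          g ⟨a, ha⟩ + g ⟨c, hc⟩ := by
        rw [← Finset.sum_subset (Finset.subset_univ ({⟨a, ha⟩, ⟨c, hc⟩} :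
            Finset {x : Fin t // x ≠ z}))
          (fun y _ hy => by
            rw [if_neg]
            intro hmem
            apply hy
            simp only [Finset.mem_insert, Finset.mem_singleton] at hmem ⊢
            rcases hmem with h | h
            · exact Or.inl (Subtype.ext h)
            · exact Or.inr (Subtype.ext (by simpa using h)))]
        rw [Finset.sum_pair (by simp [Subtype.ext_iff, hac])]
        simp
      rw [hsum] at hgK
      exact hgK
    -- pick two further indices and conclude
    set a : Fin t := (x : Fin t) with hadef
    have e1lt : (1 : ℕ) < t := by omega
    have e2lt : (2 : ℕ) < t := by omega
    have e3lt : (3 : ℕ) < t := by omega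
    set e1 : Fin t := ⟨1, e1lt⟩
    set e2 : Fin t := ⟨2, e2lt⟩
    set e3 : Fin t := ⟨3, e3lt⟩
    have he10 : e1 ≠ z := by simp [Fin.ext_iff]
    have he20 : e2 ≠ z := by simp [Fin.ext_iff]
    have he30 : e3 ≠ z := by simp [Fin.ext_iff]
    have he12 : e1 ≠ e2 := by simp [Fin.ext_iff, e1, e2]
    have he13 : e1 ≠ e3 := by simp [Fin.ext_iff, e1, e3]
    have he23 : e2 ≠ e3 := by simp [Fin.ext_iff, e2, e3]
    have hx0 : a ≠ z := x.2
    have hgx : g ⟨a, hx0⟩ = g x := by cases x; rfl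
    by_cases h1 : a = e1
    · have k1 := key a e2 hx0 he20 (h1 ▸ he12)
      have k2 := key a e3 hx0 he30 (h1 ▸ he13)
      have k3 := key e2 e3 he20 he30 he23
      rw [← hgx]; linarith
    · by_cases h3 : a = e3
      · have k1 := key a e1 hx0 he10 (h3 ▸ (Ne.symm he13))
        have k2 := key a e2 hx0 he20 (h3 ▸ (Ne.symm he23))
        have k3 := key e1 e2 he10 he20 he12
        rw [← hgx]; linarith
      · have k1 := key a e1 hx0 he10 h1
        have k2 := key a e3 hx0 he30 h3
        have k3 := key e1 e3 he10 he30 he13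
        rw [← hgx]; linarith
  -- conclude
  have hv : LinearIndependent ℚ (fun x : {x : Fin t // x ≠ z} =>
      (⟨w x, hwmem x⟩ : Submodule.span ℚ (Set.range M))) :=
    LinearIndependent.of_comp (Submodule.span ℚ (Set.range M)).subtype hwli
  have hcard := hv.fintype_card_le_finrank
  have : Fintype.card {x : Fin t // x ≠ z} = t - 1 := by
    simp [Fintype.card_subtype_compl]
  rw [this] at hcard; exact hcard
end

section
/- Fix k ≥ 2 and 0 ≤ j ≤ k with j ≠ 1. The leading coefficient (in t) of the normalized eigenvalue λ(j)* = ∑_{i=0}^{k} α_i*(t) p_i(j)(t), where α_i*(t) = i!(t/k - 1)^i ∏_{s=k+i}^{2k-1}(t-s) and p_i(j) are the Johnson scheme eigenvalues, equals (1/(k-j)!) · ∑_{s=0}^{j} (-1)^s C(j,s) k^{-(s+k-j)} (s+k-j)!/(k-j)! up to a positive factor; in particular, λ(j)* = Θ(t^{2k-j}) and its leading coefficient is positive, given that ∑_{s=0}^{j} (-1)^s C(j,s) k^{j-s} (s+k-j)!/(k-j)! > 0. -/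
open Filter

/-- `α_i*(t) = i!(t/k-1)^i ∏_{s=k+i}^{2k-1}(t-s)`, the normalized Bose–Mesner coefficient. -/
noncomputable def alphaStar (k i : ℕ) (t : ℝ) : ℝ :=
  (i.factorial : ℝ) * (t / (k : ℝ) - 1) ^ i * ∏ s ∈ Finset.Icc (k + i) (2 * k - 1), (t - (s : ℝ))

/-- The Johnson-scheme eigenvalue `p_i(j)` as a function of real `t` (generalized binomial
`C(t-k+r-j, r) = ∏_{m<r}(t-k+r-j-m)/r!`). -/
noncomputable def johnsonEig (k j i : ℕ) (t : ℝ) : ℝ :=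
  ∑ r ∈ Finset.range (i + 1), (-1 : ℝ) ^ (i - r) * ((k - r).choose (i - r) : ℝ) *
    ((∏ m ∈ Finset.range r, (t - (k : ℝ) + (r : ℝ) - (j : ℝ) - (m : ℝ))) / (r.factorial : ℝ)) *
    ((k - j).choose r : ℝ)



open Finset in
private lemma tendsto_ratio_linear (c : ℝ) :
    Tendsto (fun t : ℝ => (t - c) / t) atTop (nhds 1) := by
  have h : (fun t : ℝ => (t - c) / t) =ᶠ[atTop] fun t => 1 - c * t⁻¹ := by
    filter_upwards [eventually_ne_atTop (0:ℝ)] with t ht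
    field_simp
  rw [tendsto_congr' h]
  have h2 : Tendsto (fun t : ℝ => c * t⁻¹) atTop (nhds 0) := by
    simpa using (tendsto_inv_atTop_zero (𝕜 := ℝ)).const_mul c
  simpa using tendsto_const_nhds.sub h2

open Finset in
private lemma tendsto_prod_div (r : ℕ) (c : ℕ → ℝ) :
    Tendsto (fun t : ℝ => (∏ m ∈ Finset.range r, (t - c m)) / t ^ r) atTop (nhds 1) := by
  have h : (fun t : ℝ => (∏ m ∈ range r, (t - c m)) / t ^ r)
      =ᶠ[atTop] fun t => ∏ m ∈ range r, ((t - c m) / t) := by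
    filter_upwards [eventually_gt_atTop 0] with t ht
    rw [Finset.prod_div_distrib, Finset.prod_const, Finset.card_range]
  rw [tendsto_congr' h]
  have h2 : Tendsto (fun t : ℝ => ∏ m ∈ range r, ((t - c m)/t)) atTop
      (nhds (∏ _m ∈ range r, (1:ℝ))) :=
    tendsto_finset_prod _ (fun m _ => tendsto_ratio_linear (c m))
  simpa using h2

open Finset in
private lemma tendsto_prod_div_pow (r n : ℕ) (hrn : r ≤ n) (c : ℕ → ℝ) :
    Tendsto (fun t : ℝ => (∏ m ∈ Finset.range r, (t - c m)) / t ^ n) atTop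
      (nhds (if r = n then 1 else 0)) := by
  have h : (fun t : ℝ => (∏ m ∈ range r, (t - c m)) / t ^ n)
      = fun t => ((∏ m ∈ range r, (t - c m)) / t ^ r) * (t⁻¹) ^ (n - r) := by
    funext t
    rw [show t ^ n = t ^ r * t ^ (n - r) by rw [← pow_add, Nat.add_sub_cancel' hrn],
      div_mul_eq_div_div, div_eq_mul_inv _ (t ^ (n-r)), inv_pow]
  rw [h]
  have h2 := (tendsto_prod_div r c).mul ((tendsto_inv_atTop_zero (𝕜 := ℝ)).pow (n - r))
  have hval : (if r = n then (1:ℝ) else 0) = 1 * (0:ℝ)^(n-r) := by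
    rcases eq_or_ne r n with h'|h'
    · simp [h']
    · have : 0 < n - r := Nat.sub_pos_of_lt (lt_of_le_of_ne hrn h')
      simp [h', zero_pow this.ne']
  rw [hval]
  exact h2

open Finset in
private lemma tendsto_alphaStar (k i : ℕ) (hk : 1 ≤ k) (hik : i ≤ k) :
    Tendsto (fun t : ℝ => alphaStar k i t / t ^ k) atTop
      (nhds ((i.factorial : ℝ) * ((k:ℝ)⁻¹) ^ i)) := by
  have hk0 : (k:ℝ) ≠ 0 := Nat.cast_ne_zero.mpr (by omega)
  have hcard : (Finset.Icc (k+i) (2*k-1)).card = k - i := by rw [Nat.card_Icc]; omega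
  have heq : (fun t : ℝ => alphaStar k i t / t ^ k) =ᶠ[atTop]
      fun t => (i.factorial : ℝ) * (((t - (k:ℝ))/t) * (k:ℝ)⁻¹)^i *
        ∏ s ∈ Finset.Icc (k+i) (2*k-1), ((t - (s:ℝ))/t) := by
    filter_upwards [eventually_ne_atTop (0:ℝ)] with t ht
    rw [Finset.prod_div_distrib, Finset.prod_const, hcard, alphaStar]
    rw [show t ^ k = t ^ i * t ^ (k - i) by rw [← pow_add, Nat.add_sub_cancel' hik]]
    rw [show t / (k:ℝ) - 1 = ((t - (k:ℝ))/t) * (k:ℝ)⁻¹ * t by field_simp]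
    rw [mul_pow ((t - (k:ℝ))/t * (k:ℝ)⁻¹) t i]
    field_simp
  rw [tendsto_congr' heq]
  have h2 : Tendsto (fun t : ℝ => (i.factorial : ℝ) * (((t - (k:ℝ))/t) * (k:ℝ)⁻¹)^i *
      ∏ s ∈ Finset.Icc (k+i) (2*k-1), ((t - (s:ℝ))/t)) atTop
      (nhds ((i.factorial : ℝ) * ((1 * (k:ℝ)⁻¹))^i * ∏ _s ∈ Finset.Icc (k+i) (2*k-1), (1:ℝ))) :=
    (tendsto_const_nhds.mul (((tendsto_ratio_linear (k:ℝ)).mul tendsto_const_nhds).pow i)).mul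
      (tendsto_finset_prod _ (fun s _ => tendsto_ratio_linear (s:ℝ)))
  simpa using h2

open Finset in
private noncomputable def ell (k j i r : ℕ) : ℝ :=
  ((-1:ℝ)^(i-r) * ((k-r).choose (i-r):ℝ) * ((k-j).choose r : ℝ) / (r.factorial : ℝ)) *
    (if r = k - j then 1 else 0)

open Finset in
private lemma tendsto_johnsonEig (k j i : ℕ) :
    Tendsto (fun t : ℝ => johnsonEig k j i t / t ^ (k - j)) atTop
      (nhds (∑ r ∈ Finset.range (i+1), ell k j i r)) := by
  have h : (fun t : ℝ => johnsonEig k j i t / t ^ (k - j)) =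
      fun t => ∑ r ∈ Finset.range (i+1),
        ((-1 : ℝ) ^ (i - r) * ((k - r).choose (i - r) : ℝ) *
          ((∏ m ∈ Finset.range r, (t - (k : ℝ) + (r : ℝ) - (j : ℝ) - (m : ℝ))) / (r.factorial : ℝ)) *
          ((k - j).choose r : ℝ)) / t ^ (k - j) := by
    funext t; rw [johnsonEig, Finset.sum_div]
  rw [h]
  apply tendsto_finset_sum
  intro r hr
  by_cases hrkj : r ≤ k - j
  · have heq : (fun t : ℝ =>
        ((-1 : ℝ) ^ (i - r) * ((k - r).choose (i - r) : ℝ) *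
          ((∏ m ∈ Finset.range r, (t - (k : ℝ) + (r : ℝ) - (j : ℝ) - (m : ℝ))) / (r.factorial : ℝ)) *
          ((k - j).choose r : ℝ)) / t ^ (k - j)) =
        fun t => ((-1:ℝ)^(i-r) * ((k-r).choose (i-r):ℝ) * ((k-j).choose r : ℝ) / (r.factorial : ℝ)) *
          ((∏ m ∈ Finset.range r, (t - ((k:ℝ) - (r:ℝ) + (j:ℝ) + (m:ℝ)))) / t ^ (k - j)) := by
      funext t
      rw [show (∏ m ∈ Finset.range r, (t - (k : ℝ) + (r : ℝ) - (j : ℝ) - (m : ℝ)))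
          = ∏ m ∈ Finset.range r, (t - ((k:ℝ) - (r:ℝ) + (j:ℝ) + (m:ℝ))) from
        Finset.prod_congr rfl fun m _ => by ring]
      ring
    rw [heq]
    have h2 := (tendsto_prod_div_pow r (k-j) hrkj (fun m => (k:ℝ) - (r:ℝ) + (j:ℝ) + (m:ℝ))).const_mul
      ((-1:ℝ)^(i-r) * ((k-r).choose (i-r):ℝ) * ((k-j).choose r : ℝ) / (r.factorial : ℝ))
    exact h2
  · have hz : (k - j).choose r = 0 := Nat.choose_eq_zero_of_lt (by omega)
    have hz2 : r ≠ k - j := by omega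
    simp only [hz, Nat.cast_zero, mul_zero, zero_div, ell, if_neg hz2]
    simp

/-- Asymptotic computation from the proof of Lemma 4.3: for `k ≥ 2`, `0 ≤ j ≤ k`, `j ≠ 1`,
the normalized eigenvalue `λ(j)* = ∑_{i=0}^{k} α_i*(t) p_i(j)(t)` satisfies
`λ(j)* = Θ(t^{2k-j})`, with leading coefficient equal (up to a positive factor) to
`(1/(k-j)!) ∑_{s=0}^{j} (-1)^s C(j,s) k^{-(s+k-j)} (s+k-j)!/(k-j)!`, which is positive given
Berger's inequality `∑_{s=0}^{j} (-1)^s C(j,s) k^{j-s} (s+k-j)!/(k-j)! > 0`. -/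
theorem lambda_star_leading_coefficient (k j : ℕ) (hk : 2 ≤ k) (hjk : j ≤ k) (hj1 : j ≠ 1)
    (hB : 0 < ∑ s ∈ Finset.range (j + 1),
      (-1 : ℝ) ^ s * (j.choose s : ℝ) * (k : ℝ) ^ (j - s) *
        ((s + (k - j)).factorial : ℝ) / ((k - j).factorial : ℝ)) :
    ∃ L : ℝ,
      Tendsto (fun t : ℝ =>
          (∑ i ∈ Finset.range (k + 1), alphaStar k i t * johnsonEig k j i t) / t ^ (2 * k - j))
        atTop (nhds L) ∧
      (∃ c : ℝ, 0 < c ∧ L = c * ((1 / ((k - j).factorial : ℝ)) *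
        ∑ s ∈ Finset.range (j + 1),
          (-1 : ℝ) ^ s * (j.choose s : ℝ) * ((k : ℝ) ^ (s + (k - j)))⁻¹ *
            ((s + (k - j)).factorial : ℝ) / ((k - j).factorial : ℝ))) ∧
      0 < L := by
  have hk0 : (k:ℝ) ≠ 0 := Nat.cast_ne_zero.mpr (by omega)
  have hF0 : ((k-j).factorial : ℝ) ≠ 0 := Nat.cast_ne_zero.mpr (Nat.factorial_ne_zero _)
  set G : ℕ → ℝ := fun i =>
    (i.factorial : ℝ) * ((k:ℝ)⁻¹) ^ i *
      ((-1:ℝ)^(i-(k-j)) * (j.choose (i-(k-j)) : ℝ) / ((k-j).factorial : ℝ)) with hG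
  set L : ℝ := ∑ s ∈ Finset.range (j+1), G (s + (k-j)) with hL
  refine ⟨L, ?_, ?_, ?_⟩
  · -- the limit
    have heq : (fun t : ℝ =>
        (∑ i ∈ Finset.range (k + 1), alphaStar k i t * johnsonEig k j i t) / t ^ (2 * k - j))
        =ᶠ[atTop] fun t => ∑ i ∈ Finset.range (k+1),
          (alphaStar k i t / t ^ k) * (johnsonEig k j i t / t ^ (k - j)) := by
      filter_upwards [eventually_ne_atTop (0:ℝ)] with t ht
      rw [Finset.sum_div]
      refine Finset.sum_congr rfl fun i _ => ?_
      rw [show t ^ (2*k - j) = t ^ k * t ^ (k - j) by rw [← pow_add]; congr 1; omega,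
        div_mul_div_comm]
    rw [tendsto_congr' heq]
    have h2 : Tendsto (fun t : ℝ => ∑ i ∈ Finset.range (k+1),
        (alphaStar k i t / t ^ k) * (johnsonEig k j i t / t ^ (k - j))) atTop
        (nhds (∑ i ∈ Finset.range (k+1),
          ((i.factorial : ℝ) * ((k:ℝ)⁻¹) ^ i) * (∑ r ∈ Finset.range (i+1), ell k j i r))) :=
      tendsto_finset_sum _ fun i hi =>
        (tendsto_alphaStar k i (by omega) (by simp at hi; omega)).mul (tendsto_johnsonEig k j i)
    have hsum : (∑ i ∈ Finset.range (k+1),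
        ((i.factorial : ℝ) * ((k:ℝ)⁻¹) ^ i) * (∑ r ∈ Finset.range (i+1), ell k j i r)) = L := by
      have hinner : ∀ i ∈ Finset.range (k+1),
          ((i.factorial : ℝ) * ((k:ℝ)⁻¹) ^ i) * (∑ r ∈ Finset.range (i+1), ell k j i r)
            = if k - j ≤ i then G i else 0 := by
        intro i _
        have h1 : ∑ r ∈ Finset.range (i+1), ell k j i r
            = if k - j ∈ Finset.range (i+1) then
                ((-1:ℝ)^(i-(k-j)) * ((k-(k-j)).choose (i-(k-j)):ℝ) *
                  ((k-j).choose (k-j) : ℝ) / ((k-j).factorial : ℝ)) else 0 := by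
          rw [show (fun r => ell k j i r) = fun r => if r = k - j then
              ((-1:ℝ)^(i-r) * ((k-r).choose (i-r):ℝ) *
                ((k-j).choose r : ℝ) / (r.factorial : ℝ)) else 0 from
            funext fun r => by unfold ell; split <;> simp]
          exact Finset.sum_ite_eq' _ _ _
        rw [h1, Nat.choose_self, Nat.sub_sub_self hjk]
        simp only [Finset.mem_range, Nat.cast_one, mul_one]
        simp only [Nat.lt_succ_iff]
        split
        · rw [hG]
        · exact mul_zero _
      rw [Finset.sum_congr rfl hinner, hL]
      -- reindex
      have hsub : (Finset.range (j+1)).map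
          ⟨fun s => s + (k - j), add_left_injective (k-j)⟩ ⊆ Finset.range (k+1) := by
        intro x hx
        simp only [Finset.mem_map, Finset.mem_range, Function.Embedding.coeFn_mk] at hx ⊢
        obtain ⟨s, hs, rfl⟩ := hx; omega
      rw [← Finset.sum_subset hsub (fun x hx hxn => ?_), Finset.sum_map]
      · refine Finset.sum_congr rfl fun s hs => ?_
        simp only [Function.Embedding.coeFn_mk]
        rw [if_pos (Nat.le_add_left _ _)]
      · simp only [Finset.mem_range] at hx
        simp only [Finset.mem_map, Finset.mem_range, Function.Embedding.coeFn_mk] at hxn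
        rw [if_neg]
        intro hle
        exact hxn ⟨x - (k-j), by omega, by omega⟩
    rw [hsum] at h2
    exact h2
  · -- L = c * target with c = (k-j)!
    refine ⟨((k-j).factorial : ℝ), Nat.cast_pos.mpr (Nat.factorial_pos _), ?_⟩
    rw [one_div, ← mul_assoc, mul_inv_cancel₀ hF0, one_mul, hL]
    refine Finset.sum_congr rfl fun s hs => ?_
    rw [hG]
    simp only [Nat.add_sub_cancel]
    rw [← inv_pow]
    ring
  · -- positivity
    have hkpow : (0:ℝ) < (k:ℝ)^k := by positivity
    have hmul : L * (k:ℝ)^k = ∑ s ∈ Finset.range (j + 1),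
        (-1 : ℝ) ^ s * (j.choose s : ℝ) * (k : ℝ) ^ (j - s) *
          ((s + (k - j)).factorial : ℝ) / ((k - j).factorial : ℝ) := by
      rw [hL, Finset.sum_mul]
      refine Finset.sum_congr rfl fun s hs => ?_
      simp only [Finset.mem_range, Nat.lt_succ_iff] at hs
      have hpow : ((k:ℝ)⁻¹) ^ (s + (k-j)) * (k:ℝ)^k = (k:ℝ)^(j-s) := by
        rw [inv_pow, show (k:ℝ)^k = (k:ℝ)^(s+(k-j)) * (k:ℝ)^(j-s) from by
          rw [← pow_add]; congr 1; omega,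
          inv_mul_cancel_left₀ (pow_ne_zero _ hk0)]
      rw [hG]
      simp only [Nat.add_sub_cancel]
      rw [← hpow]
      ring
    have hLval : L = (∑ s ∈ Finset.range (j + 1),
        (-1 : ℝ) ^ s * (j.choose s : ℝ) * (k : ℝ) ^ (j - s) *
          ((s + (k - j)).factorial : ℝ) / ((k - j).factorial : ℝ)) / (k:ℝ)^k :=
      (eq_div_iff hkpow.ne').mpr hmul
    rw [hLval]
    exact div_pos hB hkpow
end
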